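/- arXiv:1511.04739 — 5 statements merged into one kernel-verified Lean document; each statement's English description precedes it below -/
import Mathlib

section
/- Let r ≥ 2 be an integer, d > 0 a real number, and k ≥ 0 an integer; set s = 1+(r−1)k. Let S_k be the set of sequences (a_1, …, a_s) of non-negative integers such that Σ_{i=1}^s a_i = k and, for all 1 ≤ j < s, Σ_{i=1}^j (r−1)·a_i ≥ j. Then Σ over (a_1,…,a_s) ∈ S_k of Π_{i=1}^s (e^{−d}·d^{a_i}/a_i!) equals s^{k−1}·d^k·e^{−d·s}/k!, which equals (1/s) times the probability that a Poisson random variable with mean d·s takes the value k. -/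
open Finset BigOperators
open Fin.NatCast

lemma cycle_unique (s : ℕ) (hs : 0 < s) (S : ℕ → ℤ)
    (hper : ∀ j, S (j + s) = S j - 1) :
    ∃! t : ℕ, t < s ∧ ∀ j, 1 ≤ j → j < s → S t ≤ S (t + j) := by
  classical
  obtain ⟨m, hm, hmin⟩ : ∃ m ∈ (Finset.range s).image S, ∀ x ∈ (Finset.range s).image S, m ≤ x :=
    ⟨((Finset.range s).image S).min' (by simp [Finset.nonempty_range_iff, hs.ne']),
      Finset.min'_mem _ _, fun x hx => Finset.min'_le _ x hx⟩
  have hex : ∃ t, t < s ∧ S t = m := by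
    obtain ⟨t, ht, hSt⟩ := Finset.mem_image.1 hm
    exact ⟨t, Finset.mem_range.1 ht, hSt⟩
  obtain ⟨t, ⟨hts, hSt⟩, hmint⟩ : ∃ t, (t < s ∧ S t = m) ∧ ∀ u < t, ¬(u < s ∧ S u = m) :=
    ⟨Nat.find hex, Nat.find_spec hex, fun u hu => Nat.find_min hex hu⟩
  have hlt : ∀ u, u < t → u < s → m + 1 ≤ S u := by
    intro u hu hus
    have h1 : m ≤ S u := hmin _ (Finset.mem_image_of_mem _ (Finset.mem_range.2 hus))
    have h2 : ¬ (u < s ∧ S u = m) := hmint u hu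
    have h3 : S u ≠ m := fun h => h2 ⟨hus, h⟩
    omega
  have hgood : ∀ j, 1 ≤ j → j < s → S t ≤ S (t + j) := by
    intro j hj1 hjs
    by_cases h : t + j < s
    · rw [hSt]; exact hmin _ (mem_image_of_mem _ (mem_range.2 h))
    · have h2 : t + j - s < t := by omega
      have h3 : t + j = (t + j - s) + s := by omega
      rw [h3, hper]
      have h4 := hlt _ h2 (by omega)
      omega
  refine ⟨t, ⟨hts, hgood⟩, ?_⟩
  rintro t' ⟨ht's, hgood'⟩
  by_contra hne
  have key : ∀ u v, u < v → v < s →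
      (∀ j, 1 ≤ j → j < s → S u ≤ S (u + j)) →
      (∀ j, 1 ≤ j → j < s → S v ≤ S (v + j)) → False := by
    intro u v huv hvs hu hv
    have h1 : S u ≤ S v := by
      have := hu (v - u) (by omega) (by omega)
      rwa [Nat.add_sub_cancel' huv.le] at this
    have h2 : S v ≤ S (u + s) := by
      have := hv (u + s - v) (by omega) (by omega)
      rwa [show v + (u + s - v) = u + s by omega] at this
    rw [hper] at h2
    omega
  rcases lt_or_gt_of_ne hne with h | h
  · exact key t' t h hts hgood' hgood
  · exact key t t' h ht's hgood hgood'

noncomputable def pS (q s : ℕ) [NeZero s] (a : Fin s → ℕ) (j : ℕ) : ℤ :=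
  ∑ i ∈ Finset.range j, ((q * a (i : Fin s) : ℕ) : ℤ) - j

def rot {s : ℕ} [NeZero s] (t : Fin s) (a : Fin s → ℕ) : Fin s → ℕ := fun i => a (i + t)

lemma rot_rot {s : ℕ} [NeZero s] (t u : Fin s) (a : Fin s → ℕ) :
    rot t (rot u a) = rot (t + u) a := funext fun i => congrArg a (add_assoc i t u)

lemma rot_zero {s : ℕ} [NeZero s] (a : Fin s → ℕ) : rot 0 a = a :=
  funext fun i => congrArg a (add_zero i)

lemma rot_sum {s : ℕ} [NeZero s] (t : Fin s) (a : Fin s → ℕ) :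
    ∑ i, rot t a i = ∑ i, a i :=
  Fintype.sum_equiv (Equiv.addRight t) _ _ (fun _ => rfl)

lemma rot_prod {s : ℕ} [NeZero s] {M : Type*} [CommMonoid M] (t : Fin s) (a : Fin s → ℕ)
    (Q : ℕ → M) : ∏ i, Q (rot t a i) = ∏ i, Q (a i) :=
  Fintype.prod_equiv (Equiv.addRight t) _ _ (fun _ => rfl)

lemma cast_add_fin {s : ℕ} [NeZero s] (t : Fin s) (i : ℕ) :
    (i : Fin s) + t = ((t.val + i : ℕ) : Fin s) := by
  apply Fin.ext
  simp [Fin.add_def, Fin.val_natCast, Nat.mod_add_mod, Nat.add_comm]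

lemma filter_sum {s : ℕ} [NeZero s] (j : ℕ) (hj : j ≤ s) (F : Fin s → ℕ) :
    ∑ i ∈ Finset.univ.filter (fun i : Fin s => (i : ℕ) < j), F i
      = ∑ i ∈ Finset.range j, F (i : Fin s) := by
  refine Finset.sum_nbij' (fun i => (i : ℕ)) (fun i => (i : Fin s)) ?_ ?_ ?_ ?_ ?_
  · intro a ha
    simp only [mem_filter] at ha
    exact mem_range.2 ha.2
  · intro b hb
    simp only [mem_filter, mem_univ, true_and]
    rw [Fin.val_natCast, Nat.mod_eq_of_lt (lt_of_lt_of_le (mem_range.1 hb) hj)]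
    exact mem_range.1 hb
  · intro a _; exact Fin.cast_val_eq_self a
  · intro b hb
    show ((b : Fin s) : ℕ) = b
    rw [Fin.val_natCast, Nat.mod_eq_of_lt (lt_of_lt_of_le (mem_range.1 hb) hj)]
  · intro a _; rw [Fin.cast_val_eq_self]

lemma sum_rot_eq {s : ℕ} [NeZero s] (q : ℕ) (t : Fin s) (a : Fin s → ℕ) (j : ℕ) (hj : j ≤ s) :
    ∑ i ∈ Finset.univ.filter (fun i : Fin s => (i : ℕ) < j), q * rot t a i
      = ∑ i ∈ Finset.range j, q * a ((t.val + i : ℕ) : Fin s) := by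
  rw [filter_sum j hj (fun i => q * rot t a i)]
  exact Finset.sum_congr rfl fun i _ => by rw [rot, cast_add_fin]

lemma pS_diff {s : ℕ} [NeZero s] (q : ℕ) (a : Fin s → ℕ) (t j : ℕ) :
    pS q s a (t + j) = pS q s a t + ∑ i ∈ Finset.range j, ((q * a ((t + i : ℕ) : Fin s) : ℕ) : ℤ) - j := by
  simp only [pS, Finset.sum_range_add]
  push_cast
  ring

lemma good_iff {s : ℕ} [NeZero s] (q : ℕ) (t : Fin s) (a : Fin s → ℕ) :
    (∀ j, 1 ≤ j → j < s →
        j ≤ ∑ i ∈ Finset.univ.filter (fun i : Fin s => (i : ℕ) < j), q * rot t a i)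
      ↔ ∀ j, 1 ≤ j → j < s → pS q s a t.val ≤ pS q s a (t.val + j) := by
  refine forall_congr' fun j => forall_congr' fun hj1 => forall_congr' fun hjs => ?_
  rw [sum_rot_eq q t a j hjs.le, pS_diff]
  rw [show (j : ℕ) ≤ ∑ i ∈ Finset.range j, q * a ((t.val + i : ℕ) : Fin s)
      ↔ (j : ℤ) ≤ ∑ i ∈ Finset.range j, ((q * a ((t.val + i : ℕ) : Fin s) : ℕ) : ℤ) by
    rw [← Nat.cast_sum]; exact Nat.cast_le.symm]
  omega

lemma pS_zero (q s : ℕ) [NeZero s] (a : Fin s → ℕ) : pS q s a 0 = 0 := by simp [pS]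

lemma pS_succ (q s : ℕ) [NeZero s] (a : Fin s → ℕ) (j : ℕ) :
    pS q s a (j + 1) = pS q s a j + (q * a (j : Fin s) : ℕ) - 1 := by
  simp [pS, Finset.sum_range_succ]; ring

lemma natCast_add_self (s : ℕ) [NeZero s] (i : ℕ) : ((i + s : ℕ) : Fin s) = (i : Fin s) := by
  push_cast
  simp

lemma pS_base (q k s : ℕ) [NeZero s] (hs : s = 1 + q * k) (a : Fin s → ℕ)
    (hsum : ∑ i, a i = k) : pS q s a s = -1 := by
  have h1 : ∑ i ∈ Finset.range s, a (i : Fin s) = k := by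
    rw [← Fin.sum_univ_eq_sum_range (fun i => a (i : Fin s)) s, ← hsum]
    exact Finset.sum_congr rfl fun i _ => by rw [Fin.cast_val_eq_self]
  have h2 : ∑ i ∈ Finset.range s, ((q * a (i : Fin s) : ℕ) : ℤ) = (q * k : ℕ) := by
    rw [← Nat.cast_sum, ← Finset.mul_sum, h1]
  rw [pS, h2]
  have : (s : ℤ) = 1 + q * k := by exact_mod_cast congrArg Nat.cast hs
  push_cast
  omega

lemma pS_per (q k s : ℕ) [NeZero s] (hs : s = 1 + q * k) (a : Fin s → ℕ)
    (hsum : ∑ i, a i = k) (j : ℕ) : pS q s a (j + s) = pS q s a j - 1 := by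
  induction j with
  | zero => simpa [pS_zero] using pS_base q k s hs a hsum
  | succ n ih =>
      have : n + 1 + s = (n + s) + 1 := by ring
      rw [this, pS_succ, ih, natCast_add_self, pS_succ]
      ring


open Classical in
/-- `Sk r k s` = the set of sequences `(a_1, …, a_s)` of non-negative integers (with each
entry at most `k`) such that `Σ a_i = k` and for all `1 ≤ j < s`,
`Σ_{i ≤ j} (r−1)·a_i ≥ j`. -/
noncomputable def Sk (r k s : ℕ) : Finset (Fin s → ℕ) :=
  (Fintype.piFinset (fun _ : Fin s => Finset.range (k + 1))).filter
    (fun a => (∑ i, a i = k) ∧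
      ∀ j : ℕ, 1 ≤ j → j < s →
        (j : ℕ) ≤ ∑ i ∈ Finset.univ.filter (fun i : Fin s => (i : ℕ) < j), (r - 1) * a i)

lemma mem_Sk_iff (r k s : ℕ) [NeZero s] (a : Fin s → ℕ) (hsum : ∑ i, a i = k) :
    a ∈ Sk r k s ↔ ∀ j, 1 ≤ j → j < s →
      j ≤ ∑ i ∈ Finset.univ.filter (fun i : Fin s => (i : ℕ) < j), (r - 1) * a i := by
  unfold Sk
  rw [Finset.mem_filter]
  simp only [Fintype.mem_piFinset, Finset.mem_range]
  constructor
  · rintro ⟨-, -, h⟩; exact h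
  · intro h
    exact ⟨fun i => Nat.lt_succ_of_le
        (hsum ▸ Finset.single_le_sum (fun _ _ => Nat.zero_le _) (Finset.mem_univ i)),
      hsum, h⟩

lemma exists_unique_rot (r k s : ℕ) (hs : s = 1 + (r - 1) * k) [NeZero s]
    (a : Fin s → ℕ) (hsum : ∑ i, a i = k) :
    ∃! t : Fin s, rot t a ∈ Sk r k s := by
  have hs0 : 0 < s := Nat.pos_of_ne_zero (NeZero.ne s)
  obtain ⟨t0, ⟨ht0s, hgood⟩, huniq⟩ := cycle_unique s hs0 (pS (r - 1) s a)
    (pS_per (r - 1) k s hs a hsum)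
  refine ⟨⟨t0, ht0s⟩, ?_, ?_⟩
  · show rot ⟨t0, ht0s⟩ a ∈ Sk r k s
    rw [mem_Sk_iff r k s _ (by rw [rot_sum]; exact hsum)]
    exact (good_iff (r - 1) ⟨t0, ht0s⟩ a).2 hgood
  · intro t ht
    rw [mem_Sk_iff r k s _ (by rw [rot_sum]; exact hsum)] at ht
    have h1 := (good_iff (r - 1) t a).1 ht
    exact Fin.ext (huniq t.val ⟨t.isLt, h1⟩)

/-- for `r ≥ 2`, `d > 0`, `k ≥ 0` and `s = 1+(r−1)k`,
`Σ_{a ∈ S_k} Π_i e^{−d}·d^{a_i}/a_i! = s^{k−1}·d^k·e^{−ds}/k!`, which equals `(1/s)`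
times the probability that a `Po(ds)` random variable equals `k`. -/
theorem stmt4 (r : ℕ) (hr : 2 ≤ r) (d : ℝ) (hd : 0 < d) (k : ℕ) (s : ℕ)
    (hs : s = 1 + (r - 1) * k) :
    (∑ a ∈ Sk r k s, ∏ i : Fin s, Real.exp (-d) * d ^ (a i) / (Nat.factorial (a i)))
        = (s : ℝ) ^ ((k : ℤ) - 1) * d ^ k * Real.exp (-(d * s)) / (Nat.factorial k)
      ∧ (s : ℝ) ^ ((k : ℤ) - 1) * d ^ k * Real.exp (-(d * s)) / (Nat.factorial k)
        = (1 / s) * (Real.exp (-(d * s)) * (d * s) ^ k / (Nat.factorial k)) := by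
  classical
  have hs0 : 0 < s := by omega
  haveI : NeZero s := ⟨hs0.ne'⟩
  have hsR : (s : ℝ) ≠ 0 := Nat.cast_ne_zero.2 hs0.ne'
  have hkR : ((Nat.factorial k : ℕ) : ℝ) ≠ 0 := Nat.cast_ne_zero.2 (Nat.factorial_pos k).ne'
  set Q : ℕ → ℝ := fun n => d ^ n / (Nat.factorial n) with hQ
  set P : (Fin s → ℕ) → ℝ := fun a => ∏ i, Q (a i) with hP
  set A : Finset (Fin s → ℕ) := Finset.piAntidiag Finset.univ k with hA
  have hmemA : ∀ a : Fin s → ℕ, a ∈ A ↔ ∑ i, a i = k := by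
    intro a; rw [hA, Finset.mem_piAntidiag]; simp
  have hSk_sum : ∀ b ∈ Sk r k s, ∑ i, b i = k := by
    intro b hb
    exact ((Finset.mem_filter.1 hb).2).1
  -- counting step
  have hcount : ∑ a ∈ A, P a = s * ∑ b ∈ Sk r k s, P b := by
    have step1 : ∀ a ∈ A, P a = ∑ t : Fin s, if rot t a ∈ Sk r k s then P a else 0 := by
      intro a ha
      obtain ⟨t0, ht0, huniq⟩ := exists_unique_rot r k s hs a ((hmemA a).1 ha)
      have hfil : Finset.univ.filter (fun t : Fin s => rot t a ∈ Sk r k s) = {t0} := by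
        ext u
        simp only [Finset.mem_filter, Finset.mem_univ, true_and, Finset.mem_singleton]
        exact ⟨fun h => huniq u h, fun h => h ▸ ht0⟩
      rw [← Finset.sum_filter, hfil, Finset.sum_singleton]
    calc ∑ a ∈ A, P a
        = ∑ a ∈ A, ∑ t : Fin s, if rot t a ∈ Sk r k s then P a else 0 :=
          Finset.sum_congr rfl step1
      _ = ∑ t : Fin s, ∑ a ∈ A, if rot t a ∈ Sk r k s then P a else 0 := Finset.sum_comm
      _ = ∑ t : Fin s, ∑ a ∈ A.filter (fun a => rot t a ∈ Sk r k s), P a := by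
          exact Finset.sum_congr rfl fun t _ => (Finset.sum_filter _ _).symm
      _ = ∑ _t : Fin s, ∑ b ∈ Sk r k s, P b := by
          refine Finset.sum_congr rfl fun t _ => ?_
          refine Finset.sum_nbij' (fun a => rot t a) (fun b => rot (-t) b) ?_ ?_ ?_ ?_ ?_
          · intro a ha; exact (Finset.mem_filter.1 ha).2
          · intro b hb
            refine Finset.mem_filter.2 ⟨?_, ?_⟩
            · rw [hmemA, rot_sum]; exact hSk_sum b hb
            · rw [rot_rot, add_neg_cancel, rot_zero]; exact hb
          · intro a _
            show rot (-t) (rot t a) = a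
            rw [rot_rot, neg_add_cancel, rot_zero]
          · intro b _
            show rot t (rot (-t) b) = b
            rw [rot_rot, add_neg_cancel, rot_zero]
          · intro a _; exact (rot_prod t a Q).symm
      _ = s * ∑ b ∈ Sk r k s, P b := by
          rw [Finset.sum_const, Finset.card_univ, Fintype.card_fin, nsmul_eq_mul]
  -- multinomial step
  have hmult : ∑ a ∈ A, P a = (s * d) ^ k / (Nat.factorial k) := by
    have hthm := Finset.sum_pow_eq_sum_piAntidiag (Finset.univ : Finset (Fin s))
      (fun _ => d) k
    have hL : (∑ _i : Fin s, d) = s * d := by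
      rw [Finset.sum_const, Finset.card_univ, Fintype.card_fin, nsmul_eq_mul]
    rw [hL] at hthm
    have hterm : ∀ a ∈ A, (Nat.multinomial Finset.univ a : ℝ) * ∏ i, d ^ a i
        = (Nat.factorial k) * P a := by
      intro a ha
      have hsum := (hmemA a).1 ha
      have hspec := Nat.multinomial_spec (Finset.univ : Finset (Fin s)) a
      rw [hsum] at hspec
      have hfpos : 0 < ∏ i, Nat.factorial (a i) :=
        Finset.prod_pos fun i _ => Nat.factorial_pos _
      have hf : ((∏ i, Nat.factorial (a i) : ℕ) : ℝ) ≠ 0 := Nat.cast_ne_zero.2 hfpos.ne'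
      have hPa : P a = (∏ i, d ^ a i) / ((∏ i, Nat.factorial (a i) : ℕ) : ℝ) := by
        rw [hP]
        push_cast
        rw [← Finset.prod_div_distrib]
      have hcast : ((∏ i, Nat.factorial (a i) : ℕ) : ℝ) * (Nat.multinomial Finset.univ a : ℝ)
          = (Nat.factorial k : ℝ) := by exact_mod_cast congrArg (Nat.cast (R := ℝ)) hspec
      rw [hPa]
      push_cast at hcast ⊢
      field_simp
      linear_combination hcast
    rw [Finset.sum_congr rfl hterm, ← Finset.mul_sum] at hthm
    rw [eq_div_iff hkR, mul_comm]
    exact hthm.symm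
  have hSkP : ∑ b ∈ Sk r k s, P b = (s * d) ^ k / (Nat.factorial k) / s := by
    rw [← hmult, hcount]
    field_simp
  -- rewrite LHS
  have hLHS : (∑ a ∈ Sk r k s, ∏ i : Fin s, Real.exp (-d) * d ^ (a i) / (Nat.factorial (a i)))
      = Real.exp (-(d * s)) * ∑ b ∈ Sk r k s, P b := by
    rw [Finset.mul_sum]
    refine Finset.sum_congr rfl fun a _ => ?_
    have : ∀ i : Fin s, Real.exp (-d) * d ^ (a i) / (Nat.factorial (a i))
        = Real.exp (-d) * Q (a i) := fun i => by rw [hQ, mul_div_assoc]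
    rw [Finset.prod_congr rfl fun i _ => this i, Finset.prod_mul_distrib,
      Finset.prod_const, Finset.card_univ, Fintype.card_fin,
      ← Real.exp_nat_mul, show (s : ℝ) * -d = -(d * s) by ring]
  have hzpow : (s : ℝ) ^ ((k : ℤ) - 1) = (s : ℝ) ^ k / s := by
    rw [zpow_sub₀ hsR, zpow_one, zpow_natCast]
  constructor
  · rw [hLHS, hSkP, hzpow, mul_pow]
    field_simp
  · rw [hzpow, mul_pow]
    field_simp
end

section
/- Fix an integer r ≥ 2. There is a constant d_0 > 0 such that for all real d ≥ d_0 and all integers k ≥ 0, π_{k,r,d} ≤ e^{−d(s+1)/2}, where s = 1+(r−1)k. -/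
/-- `π_{k,r,d} = s^{k−1}·d^k·e^{−d·s}/k!` where `s = 1+(r−1)k`. -/
noncomputable def pik (r k : ℕ) (d : ℝ) : ℝ :=
  ((1 + (r - 1) * k : ℕ) : ℝ) ^ ((k : ℤ) - 1) * d ^ k *
    Real.exp (-(d * ((1 + (r - 1) * k : ℕ) : ℝ))) / (Nat.factorial k)

/-- for fixed `r ≥ 2` there is `d₀ > 0` such that for all `d ≥ d₀` and all
`k ≥ 0`, `π_{k,r,d} ≤ e^{−d(s+1)/2}` where `s = 1+(r−1)k`. -/
theorem stmt5 (r : ℕ) (hr : 2 ≤ r) :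
    ∃ d₀ : ℝ, 0 < d₀ ∧ ∀ d : ℝ, d₀ ≤ d → ∀ k : ℕ,
      pik r k d ≤ Real.exp (-(d * (((1 + (r - 1) * k : ℕ) : ℝ) + 1) / 2)) := by
  refine ⟨9, by norm_num, fun d hd k => ?_⟩
  have hd0 : (0:ℝ) < d := by linarith
  rcases Nat.eq_zero_or_pos k with hk | hk
  · subst hk
    simp [pik]
    norm_num
  -- k ≥ 1 case
  set sn : ℕ := 1 + (r - 1) * k with hsn
  set s : ℝ := (sn : ℝ) with hs
  have hs1 : (1:ℝ) ≤ s := by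
    have : 1 ≤ sn := Nat.le_add_right 1 _
    simp only [hs]
    exact_mod_cast this
  have hs0 : (0:ℝ) < s := by linarith
  have hsk : (k:ℝ) + 1 ≤ s := by
    have : k + 1 ≤ sn := by
      have hr1 : 1 ≤ r - 1 := by omega
      have : k ≤ (r - 1) * k := Nat.le_mul_of_pos_left k (by omega)
      omega
    simp only [hs]
    exact_mod_cast this
  have hkf : (0:ℝ) < (Nat.factorial k : ℝ) := by
    exact_mod_cast Nat.factorial_pos k
  -- step 1 : s ^ (k-1 : ℤ) ≤ s ^ k / s
  have hzp : s ^ ((k : ℤ) - 1) = s ^ k / s := by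
    rw [zpow_sub_one₀ (ne_of_gt hs0), zpow_natCast]
    rfl
  -- main bound: (s*d/8)^k / k! ≤ exp (s*d/8)
  have hsd : (0:ℝ) ≤ s * d / 8 := by positivity
  have hexp := Real.pow_div_factorial_le_exp _ hsd k
  -- pik = (s^k/s) * d^k * exp(-(d*s)) / k!
  have hpik : pik r k d = (s ^ k / s) * d ^ k * Real.exp (-(d * s)) / (Nat.factorial k) := by
    rw [pik, ← hzp]
  rw [hpik]
  have h1 : (s ^ k / s) * d ^ k ≤ (s * d) ^ k := by
    have h2 : s ^ k / s ≤ s ^ k := by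
      apply div_le_self (by positivity) hs1
    calc (s ^ k / s) * d ^ k ≤ s ^ k * d ^ k := by
          apply mul_le_mul_of_nonneg_right h2 (by positivity)
      _ = (s * d) ^ k := (mul_pow s d k).symm
  have key : (s * d) ^ k / (Nat.factorial k) ≤ 8 ^ k * Real.exp (s * d / 8) := by
    have : (s * d) ^ k = 8 ^ k * (s * d / 8) ^ k := by
      rw [← mul_pow]; ring_nf
    rw [this, mul_div_assoc]
    apply mul_le_mul_of_nonneg_left hexp (by positivity)
  have h8 : (8:ℝ) ^ k ≤ Real.exp (d * (3 * s - 4) / 8) := by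
    have hlog2 : Real.log 2 < 0.6931471808 := Real.log_two_lt_d9
    have h8e : (8:ℝ) ≤ Real.exp (9 / 4) := by
      rw [show (8:ℝ) = 2 ^ 3 by norm_num, ← Real.exp_log (by norm_num : (0:ℝ) < 2 ^ 3)]
      apply Real.exp_le_exp.mpr
      rw [Real.log_pow]
      push_cast
      nlinarith
    calc (8:ℝ) ^ k ≤ (Real.exp (9/4)) ^ k := by
          apply pow_le_pow_left₀ (by norm_num) h8e
      _ = Real.exp (9 * k / 4) := by
          rw [← Real.exp_nat_mul]; ring_nf
      _ ≤ Real.exp (d * (3 * s - 4) / 8) := by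
          apply Real.exp_le_exp.mpr
          have h3s : 2 * (k:ℝ) ≤ 3 * s - 4 := by
            have hk1 : (1:ℝ) ≤ k := by exact_mod_cast hk
            nlinarith
          have hk0 : (0:ℝ) ≤ k := Nat.cast_nonneg k
          nlinarith
  calc (s ^ k / s) * d ^ k * Real.exp (-(d * s)) / (Nat.factorial k)
      ≤ (s * d) ^ k * Real.exp (-(d * s)) / (Nat.factorial k) := by
        gcongr
    _ = (s * d) ^ k / (Nat.factorial k) * Real.exp (-(d * s)) := by ring
    _ ≤ (8 ^ k * Real.exp (s * d / 8)) * Real.exp (-(d * s)) :=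
        mul_le_mul_of_nonneg_right key (Real.exp_pos _).le
    _ = 8 ^ k * Real.exp (s * d / 8 + -(d * s)) := by
        rw [Real.exp_add]; ring
    _ ≤ Real.exp (d * (3 * s - 4) / 8) * Real.exp (s * d / 8 + -(d * s)) :=
        mul_le_mul_of_nonneg_right h8 (Real.exp_pos _).le
    _ = Real.exp (d * (3 * s - 4) / 8 + (s * d / 8 + -(d * s))) := (Real.exp_add _ _).symm
    _ ≤ Real.exp (-(d * (s + 1) / 2)) := by
        apply Real.exp_le_exp.mpr
        ring_nf
        nlinarith
end

section
/- Let r ≥ 2 be an integer and d ≥ 0 a real number with (r−1)·d < 1. Then Σ_{k=0}^∞ π_{k,r,d}/(1+(r−1)k) = 1 − (r−1)·d/r; equivalently, Σ_{k=0}^∞ (1+(r−1)k)^{k−2}·d^k·e^{−d(1+(r−1)k)}/k! = 1 − (r−1)·d/r. -/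
open Finset Set

/-- Abel coefficient: `cAb z x 0 = 1`, `cAb z x k = x*(x+z*k)^(k-1)` for `k ≥ 1`. -/
noncomputable def cAb (z x : ℝ) : ℕ → ℝ
  | 0 => 1
  | (k+1) => x * (x + z*(k+1))^k

noncomputable def coA (τ x : ℝ) (k : ℕ) : ℝ := cAb τ x k / (k.factorial : ℝ)
noncomputable def coB (τ x : ℝ) (j : ℕ) : ℝ := (x + τ*j)^j / (j.factorial : ℝ)

lemma coA_zero (τ x : ℝ) : coA τ x 0 = 1 := by simp [coA, cAb]
lemma coB_zero (τ x : ℝ) : coB τ x 0 = 1 := by simp [coB]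

lemma altsum : ∀ j n : ℕ, j < n →
    ∑ k ∈ Finset.range (n+1), (-1:ℝ)^(n-k) * (n.choose k) * (k:ℝ)^j = 0 := by
  intro j
  induction j using Nat.strong_induction_on with
  | _ j ih =>
    intro n hjn
    rcases Nat.eq_zero_or_pos j with rfl | hj
    · have h0 : n ≠ 0 := by omega
      have hI := Int.alternating_sum_range_choose_of_ne h0
      have hR : ∑ k ∈ Finset.range (n+1), (-1:ℝ)^k * (n.choose k) = 0 := by
        have := congrArg (fun z : ℤ => (z : ℝ)) hI
        push_cast at this
        simpa using this
      have : ∑ k ∈ Finset.range (n+1), (-1:ℝ)^(n-k) * (n.choose k) * (k:ℝ)^0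
          = (-1:ℝ)^n * ∑ k ∈ Finset.range (n+1), (-1:ℝ)^k * (n.choose k) := by
        rw [Finset.mul_sum]
        refine Finset.sum_congr rfl fun k hk => ?_
        have hk' : k ≤ n := by simpa using Nat.lt_succ_iff.mp (Finset.mem_range.mp hk)
        have h1 : (-1:ℝ)^(n-k) * (-1:ℝ)^k = (-1:ℝ)^n := by
          rw [← pow_add, Nat.sub_add_cancel hk']
        have h2 : (-1:ℝ)^(n-k) = (-1:ℝ)^n * (-1:ℝ)^k := by
          have hsq : ((-1:ℝ)^k) * ((-1:ℝ)^k) = 1 := by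
            rw [← pow_add, ← two_mul, pow_mul]; norm_num
          calc (-1:ℝ)^(n-k) = (-1:ℝ)^(n-k) * (((-1:ℝ)^k) * ((-1:ℝ)^k)) := by rw [hsq, mul_one]
            _ = ((-1:ℝ)^(n-k) * (-1:ℝ)^k) * (-1:ℝ)^k := by ring
            _ = (-1:ℝ)^n * (-1:ℝ)^k := by rw [h1]
        rw [h2]; ring
      rw [this, hR, mul_zero]
    · obtain ⟨m, rfl⟩ : ∃ m, n = m + 1 := ⟨n-1, by omega⟩
      obtain ⟨i, rfl⟩ : ∃ i, j = i + 1 := ⟨j-1, by omega⟩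
      rw [Finset.sum_range_succ']
      have h0 : (-1:ℝ)^(m+1-0) * ((m+1).choose 0) * ((0:ℕ):ℝ)^(i+1) = 0 := by
        simp
      rw [h0, add_zero]
      have hterm : ∀ k ∈ Finset.range (m+1),
          (-1:ℝ)^(m+1-(k+1)) * ((m+1).choose (k+1)) * ((k+1:ℕ):ℝ)^(i+1)
          = (m+1) * ((-1:ℝ)^(m-k) * (m.choose k) * ((k:ℝ)+1)^i) := by
        intro k hk
        have hc : (m+1) * m.choose k = (m+1).choose (k+1) * (k+1) := Nat.add_one_mul_choose_eq m k
        have hc' : ((m+1).choose (k+1) : ℝ) * ((k:ℝ)+1) = (m+1) * (m.choose k : ℝ) := by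
          have := congrArg (fun z : ℕ => (z : ℝ)) hc
          push_cast at this
          linarith [this]
        have hsub : m + 1 - (k+1) = m - k := by omega
        rw [hsub]
        push_cast
        calc (-1:ℝ)^(m-k) * ((m+1).choose (k+1)) * ((k:ℝ)+1)^(i+1)
            = (-1:ℝ)^(m-k) * (((m+1).choose (k+1) : ℝ) * ((k:ℝ)+1)) * ((k:ℝ)+1)^i := by ring
          _ = (-1:ℝ)^(m-k) * ((m+1) * (m.choose k : ℝ)) * ((k:ℝ)+1)^i := by rw [hc']
          _ = (m+1) * ((-1:ℝ)^(m-k) * (m.choose k) * ((k:ℝ)+1)^i) := by ring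
      rw [Finset.sum_congr rfl hterm, ← Finset.mul_sum]
      have hinner : ∑ k ∈ Finset.range (m+1), (-1:ℝ)^(m-k) * (m.choose k) * ((k:ℝ)+1)^i = 0 := by
        have hexp : ∀ k : ℕ, ((k:ℝ)+1)^i = ∑ l ∈ Finset.range (i+1), (i.choose l : ℝ) * (k:ℝ)^l := by
          intro k
          rw [add_pow]
          refine Finset.sum_congr rfl fun l hl => ?_
          ring
        calc ∑ k ∈ Finset.range (m+1), (-1:ℝ)^(m-k) * (m.choose k) * ((k:ℝ)+1)^i
            = ∑ k ∈ Finset.range (m+1), ∑ l ∈ Finset.range (i+1),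
                (i.choose l : ℝ) * ((-1:ℝ)^(m-k) * (m.choose k) * (k:ℝ)^l) := by
              refine Finset.sum_congr rfl fun k _ => ?_
              rw [hexp k, Finset.mul_sum]
              refine Finset.sum_congr rfl fun l _ => ?_
              ring
          _ = ∑ l ∈ Finset.range (i+1), (i.choose l : ℝ) *
                ∑ k ∈ Finset.range (m+1), ((-1:ℝ)^(m-k) * (m.choose k) * (k:ℝ)^l) := by
              rw [Finset.sum_comm]
              refine Finset.sum_congr rfl fun l _ => ?_
              rw [Finset.mul_sum]
          _ = 0 := by
              refine Finset.sum_eq_zero fun l hl => ?_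
              have hl' : l ≤ i := Nat.lt_succ_iff.mp (Finset.mem_range.mp hl)
              have hlm : l < m := by omega
              rw [ih l (by omega) m hlm, mul_zero]
      rw [hinner, mul_zero]

/-- `cAb z x k * (x + z*k)^(n+1-k) = x * (x+z*k)^n` for `k ≤ n+1`. -/
lemma cAb_mul_pow (z x : ℝ) (n k : ℕ) (hk : k ≤ n + 1) :
    cAb z x k * (x + z*k)^(n+1-k) = x * (x + z*(k:ℝ))^n := by
  match k with
  | 0 => simp [cAb, pow_succ']
  | (k'+1) =>
    have hk' : k' ≤ n := by omega
    simp only [cAb]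
    have h1 : n + 1 - (k'+1) = n - k' := by omega
    rw [h1]
    push_cast
    rw [mul_assoc, ← pow_add]
    congr 2
    omega

/-- Mixed Abel identity: `∑ C(n,k) cAb(k) (y - z k)^(n-k) = (x+y)^n`. -/
lemma abelM (x z : ℝ) : ∀ (n : ℕ) (y : ℝ),
    ∑ k ∈ Finset.range (n+1), (n.choose k : ℝ) * cAb z x k * (y - z*k)^(n-k) = (x+y)^n := by
  intro n
  induction n with
  | zero => intro y; simp [cAb]
  | succ n ih =>
    -- define f and g; show f' = g', f(-x) = g(-x)
    set f : ℝ → ℝ := fun y =>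
      ∑ k ∈ Finset.range (n+2), ((n+1).choose k : ℝ) * cAb z x k * (y - z*k)^(n+1-k) with hf
    set g : ℝ → ℝ := fun y => (x+y)^(n+1) with hg
    have hderiv : ∀ y : ℝ, HasDerivAt (fun y => f y - g y) 0 y := by
      intro y
      have hfd : HasDerivAt f (∑ k ∈ Finset.range (n+2),
          ((n+1).choose k : ℝ) * cAb z x k * ((n+1-k : ℕ) * (y - z*k)^(n+1-k-1))) y := by
        apply HasDerivAt.fun_sum
        intro k hk
        have hbase : HasDerivAt (fun y : ℝ => y - z*k) 1 y := by
          simpa using (hasDerivAt_id y).sub_const (z*k)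
        have := (hbase.pow (n+1-k))
        simpa using this.const_mul (((n+1).choose k : ℝ) * cAb z x k)
      have hsum : (∑ k ∈ Finset.range (n+2),
          ((n+1).choose k : ℝ) * cAb z x k * ((n+1-k : ℕ) * (y - z*k)^(n+1-k-1)))
          = (n+1) * (x+y)^n := by
        rw [Finset.sum_range_succ, Nat.sub_self, Nat.cast_zero, zero_mul, mul_zero, add_zero,
          ← ih y, Finset.mul_sum]
        refine Finset.sum_congr rfl fun k hk => ?_
        have hk' : k ≤ n := Nat.lt_succ_iff.mp (Finset.mem_range.mp hk)
        have he : n + 1 - k - 1 = n - k := by omega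
        have hcc : (n.choose k : ℝ) * (n+1) = ((n+1).choose k : ℝ) * ((n+1-k : ℕ) : ℝ) := by
          have := Nat.choose_mul_succ_eq n k
          have := congrArg (fun z : ℕ => (z : ℝ)) this
          push_cast [Nat.cast_sub (by omega : k ≤ n + 1)] at this ⊢
          linarith [this]
        rw [he]
        calc ((n+1).choose k : ℝ) * cAb z x k * ((n+1-k : ℕ) * (y - z*k)^(n-k))
            = (((n+1).choose k : ℝ) * ((n+1-k : ℕ):ℝ)) * cAb z x k * (y - z*k)^(n-k) := by ring
          _ = ((n.choose k : ℝ) * (n+1)) * cAb z x k * (y - z*k)^(n-k) := by rw [← hcc]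
          _ = (n+1) * ((n.choose k : ℝ) * cAb z x k * (y - z*k)^(n-k)) := by ring
      have hgd : HasDerivAt g ((n+1) * (x+y)^n) y := by
        have : HasDerivAt (fun y : ℝ => x + y) 1 y := by
          simpa using (hasDerivAt_id y).const_add x
        simpa using this.fun_pow (n+1)
      have := (hfd.sub hgd)
      rwa [hsum, sub_self] at this
    have hatx : f (-x) - g (-x) = 0 := by
      have hgx : g (-x) = 0 := by simp [hg]
      have hfx : f (-x) = 0 := by
        show ∑ k ∈ Finset.range (n+2),
            ((n+1).choose k : ℝ) * cAb z x k * ((-x) - z*k)^(n+1-k) = 0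
        have hterm : ∀ k ∈ Finset.range (n+2),
            ((n+1).choose k : ℝ) * cAb z x k * ((-x) - z*k)^(n+1-k)
            = (-1:ℝ)^(n+1-k) * ((n+1).choose k : ℝ) * (x * (x + z*(k:ℝ))^n) := by
          intro k hk
          have hk' : k ≤ n + 1 := Nat.lt_succ_iff.mp (Finset.mem_range.mp hk)
          have hneg : ((-x) - z*(k:ℝ))^(n+1-k) = (-1:ℝ)^(n+1-k) * (x + z*k)^(n+1-k) := by
            rw [show (-x) - z*(k:ℝ) = -(x + z*k) by ring, neg_pow]
          rw [hneg, ← cAb_mul_pow z x n k hk']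
          ring
        rw [Finset.sum_congr rfl hterm]
        have hexp : ∀ k : ℕ, (x + z*(k:ℝ))^n
            = ∑ l ∈ Finset.range (n+1), (n.choose l : ℝ) * x^l * z^(n-l) * (k:ℝ)^(n-l) := by
          intro k
          rw [add_pow]
          refine Finset.sum_congr rfl fun l hl => ?_
          rw [mul_pow]
          ring
        calc ∑ k ∈ Finset.range (n+2), (-1:ℝ)^(n+1-k) * ((n+1).choose k : ℝ) * (x * (x + z*(k:ℝ))^n)
            = ∑ k ∈ Finset.range (n+2), ∑ l ∈ Finset.range (n+1),
                (x * ((n.choose l : ℝ) * x^l * z^(n-l))) *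
                  ((-1:ℝ)^(n+1-k) * ((n+1).choose k : ℝ) * (k:ℝ)^(n-l)) := by
              refine Finset.sum_congr rfl fun k _ => ?_
              rw [hexp k, Finset.mul_sum, Finset.mul_sum]
              refine Finset.sum_congr rfl fun l _ => ?_
              ring
          _ = ∑ l ∈ Finset.range (n+1), (x * ((n.choose l : ℝ) * x^l * z^(n-l))) *
                ∑ k ∈ Finset.range (n+2), ((-1:ℝ)^(n+1-k) * ((n+1).choose k : ℝ) * (k:ℝ)^(n-l)) := by
              rw [Finset.sum_comm]
              refine Finset.sum_congr rfl fun l _ => ?_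
              rw [Finset.mul_sum]
          _ = 0 := by
              refine Finset.sum_eq_zero fun l hl => ?_
              have hl' : n - l < n + 1 := by omega
              rw [altsum (n-l) (n+1) hl', mul_zero]
      rw [hfx, hgx, sub_self]
    intro y
    have hdiff : Differentiable ℝ (fun y => f y - g y) := fun y => (hderiv y).differentiableAt
    have hconst : ∀ a b : ℝ, f a - g a = f b - g b := by
      intro a b
      exact is_const_of_deriv_eq_zero hdiff (fun y => (hderiv y).deriv) a b
    have := hconst y (-x)
    rw [hatx] at this
    have : f y = g y := by linarith [this]
    exact this

/-- Shifted Abel identity. -/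
lemma abelM2 (x z : ℝ) (n : ℕ) (y : ℝ) :
    ∑ k ∈ Finset.range (n+1), (n.choose k : ℝ) * cAb z x k * (y + z*((n-k : ℕ):ℝ))^(n-k)
      = (x + y + z*n)^n := by
  have h := abelM x z n (y + z*n)
  have : ∑ k ∈ Finset.range (n+1), (n.choose k : ℝ) * cAb z x k * (y + z*n - z*k)^(n-k)
      = ∑ k ∈ Finset.range (n+1), (n.choose k : ℝ) * cAb z x k * (y + z*((n-k : ℕ):ℝ))^(n-k) := by
    refine Finset.sum_congr rfl fun k hk => ?_
    have hk' : k ≤ n := Nat.lt_succ_iff.mp (Finset.mem_range.mp hk)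
    rw [Nat.cast_sub hk']
    ring_nf
  rw [this] at h
  rw [h]
  ring

lemma cAb_expand (z b : ℝ) (j : ℕ) :
    cAb z b j = (b + z*j)^j - z*j*(b + z*j)^(j-1) := by
  match j with
  | 0 => simp [cAb]
  | (j'+1) =>
    simp only [cAb]
    have : (b + z*((j'+1:ℕ):ℝ))^(j'+1) = (b + z*(j'+1)) * (b + z*((j'+1:ℕ):ℝ))^(j') := by
      rw [pow_succ]
      push_cast
      ring
    rw [Nat.add_sub_cancel, this]
    push_cast
    ring

/-- Abel convolution identity. -/
lemma abelC (a b z : ℝ) (n : ℕ) :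
    ∑ k ∈ Finset.range (n+1), (n.choose k : ℝ) * cAb z a k * cAb z b (n-k)
      = cAb z (a+b) n := by
  match n with
  | 0 => simp [cAb]
  | (m+1) =>
    set n := m + 1 with hn
    have hsplit : ∑ k ∈ Finset.range (n+1), (n.choose k : ℝ) * cAb z a k * cAb z b (n-k)
        = (∑ k ∈ Finset.range (n+1), (n.choose k : ℝ) * cAb z a k * (b + z*((n-k:ℕ):ℝ))^(n-k))
          - z * ∑ k ∈ Finset.range (n+1), (n.choose k : ℝ) * cAb z a k *
              (((n-k:ℕ):ℝ) * (b + z*((n-k:ℕ):ℝ))^(n-k-1)) := by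
      rw [Finset.mul_sum, ← Finset.sum_sub_distrib]
      refine Finset.sum_congr rfl fun k hk => ?_
      rw [cAb_expand z b (n-k)]
      ring
    rw [hsplit, abelM2 a z n b]
    have hsecond : ∑ k ∈ Finset.range (n+1), (n.choose k : ℝ) * cAb z a k *
        (((n-k:ℕ):ℝ) * (b + z*((n-k:ℕ):ℝ))^(n-k-1))
        = n * (a + b + z*n)^m := by
      rw [Finset.sum_range_succ, Nat.sub_self, Nat.cast_zero, zero_mul, mul_zero, add_zero]
      have hcong : ∀ k ∈ Finset.range (m+1), (n.choose k : ℝ) * cAb z a k *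
          (((n-k:ℕ):ℝ) * (b + z*((n-k:ℕ):ℝ))^(n-k-1))
          = (n:ℝ) * ((m.choose k : ℝ) * cAb z a k * ((b+z) + z*((m-k:ℕ):ℝ))^(m-k)) := by
        intro k hk
        have hk' : k ≤ m := Nat.lt_succ_iff.mp (Finset.mem_range.mp hk)
        have h1 : n - k - 1 = m - k := by omega
        have h2 : ((n-k:ℕ):ℝ) = ((m-k:ℕ):ℝ) + 1 := by
          rw [Nat.cast_sub (by omega), Nat.cast_sub hk']
          rw [hn]
          push_cast
          ring
        have h3 : b + z*((n-k:ℕ):ℝ) = (b+z) + z*((m-k:ℕ):ℝ) := by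
          rw [h2]; ring
        have hcc : (n.choose k : ℝ) * ((n-k:ℕ):ℝ) = (n:ℝ) * (m.choose k : ℝ) := by
          rw [hn, Nat.cast_sub (by omega : k ≤ m + 1)]
          have := congrArg (fun q : ℕ => (q : ℝ)) (Nat.choose_mul_succ_eq m k)
          push_cast at this
          rw [Nat.cast_sub (show k ≤ m + 1 by omega)] at this
          push_cast at this ⊢
          linarith [this]
        rw [h1, h3]
        calc (n.choose k : ℝ) * cAb z a k * (((n-k:ℕ):ℝ) * ((b+z) + z*((m-k:ℕ):ℝ))^(m-k))
            = ((n.choose k : ℝ) * ((n-k:ℕ):ℝ)) * cAb z a k * ((b+z) + z*((m-k:ℕ):ℝ))^(m-k) := by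
              ring
          _ = ((n:ℝ) * (m.choose k : ℝ)) * cAb z a k * ((b+z) + z*((m-k:ℕ):ℝ))^(m-k) := by
              rw [hcc]
          _ = (n:ℝ) * ((m.choose k : ℝ) * cAb z a k * ((b+z) + z*((m-k:ℕ):ℝ))^(m-k)) := by ring
      rw [Finset.sum_congr rfl hcong, ← Finset.mul_sum, abelM2 a z m (b+z)]
      congr 1
      rw [hn]
      push_cast
      ring
    rw [hsecond]
    show (a + b + z*(n:ℝ))^n - z * ((n:ℝ) * (a + b + z*(n:ℝ))^m) = cAb z (a+b) n
    simp only [cAb]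
    have : (a + b + z*(n:ℝ))^n = (a + b + z*(n:ℝ)) * (a + b + z*(n:ℝ))^m := by
      rw [hn, pow_succ]; ring
    rw [this]
    rw [hn]
    push_cast
    ring

lemma pow_self_le : ∀ j : ℕ, (j:ℝ)^j ≤ Real.exp 1 ^ j * (j.factorial : ℝ) := by
  intro j
  induction j with
  | zero => simp
  | succ j ih =>
    rcases Nat.eq_zero_or_pos j with rfl | hj
    · simpa using Real.one_le_exp (le_refl 0) |>.trans (by
        nlinarith [Real.one_le_exp (le_refl (0:ℝ))])
    · have hjR : (1:ℝ) ≤ (j:ℝ) := by exact_mod_cast hj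
      have h0 : (0:ℝ) < (j:ℝ) := by linarith
      have hsplit : ((j:ℝ)+1)^j = (j:ℝ)^j * (1 + 1/(j:ℝ))^j := by
        rw [← mul_pow]
        congr 1
        field_simp
      have h1 : (1 + 1/(j:ℝ))^j ≤ Real.exp 1 := by
        have hle : 1 + 1/(j:ℝ) ≤ Real.exp (1/(j:ℝ)) := by
          linarith [Real.add_one_le_exp (1/(j:ℝ))]
        have := pow_le_pow_left₀ (by positivity) hle j
        rw [← Real.exp_nat_mul] at this
        have hj1 : (j:ℝ) * (1/(j:ℝ)) = 1 := by field_simp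
        rwa [hj1] at this
      have h2 : ((j:ℝ)+1)^j ≤ Real.exp 1 * (j:ℝ)^j := by
        rw [hsplit]
        have hnn : (0:ℝ) ≤ (j:ℝ)^j := by positivity
        nlinarith [pow_nonneg (by positivity : (0:ℝ) ≤ 1 + 1/(j:ℝ)) j]
      have hfac : ((j+1).factorial : ℝ) = ((j:ℝ)+1) * (j.factorial : ℝ) := by
        rw [Nat.factorial_succ]; push_cast; ring
      calc ((j+1:ℕ):ℝ)^(j+1) = ((j:ℝ)+1) * ((j:ℝ)+1)^j := by push_cast; ring
        _ ≤ ((j:ℝ)+1) * (Real.exp 1 * (j:ℝ)^j) := by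
            have : (0:ℝ) ≤ (j:ℝ)+1 := by positivity
            nlinarith
        _ ≤ ((j:ℝ)+1) * (Real.exp 1 * (Real.exp 1 ^ j * (j.factorial : ℝ))) := by
            have h3 : (0:ℝ) ≤ ((j:ℝ)+1) * Real.exp 1 := by positivity
            nlinarith [Real.exp_pos 1]
        _ = Real.exp 1 ^ (j+1) * ((j+1).factorial : ℝ) := by
            rw [hfac, pow_succ]
            ring

lemma masterBound (τ : ℝ) (hτ : 1 ≤ τ) (x : ℝ) (hx : 0 ≤ x) (m j : ℕ) (hmj : m ≤ j) :
    (x + τ*j)^m / (j.factorial : ℝ) ≤ Real.exp x * (τ * Real.exp 1)^j := by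
  rcases Nat.eq_zero_or_pos j with rfl | hj
  · have hm : m = 0 := by omega
    subst hm
    simp [Real.one_le_exp hx]
  · have hjR : (1:ℝ) ≤ (j:ℝ) := by exact_mod_cast hj
    have hτj : (1:ℝ) ≤ τ * j := by nlinarith
    have hτj0 : (0:ℝ) < τ * j := by linarith
    have key1 : (x + τ*j)^m ≤ (τ*j)^m * Real.exp x := by
      have hbase : x + τ*j = (τ*j) * (1 + x/(τ*j)) := by field_simp; ring
      rw [hbase, mul_pow]
      have hb1 : (1:ℝ) ≤ 1 + x/(τ*j) := le_add_of_nonneg_right (by positivity)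
      have h1 : (1 + x/(τ*j))^m ≤ (1 + x/(τ*j))^j := pow_le_pow_right₀ hb1 hmj
      have h2 : (1 + x/(τ*j))^j ≤ Real.exp (x/(τ*j)) ^ j := by
        apply pow_le_pow_left₀ (by positivity)
        linarith [Real.add_one_le_exp (x/(τ*j))]
      have h3 : Real.exp (x/(τ*j)) ^ j = Real.exp ((j:ℝ) * (x/(τ*j))) := (Real.exp_nat_mul _ j).symm
      have h4 : (j:ℝ) * (x/(τ*j)) = x/τ := by field_simp
      have h5 : Real.exp (x/τ) ≤ Real.exp x := by
        apply Real.exp_le_exp.mpr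
        exact div_le_self hx hτ
      have h6 : (1 + x/(τ*j))^m ≤ Real.exp x := by
        calc (1 + x/(τ*j))^m ≤ (1 + x/(τ*j))^j := h1
          _ ≤ Real.exp (x/(τ*j)) ^ j := h2
          _ = Real.exp ((j:ℝ) * (x/(τ*j))) := h3
          _ = Real.exp (x/τ) := by rw [h4]
          _ ≤ Real.exp x := h5
      have hpm : (0:ℝ) ≤ (τ*j)^m := by positivity
      nlinarith
    have key2 : (τ*j)^m ≤ (τ*j)^j := pow_le_pow_right₀ hτj hmj
    have key3 : ((τ*(j:ℝ)))^j = τ^j * (j:ℝ)^j := mul_pow τ (j:ℝ) j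
    have key4 : (j:ℝ)^j ≤ Real.exp 1 ^ j * (j.factorial : ℝ) := pow_self_le j
    have hfacpos : (0:ℝ) < (j.factorial : ℝ) := by exact_mod_cast j.factorial_pos
    rw [div_le_iff₀ hfacpos]
    have hτpow : (0:ℝ) ≤ τ^j := by positivity
    calc (x + τ*j)^m ≤ (τ*j)^m * Real.exp x := key1
      _ ≤ (τ*j)^j * Real.exp x := by nlinarith [Real.exp_pos x]
      _ = τ^j * (j:ℝ)^j * Real.exp x := by rw [key3]
      _ ≤ τ^j * (Real.exp 1 ^ j * (j.factorial : ℝ)) * Real.exp x := by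
          gcongr
      _ = Real.exp x * (τ * Real.exp 1)^j * (j.factorial : ℝ) := by
          rw [mul_pow]; ring

lemma deriv_reindex (τ x : ℝ) (i : ℕ) :
    coA τ x (i+1) * ((i+1:ℕ):ℝ) = x * coB τ (x+τ) i := by
  simp only [coA, coB, cAb]
  have h1 : x + τ*((i:ℝ)+1) = (x+τ) + τ*(i:ℝ) := by ring
  rw [h1, Nat.factorial_succ]
  have h2 : (0:ℝ) < (i.factorial : ℝ) := by exact_mod_cast i.factorial_pos
  push_cast
  field_simp

lemma ladder (τ : ℝ) (i : ℕ) :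
    coB τ (1+τ) (i+1) - coA τ (τ+1) (i+1) = τ * coB τ (τ+1+τ) i := by
  simp only [coA, coB, cAb]
  have e1 : (1+τ) + τ*((i+1:ℕ):ℝ) = (τ+1+τ) + τ*(i:ℝ) := by push_cast; ring
  have e2 : (τ+1) + τ*((i:ℝ)+1) = (τ+1+τ) + τ*(i:ℝ) := by ring
  rw [e1, e2, Nat.factorial_succ, pow_succ]
  have h2 : (0:ℝ) < (i.factorial : ℝ) := by exact_mod_cast i.factorial_pos
  push_cast
  field_simp
  ring

lemma cauchy (τ a b : ℝ) (z : ℝ)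
    (ha : Summable fun k => ‖coA τ a k * z^k‖) (hb : Summable fun k => ‖coA τ b k * z^k‖) :
    (∑' k, coA τ a k * z^k) * (∑' k, coA τ b k * z^k) = ∑' n, coA τ (a+b) n * z^n := by
  rw [tsum_mul_tsum_eq_tsum_sum_antidiagonal_of_summable_norm ha hb]
  congr 1
  funext n
  rw [Finset.Nat.sum_antidiagonal_eq_sum_range_succ_mk]
  have hstep : ∀ k ∈ Finset.range (n+1), coA τ a k * z^k * (coA τ b (n-k) * z^(n-k))
      = ((n.choose k:ℝ) * cAb τ a k * cAb τ b (n-k)) / (n.factorial:ℝ) * z^n := by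
    intro k hk
    have hk' : k ≤ n := Nat.lt_succ_iff.mp (Finset.mem_range.mp hk)
    simp only [coA]
    have hz : z^k * z^(n-k) = z^n := by
      rw [← pow_add]
      congr 1
      omega
    have hC := Nat.cast_choose ℝ hk'
    have hf1 : (0:ℝ) < (k.factorial : ℝ) := by exact_mod_cast k.factorial_pos
    have hf2 : (0:ℝ) < ((n-k).factorial : ℝ) := by exact_mod_cast (n-k).factorial_pos
    have hf3 : (0:ℝ) < (n.factorial : ℝ) := by exact_mod_cast n.factorial_pos
    rw [hC]
    field_simp
    rw [← hz]; ring
  rw [Finset.sum_congr rfl hstep, ← Finset.sum_mul, ← Finset.sum_div]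
  have habel : ∑ k ∈ Finset.range (n+1), (n.choose k:ℝ) * cAb τ a k * cAb τ b (n-k)
      = cAb τ (a+b) n := abelC a b τ n
  rw [habel]
  rfl

/-- `s·e^{1-s} < 1` for `s < 1`. -/
lemma se_lt_one {s : ℝ} (h1 : s < 1) : s * Real.exp (1 - s) < 1 := by
  have h2 : s < Real.exp (s - 1) := by
    have := Real.add_one_lt_exp (show s - 1 ≠ 0 by intro h; apply absurd (by linarith : s = 1) (ne_of_lt h1))
    linarith
  have h3 : 0 < Real.exp (1 - s) := Real.exp_pos _
  have h4 : Real.exp (s-1) * Real.exp (1-s) = 1 := by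
    rw [← Real.exp_add]; norm_num
  nlinarith

/-- bound on `cAb`. -/
lemma cAb_bound (τ : ℝ) (hτ : 1 ≤ τ) (x : ℝ) (hx : 0 ≤ x) (k : ℕ) :
    |cAb τ x k / (k.factorial : ℝ)| ≤ Real.exp x * (τ * Real.exp 1)^k := by
  have h1 : |cAb τ x k| ≤ (x + τ*k)^k := by
    match k with
    | 0 => simp [cAb]
    | (k'+1) =>
      simp only [cAb]
      push_cast
      have hc : (0:ℝ) ≤ x + τ*((k':ℝ)+1) := by positivity
      have hb : (0:ℝ) ≤ (x + τ*((k':ℝ)+1))^k' := by positivity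
      rw [abs_of_nonneg (by positivity)]
      have hxle : x ≤ x + τ*((k':ℝ)+1) := by nlinarith
      calc x * (x + τ*((k':ℝ)+1))^k' ≤ (x + τ*((k':ℝ)+1)) * (x + τ*((k':ℝ)+1))^k' :=
            mul_le_mul_of_nonneg_right hxle hb
        _ = (x + τ*((k':ℝ)+1))^(k'+1) := by rw [← pow_succ']
  have hfp : (0:ℝ) < (k.factorial : ℝ) := by exact_mod_cast k.factorial_pos
  rw [abs_div, abs_of_pos hfp, div_le_iff₀ hfp]
  calc |cAb τ x k| ≤ (x + τ*k)^k := h1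
    _ ≤ Real.exp x * (τ * Real.exp 1)^k * (k.factorial : ℝ) := by
        have := masterBound τ hτ x hx k k (le_refl k)
        rw [div_le_iff₀ hfp] at this
        exact this

lemma coA_bound (τ : ℝ) (hτ : 1 ≤ τ) (x : ℝ) (hx : 0 ≤ x) (k : ℕ) :
    |coA τ x k| ≤ Real.exp x * (τ * Real.exp 1)^k := cAb_bound τ hτ x hx k

lemma coB_bound (τ : ℝ) (hτ : 1 ≤ τ) (x : ℝ) (hx : 0 ≤ x) (j : ℕ) :
    |coB τ x j| ≤ Real.exp x * (τ * Real.exp 1)^j := by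
  have hnn : 0 ≤ coB τ x j := by
    have : (0:ℝ) ≤ x + τ*j := by positivity
    have hf : (0:ℝ) < (j.factorial:ℝ) := by exact_mod_cast j.factorial_pos
    exact div_nonneg (by positivity) (le_of_lt hf)
  rw [abs_of_nonneg hnn]
  exact masterBound τ hτ x hx j j (le_refl j)

lemma cAb_nonneg (τ x : ℝ) (hτ : 0 ≤ τ) (hx : 0 ≤ x) (k : ℕ) : 0 ≤ cAb τ x k := by
  match k with
  | 0 => norm_num [cAb]
  | (k'+1) =>
    simp only [cAb]
    positivity

lemma coA_nonneg (τ x : ℝ) (hτ : 0 ≤ τ) (hx : 0 ≤ x) (k : ℕ) : 0 ≤ coA τ x k := by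
  have hf : (0:ℝ) < (k.factorial:ℝ) := by exact_mod_cast k.factorial_pos
  exact div_nonneg (cAb_nonneg τ x hτ hx k) (le_of_lt hf)

lemma key (t : ℕ) (ht : 1 ≤ t) (d : ℝ) (hd : 0 < d) (htd : (t:ℝ)*d < 1) :
    Summable (fun k => coA (t:ℝ) 1 k * (d * Real.exp (-((t:ℝ)*d)))^k) ∧
    Summable (fun k => coA (t:ℝ) ((t:ℝ)+1) k * (d * Real.exp (-((t:ℝ)*d)))^k) ∧
    (∑' k, coA (t:ℝ) 1 k * (d * Real.exp (-((t:ℝ)*d)))^k) = Real.exp d ∧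
    (∑' k, coA (t:ℝ) ((t:ℝ)+1) k * (d * Real.exp (-((t:ℝ)*d)))^k)
      = Real.exp (((t:ℝ)+1)*d) := by
  have hτ : (1:ℝ) ≤ (t:ℝ) := by exact_mod_cast ht
  have hτ0 : (0:ℝ) < (t:ℝ) := by linarith
  have hz00 : 0 < d * Real.exp (-((t:ℝ)*d)) := by positivity
  have hE : (0:ℝ) < Real.exp 1 := Real.exp_pos 1
  have hτe : (0:ℝ) < (t:ℝ) * Real.exp 1 := by positivity
  have hq0 : (t:ℝ) * Real.exp 1 * (d * Real.exp (-((t:ℝ)*d))) < 1 := by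
    have heq : (t:ℝ) * Real.exp 1 * (d * Real.exp (-((t:ℝ)*d)))
        = ((t:ℝ)*d) * Real.exp (1 - (t:ℝ)*d) := by
      rw [Real.exp_sub, Real.exp_neg]
      field_simp
    rw [heq]
    exact se_lt_one htd
  obtain ⟨ρ, hz0ρ, hρ0, hq1⟩ : ∃ ρ:ℝ, d * Real.exp (-((t:ℝ)*d)) < ρ ∧ 0 < ρ ∧
      (t:ℝ) * Real.exp 1 * ρ < 1 := by
    refine ⟨(d * Real.exp (-((t:ℝ)*d)) + 1/((t:ℝ)*Real.exp 1))/2, ?_, ?_, ?_⟩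
    · have h2 : d * Real.exp (-((t:ℝ)*d)) < 1/((t:ℝ)*Real.exp 1) := by
        rw [lt_div_iff₀ hτe]; linarith [hq0]
      linarith
    · positivity
    · have h2 : d * Real.exp (-((t:ℝ)*d)) < 1/((t:ℝ)*Real.exp 1) := by
        rw [lt_div_iff₀ hτe]; linarith [hq0]
      have h3 : (d * Real.exp (-((t:ℝ)*d)) + 1/((t:ℝ)*Real.exp 1))/2 < 1/((t:ℝ)*Real.exp 1) := by
        linarith
      calc (t:ℝ) * Real.exp 1 * ((d * Real.exp (-((t:ℝ)*d)) + 1/((t:ℝ)*Real.exp 1))/2)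
          < (t:ℝ) * Real.exp 1 * (1/((t:ℝ)*Real.exp 1)) := mul_lt_mul_of_pos_left h3 hτe
        _ = 1 := by field_simp
  have hqpos : 0 < (t:ℝ) * Real.exp 1 * ρ := by positivity
  -- summability helpers
  have hsumnorm : ∀ (c : ℕ → ℝ) (C : ℝ), (∀ k, |c k| ≤ C * ((t:ℝ)*Real.exp 1)^k) →
      ∀ z : ℝ, |z| ≤ ρ → Summable (fun k => ‖c k * z^k‖) := by
    intro c C hc z hz
    have hC : 0 ≤ C := le_trans (abs_nonneg (c 0)) (by simpa using hc 0)
    apply Summable.of_nonneg_of_le (fun k => norm_nonneg _) (fun k => ?_)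
      (Summable.mul_left C (summable_geometric_of_lt_one (le_of_lt hqpos) hq1))
    calc ‖c k * z^k‖ = |c k| * |z|^k := by rw [norm_mul, norm_pow]; rfl
      _ ≤ (C * ((t:ℝ)*Real.exp 1)^k) * ρ^k := by
          apply mul_le_mul (hc k) (pow_le_pow_left₀ (abs_nonneg z) hz k) (by positivity)
          positivity
      _ = C * ((t:ℝ) * Real.exp 1 * ρ)^k := by rw [mul_pow]; ring
  have hsum : ∀ (c : ℕ → ℝ) (C : ℝ), (∀ k, |c k| ≤ C * ((t:ℝ)*Real.exp 1)^k) →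
      ∀ z : ℝ, |z| ≤ ρ → Summable (fun k => c k * z^k) := fun c C hc z hz =>
    (hsumnorm c C hc z hz).of_norm
  -- summable bound for the derivative series
  have hderivbdsum : ∀ C : ℝ, 0 ≤ C →
      Summable (fun k : ℕ => C * ((t:ℝ)*Real.exp 1)^k * k * ρ^(k-1)) := by
    intro C hC
    have h1 : Summable (fun k : ℕ => (k:ℝ) * ((t:ℝ) * Real.exp 1 * ρ)^k) := by
      have := summable_pow_mul_geometric_of_norm_lt_one (R := ℝ) 1
        (r := (t:ℝ) * Real.exp 1 * ρ)
        (by rw [Real.norm_eq_abs, abs_of_pos hqpos]; exact hq1)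
      simpa using this
    have h2 : Summable (fun k : ℕ => (C * ((t:ℝ)*Real.exp 1) / (((t:ℝ) * Real.exp 1) * ρ)) *
        ((k:ℝ) * (((t:ℝ) * Real.exp 1) * ρ)^k)) := h1.mul_left _
    apply h2.congr
    intro k
    match k with
    | 0 => simp
    | (k'+1) =>
      have h3 : ρ^(k'+1-1) = ρ^k' := rfl
      rw [h3]
      have hXpos := hτe
      have hc1 : C * ((t:ℝ)*Real.exp 1)^(k'+1) * ((k'+1:ℕ):ℝ) * ρ^k'
          = C * ((t:ℝ)*Real.exp 1) / (((t:ℝ) * Real.exp 1) * ρ) *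
            (((k'+1:ℕ):ℝ) * (((t:ℝ) * Real.exp 1) * ρ)^(k'+1)) := by
        generalize hXe : (t:ℝ)*Real.exp 1 = X at hXpos ⊢
        rw [mul_pow]
        field_simp
        ring
      rw [← hc1]
  have hderiv : ∀ (c : ℕ → ℝ) (C : ℝ), 0 ≤ C → (∀ k, |c k| ≤ C * ((t:ℝ)*Real.exp 1)^k) →
      ∀ z ∈ Set.Ioo (-ρ) ρ,
        HasDerivAt (fun z => ∑' k, c k * z^k) (∑' k, c k * ((k:ℝ) * z^(k-1))) z := by
    intro c C hC hc z hz
    refine hasDerivAt_tsum_of_isPreconnected (hderivbdsum C hC) isOpen_Ioo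
      (convex_Ioo (-ρ) ρ).isPreconnected
      (fun k y _ => (hasDerivAt_pow k y).const_mul (c k))
      (fun k y hy => ?_) (show (0:ℝ) ∈ Set.Ioo (-ρ) ρ from ⟨by linarith, hρ0⟩)
      (hsum c C hc 0 (by rw [abs_of_nonneg (le_refl (0:ℝ))]; linarith)) hz
    have hyρ : |y| ≤ ρ := by
      rw [abs_le]; exact ⟨le_of_lt hy.1, le_of_lt hy.2⟩
    match k with
    | 0 => simp
    | (k'+1) =>
      rw [Real.norm_eq_abs, abs_mul, abs_mul]
      have h1 : |((k'+1:ℕ):ℝ)| = ((k'+1:ℕ):ℝ) := abs_of_nonneg (by positivity)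
      rw [h1, abs_pow]
      have h2 : |y|^(k'+1-1) ≤ ρ^(k'+1-1) := pow_le_pow_left₀ (abs_nonneg y) hyρ _
      calc |c (k'+1)| * (((k'+1:ℕ):ℝ) * |y|^(k'+1-1))
          ≤ (C * ((t:ℝ)*Real.exp 1)^(k'+1)) * (((k'+1:ℕ):ℝ) * ρ^(k'+1-1)) := by
            apply mul_le_mul (hc _) _ (by positivity) (by positivity)
            exact mul_le_mul_of_nonneg_left h2 (by positivity)
        _ = C * ((t:ℝ)*Real.exp 1)^(k'+1) * ((k'+1:ℕ):ℝ) * ρ^(k'+1-1) := by ring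
  -- estimate for derivative-series terms
  have hest : ∀ (c : ℕ → ℝ) (C : ℝ), (∀ k, |c k| ≤ C * ((t:ℝ)*Real.exp 1)^k) →
      ∀ z : ℝ, |z| ≤ ρ → ∀ k : ℕ,
        ‖c k * ((k:ℝ) * z^(k-1))‖ ≤ C * ((t:ℝ)*Real.exp 1)^k * k * ρ^(k-1) := by
    intro c C hc z hz k
    have hC : 0 ≤ C := le_trans (abs_nonneg (c 0)) (by simpa using hc 0)
    match k with
    | 0 => simp
    | (k'+1) =>
      rw [Real.norm_eq_abs, abs_mul, abs_mul]
      have h1 : |((k'+1:ℕ):ℝ)| = ((k'+1:ℕ):ℝ) := abs_of_nonneg (by positivity)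
      rw [h1, abs_pow]
      have h2 : |z|^(k'+1-1) ≤ ρ^(k'+1-1) := pow_le_pow_left₀ (abs_nonneg z) hz _
      calc |c (k'+1)| * (((k'+1:ℕ):ℝ) * |z|^(k'+1-1))
          ≤ (C * ((t:ℝ)*Real.exp 1)^(k'+1)) * (((k'+1:ℕ):ℝ) * ρ^(k'+1-1)) := by
            apply mul_le_mul (hc _) _ (by positivity) (by positivity)
            exact mul_le_mul_of_nonneg_left h2 (by positivity)
        _ = C * ((t:ℝ)*Real.exp 1)^(k'+1) * ((k'+1:ℕ):ℝ) * ρ^(k'+1-1) := by ring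
  have hsumd : ∀ (c : ℕ → ℝ) (C : ℝ), (∀ k, |c k| ≤ C * ((t:ℝ)*Real.exp 1)^k) →
      ∀ z : ℝ, |z| ≤ ρ → Summable (fun k => c k * ((k:ℝ) * z^(k-1))) := by
    intro c C hc z hz
    have hC : 0 ≤ C := le_trans (abs_nonneg (c 0)) (by simpa using hc 0)
    exact Summable.of_norm_bounded (hderivbdsum C hC) (hest c C hc z hz)
  -- reindexing of the derivative series
  have hreindex : ∀ (x:ℝ), 0 ≤ x → ∀ z : ℝ, |z| ≤ ρ →
      (∑' k, coA (t:ℝ) x k * ((k:ℝ) * z^(k-1)))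
        = x * ∑' j, coB (t:ℝ) (x+(t:ℝ)) j * z^j := by
    intro x hx z hz
    have hbd : ∀ k, |coA (t:ℝ) x k| ≤ Real.exp x * ((t:ℝ)*Real.exp 1)^k :=
      fun k => coA_bound (t:ℝ) hτ x hx k
    rw [Summable.tsum_eq_zero_add (hsumd _ (Real.exp x) hbd z hz)]
    simp only [Nat.cast_zero, zero_mul, mul_zero, zero_add]
    have hterm : ∀ i : ℕ, coA (t:ℝ) x (i+1) * (((i+1:ℕ):ℝ) * z^(i+1-1))
        = x * (coB (t:ℝ) (x+(t:ℝ)) i * z^i) := by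
      intro i
      have h1 : z^(i+1-1) = z^i := rfl
      rw [h1]
      calc coA (t:ℝ) x (i+1) * (((i+1:ℕ):ℝ) * z^i)
          = (coA (t:ℝ) x (i+1) * ((i+1:ℕ):ℝ)) * z^i := by ring
        _ = (x * coB (t:ℝ) (x+(t:ℝ)) i) * z^i := by rw [deriv_reindex]
        _ = x * (coB (t:ℝ) (x+(t:ℝ)) i * z^i) := by ring
    rw [tsum_congr hterm, tsum_mul_left]
  -- the functions
  set u : ℝ → ℝ := fun z => ∑' k, coA (t:ℝ) 1 k * z^k with hu_def
  set v : ℝ → ℝ := fun z => ∑' k, coA (t:ℝ) ((t:ℝ)+1) k * z^k with hv_def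
  set U : ℝ → ℝ := fun z => ∑' j, coB (t:ℝ) (1+(t:ℝ)) j * z^j with hU_def
  set W : ℝ → ℝ := fun z => ∑' j, coB (t:ℝ) ((t:ℝ)+1+(t:ℝ)) j * z^j with hW_def
  have hbA1 : ∀ k, |coA (t:ℝ) 1 k| ≤ Real.exp 1 * ((t:ℝ)*Real.exp 1)^k :=
    fun k => coA_bound (t:ℝ) hτ 1 zero_le_one k
  have hbA2 : ∀ k, |coA (t:ℝ) ((t:ℝ)+1) k| ≤ Real.exp ((t:ℝ)+1) * ((t:ℝ)*Real.exp 1)^k :=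
    fun k => coA_bound (t:ℝ) hτ _ (by positivity) k
  have hbU : ∀ k, |coB (t:ℝ) (1+(t:ℝ)) k| ≤ Real.exp (1+(t:ℝ)) * ((t:ℝ)*Real.exp 1)^k :=
    fun k => coB_bound (t:ℝ) hτ _ (by positivity) k
  have hbW : ∀ k, |coB (t:ℝ) ((t:ℝ)+1+(t:ℝ)) k| ≤ Real.exp ((t:ℝ)+1+(t:ℝ)) * ((t:ℝ)*Real.exp 1)^k :=
    fun k => coB_bound (t:ℝ) hτ _ (by positivity) k
  -- derivatives
  have hudd : ∀ z ∈ Set.Ioo (-ρ) ρ, HasDerivAt u (U z) z := by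
    intro z hz
    have hzρ : |z| ≤ ρ := by rw [abs_le]; exact ⟨le_of_lt hz.1, le_of_lt hz.2⟩
    have h := hderiv _ _ (le_of_lt (Real.exp_pos 1)) hbA1 z hz
    rw [hreindex 1 zero_le_one z hzρ, one_mul] at h
    exact h
  have hvdd : ∀ z ∈ Set.Ioo (-ρ) ρ, HasDerivAt v (((t:ℝ)+1) * W z) z := by
    intro z hz
    have hzρ : |z| ≤ ρ := by rw [abs_le]; exact ⟨le_of_lt hz.1, le_of_lt hz.2⟩
    have h := hderiv _ _ (le_of_lt (Real.exp_pos _)) hbA2 z hz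
    rw [hreindex ((t:ℝ)+1) (by positivity) z hzρ] at h
    exact h
  -- summability at |z| ≤ ρ
  have hsA1 : ∀ z : ℝ, |z| ≤ ρ → Summable (fun k => coA (t:ℝ) 1 k * z^k) :=
    fun z hz => hsum _ _ hbA1 z hz
  have hsA2 : ∀ z : ℝ, |z| ≤ ρ → Summable (fun k => coA (t:ℝ) ((t:ℝ)+1) k * z^k) :=
    fun z hz => hsum _ _ hbA2 z hz
  have hsU : ∀ z : ℝ, |z| ≤ ρ → Summable (fun k => coB (t:ℝ) (1+(t:ℝ)) k * z^k) :=
    fun z hz => hsum _ _ hbU z hz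
  have hsW : ∀ z : ℝ, |z| ≤ ρ → Summable (fun k => coB (t:ℝ) ((t:ℝ)+1+(t:ℝ)) k * z^k) :=
    fun z hz => hsum _ _ hbW z hz
  -- the ladder relation: U = v + τ z W
  have hUrel : ∀ z : ℝ, |z| ≤ ρ → U z = v z + (t:ℝ) * (z * W z) := by
    intro z hz
    have h1 := hsU z hz
    have h2 := hsA2 z hz
    have hsub : Summable (fun j => coB (t:ℝ) (1+(t:ℝ)) j * z^j - coA (t:ℝ) ((t:ℝ)+1) j * z^j) :=
      h1.sub h2
    have e1 : ∑' j, (coB (t:ℝ) (1+(t:ℝ)) j * z^j - coA (t:ℝ) ((t:ℝ)+1) j * z^j) = U z - v z :=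
      Summable.tsum_sub h1 h2
    have e2 : ∑' j, (coB (t:ℝ) (1+(t:ℝ)) j * z^j - coA (t:ℝ) ((t:ℝ)+1) j * z^j)
        = (t:ℝ) * (z * W z) := by
      rw [Summable.tsum_eq_zero_add hsub]
      have h0 : coB (t:ℝ) (1+(t:ℝ)) 0 * z^0 - coA (t:ℝ) ((t:ℝ)+1) 0 * z^0 = 0 := by
        rw [coB_zero, coA_zero]; ring
      rw [h0, zero_add]
      have hterm : ∀ i : ℕ, coB (t:ℝ) (1+(t:ℝ)) (i+1) * z^(i+1) - coA (t:ℝ) ((t:ℝ)+1) (i+1) * z^(i+1)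
          = (t:ℝ) * (z * (coB (t:ℝ) ((t:ℝ)+1+(t:ℝ)) i * z^i)) := by
        intro i
        have hl := ladder (t:ℝ) i
        have hp : z^(i+1) = z * z^i := pow_succ' z i
        calc coB (t:ℝ) (1+(t:ℝ)) (i+1) * z^(i+1) - coA (t:ℝ) ((t:ℝ)+1) (i+1) * z^(i+1)
            = (coB (t:ℝ) (1+(t:ℝ)) (i+1) - coA (t:ℝ) ((t:ℝ)+1) (i+1)) * z^(i+1) := by ring
          _ = ((t:ℝ) * coB (t:ℝ) ((t:ℝ)+1+(t:ℝ)) i) * (z * z^i) := by rw [hl, hp]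
          _ = (t:ℝ) * (z * (coB (t:ℝ) ((t:ℝ)+1+(t:ℝ)) i * z^i)) := by ring
      rw [tsum_congr hterm, tsum_mul_left, tsum_mul_left]
    rw [e1] at e2
    linarith
  -- powers of u
  have hpow : ∀ m : ℕ, ∀ z : ℝ, |z| ≤ ρ →
      (∑' k, coA (t:ℝ) ((m:ℝ)+1) k * z^k) = (u z)^(m+1) := by
    intro m
    induction m with
    | zero =>
      intro z hz
      norm_num [hu_def]
    | succ m ihm =>
      intro z hz
      have hnorm1 : Summable (fun k => ‖coA (t:ℝ) ((m:ℝ)+1) k * z^k‖) :=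
        hsumnorm _ (Real.exp ((m:ℝ)+1)) (fun k => coA_bound (t:ℝ) hτ _ (by positivity) k) z hz
      have hnorm2 : Summable (fun k => ‖coA (t:ℝ) 1 k * z^k‖) :=
        hsumnorm _ (Real.exp 1) hbA1 z hz
      have hc := cauchy (t:ℝ) ((m:ℝ)+1) 1 z hnorm1 hnorm2
      rw [show ((m+1:ℕ):ℝ) = (m:ℝ)+1 from by push_cast; ring, ← hc, ihm z hz]
      show (u z)^(m+1) * (u z) = (u z)^(m+1+1)
      ring
  have hv_upow : ∀ z : ℝ, |z| ≤ ρ → v z = (u z)^(t+1) := by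
    intro z hz
    rw [hv_def]
    exact hpow t z hz
  -- the ODE
  have hODE : ∀ z ∈ Set.Ioo (-ρ) ρ, U z * (1 - (t:ℝ)*z*(u z)^t) = (u z)^(t+1) := by
    intro z hz
    have hzρ : |z| ≤ ρ := by rw [abs_le]; exact ⟨le_of_lt hz.1, le_of_lt hz.2⟩
    have hchain : HasDerivAt (fun z => (u z)^(t+1)) (((t+1:ℕ):ℝ) * (u z)^(t+1-1) * U z) z :=
      (hudd z hz).pow (t+1)
    have hveq : v =ᶠ[nhds z] (fun z => (u z)^(t+1)) := by
      filter_upwards [isOpen_Ioo.mem_nhds hz] with w hw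
      exact hv_upow w (by rw [abs_le]; exact ⟨le_of_lt hw.1, le_of_lt hw.2⟩)
    have hvd2 : HasDerivAt v (((t+1:ℕ):ℝ) * (u z)^(t+1-1) * U z) z :=
      hchain.congr_of_eventuallyEq hveq
    have huniq := (hvdd z hz).unique hvd2
    have hW2 : W z = (u z)^t * U z := by
      have hc : ((t+1:ℕ):ℝ) = (t:ℝ)+1 := by push_cast; ring
      have hne : ((t:ℝ)+1) ≠ 0 := by positivity
      have ht1 : t+1-1 = t := rfl
      rw [hc, ht1] at huniq
      apply mul_left_cancel₀ hne
      rw [huniq]; ring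
    have hU2 := hUrel z hzρ
    calc U z * (1 - (t:ℝ)*z*(u z)^t) = U z - (t:ℝ)*(z*((u z)^t * U z)) := by ring
      _ = U z - (t:ℝ)*(z*W z) := by rw [hW2]
      _ = v z := by linarith
      _ = (u z)^(t+1) := hv_upow z hzρ
  -- u ≥ 1 on [0, ρ]
  have hu_ge1 : ∀ z : ℝ, 0 ≤ z → z ≤ ρ → 1 ≤ u z := by
    intro z hz0 hzρ
    have hsm := hsA1 z (by rwa [abs_of_nonneg hz0])
    have hle := Summable.le_tsum hsm 0 (fun j _ => by
      have := coA_nonneg (t:ℝ) 1 (by positivity) zero_le_one j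
      positivity)
    rw [coA_zero, pow_zero, one_mul] at hle
    exact hle
  have hz0ρ' : d * Real.exp (-((t:ℝ)*d)) ≤ ρ := le_of_lt hz0ρ
  -- log identity
  have hlogid : ∀ z ∈ Set.Icc 0 (d * Real.exp (-((t:ℝ)*d))),
      Real.log (u z) = z * (u z)^t := by
    have hFd : ∀ z ∈ Set.Icc (0:ℝ) (d * Real.exp (-((t:ℝ)*d))),
        HasDerivAt (fun z => Real.log (u z) - z * (u z)^t) 0 z := by
      intro z hz
      have hzIoo : z ∈ Set.Ioo (-ρ) ρ := ⟨by linarith [hz.1], lt_of_le_of_lt hz.2 hz0ρ⟩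
      have hu1 : 1 ≤ u z := hu_ge1 z hz.1 (le_trans hz.2 hz0ρ')
      have hne : u z ≠ 0 := by linarith
      have hlogd : HasDerivAt (fun z => Real.log (u z)) (U z / u z) z :=
        (hudd z hzIoo).log hne
      have hpd : HasDerivAt (fun z => z * (u z)^t)
          (1 * (u z)^t + z * ((t:ℝ) * (u z)^(t-1) * U z)) z :=
        (hasDerivAt_id z).mul ((hudd z hzIoo).pow t)
      have hODEz := hODE z hzIoo
      have hut : (u z)^(t-1) * u z = (u z)^t := by
        rw [← pow_succ]
        congr 1
        omega
      have hgoal : U z / u z = 1 * (u z)^t + z * ((t:ℝ) * (u z)^(t-1) * U z) := by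
        rw [div_eq_iff hne]
        symm
        calc (1 * (u z)^t + z * ((t:ℝ) * (u z)^(t-1) * U z)) * u z
            = (u z)^t * u z + (t:ℝ)*z*U z*((u z)^(t-1) * u z) := by ring
          _ = (u z)^t * u z + (t:ℝ)*z*U z*(u z)^t := by rw [hut]
          _ = (u z)^(t+1) + (t:ℝ)*z*(u z)^t*U z := by rw [← pow_succ]; ring
          _ = U z := by linear_combination -hODEz
      have hcomb := hlogd.sub hpd
      rw [show U z / u z - (1 * (u z)^t + z * ((t:ℝ) * (u z)^(t-1) * U z)) = 0 from
        sub_eq_zero.mpr hgoal] at hcomb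
      exact hcomb
    have hz0nn : 0 ≤ d * Real.exp (-((t:ℝ)*d)) := le_of_lt hz00
    have hconst := constant_of_has_deriv_right_zero
      (f := fun z => Real.log (u z) - z * (u z)^t)
      (a := 0) (b := d * Real.exp (-((t:ℝ)*d)))
      (fun z hz => ((hFd z hz).continuousAt).continuousWithinAt)
      (fun z hz => ((hFd z (Set.mem_Icc_of_Ico hz)).hasDerivWithinAt))
    intro z hz
    have hF : Real.log (u z) - z * (u z)^t = Real.log (u 0) - 0 * (u 0)^t := hconst z hz
    have hu0 : u 0 = 1 := by
      rw [hu_def]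
      show (∑' k, coA (t:ℝ) 1 k * (0:ℝ)^k) = 1
      rw [tsum_eq_single 0 (fun k hk => by
        rw [zero_pow hk, mul_zero])]
      rw [coA_zero, pow_zero, mul_one]
    rw [hu0] at hF
    simp only [Real.log_one, zero_mul, sub_zero] at hF
    linarith [hF]
  -- the ψ function and monotonicity
  have hψd : ∀ s : ℝ, HasDerivAt (fun s : ℝ => s * Real.exp (-((t:ℝ)*s)))
      ((1-(t:ℝ)*s)*Real.exp (-((t:ℝ)*s))) s := by
    intro s
    have h1 : HasDerivAt (fun s:ℝ => -((t:ℝ)*s)) (-((t:ℝ)*1)) s :=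
      (((hasDerivAt_id s).const_mul ((t:ℝ)))).neg
    have h2 := h1.exp
    have h3 := (hasDerivAt_id s).fun_mul h2
    convert h3 using 1
    · rfl
    · rfl
    show (1 - (t:ℝ)*s) * Real.exp (-((t:ℝ)*s)) = 1 * Real.exp (-((t:ℝ)*s)) + s * (Real.exp (-((t:ℝ)*s)) * -((t:ℝ)*1))
    ring
    rfl
  have hψcont : Continuous (fun s : ℝ => s * Real.exp (-((t:ℝ)*s))) :=
    continuous_iff_continuousAt.mpr (fun s => (hψd s).continuousAt)
  have hd1τ : d < 1/(t:ℝ) := by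
    rw [lt_div_iff₀ hτ0]
    linarith [htd]
  have hψmono : StrictMonoOn (fun s : ℝ => s * Real.exp (-((t:ℝ)*s)))
      (Set.Icc 0 (1/(t:ℝ))) := by
    apply strictMonoOn_of_deriv_pos (convex_Icc _ _) hψcont.continuousOn
    intro s hs
    rw [interior_Icc] at hs
    rw [(hψd s).deriv]
    have h1 : (t:ℝ)*s < 1 := by
      have := hs.2
      rw [lt_div_iff₀ hτ0] at this
      linarith
    have h2 : 0 < 1 - (t:ℝ)*s := by linarith
    exact mul_pos h2 (Real.exp_pos _)
  -- the w function
  have hψmem : ∀ d' ∈ Set.Icc (0:ℝ) d, d' * Real.exp (-((t:ℝ)*d')) ∈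
      Set.Icc (0:ℝ) (d * Real.exp (-((t:ℝ)*d))) := by
    intro d' hd'
    constructor
    · exact mul_nonneg hd'.1 (le_of_lt (Real.exp_pos _))
    · rcases eq_or_lt_of_le hd'.2 with heq | hlt
      · rw [heq]
      · exact le_of_lt (hψmono ⟨hd'.1, by linarith [hd'.2]⟩
          ⟨le_of_lt hd, le_of_lt hd1τ⟩ hlt)
  have hψIoo : ∀ d' ∈ Set.Icc (0:ℝ) d, d' * Real.exp (-((t:ℝ)*d')) ∈ Set.Ioo (-ρ) ρ := by
    intro d' hd'
    have h := hψmem d' hd'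
    exact ⟨by linarith [h.1], lt_of_le_of_lt h.2 hz0ρ⟩
  have hupos : ∀ d' ∈ Set.Icc (0:ℝ) d, 0 < u (d' * Real.exp (-((t:ℝ)*d'))) := by
    intro d' hd'
    have h := hψmem d' hd'
    linarith [hu_ge1 _ h.1 (le_trans h.2 hz0ρ')]
  have hwcont : ContinuousOn (fun d' => Real.log (u (d' * Real.exp (-((t:ℝ)*d')))))
      (Set.Icc 0 d) := by
    intro d' hd'
    apply ContinuousAt.continuousWithinAt
    have hlog := Real.continuousAt_log (ne_of_gt (hupos d' hd'))
    have hucont := (hudd _ (hψIoo d' hd')).continuousAt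
    have hψc := (hψd d').continuousAt
    have hcomp : ContinuousAt (fun d' : ℝ => u (d' * Real.exp (-((t:ℝ)*d')))) d' :=
      ContinuousAt.comp (g := u) (f := fun d' : ℝ => d' * Real.exp (-((t:ℝ)*d'))) hucont hψc
    exact ContinuousAt.comp (g := Real.log)
      (f := fun d' : ℝ => u (d' * Real.exp (-((t:ℝ)*d')))) hlog hcomp
  have hu0' : u 0 = 1 := by
    rw [hu_def]
    show (∑' k, coA (t:ℝ) 1 k * (0:ℝ)^k) = 1
    rw [tsum_eq_single 0 (fun k hk => by rw [zero_pow hk, mul_zero])]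
    rw [coA_zero, pow_zero, mul_one]
  have hw0 : Real.log (u (0 * Real.exp (-((t:ℝ)*0)))) = 0 := by
    rw [zero_mul, hu0', Real.log_one]
  -- w d' satisfies w = ψ d' * exp(τ w)
  have hwid : ∀ d' ∈ Set.Icc (0:ℝ) d,
      Real.log (u (d' * Real.exp (-((t:ℝ)*d'))))
        = (d' * Real.exp (-((t:ℝ)*d'))) *
          Real.exp ((t:ℝ) * Real.log (u (d' * Real.exp (-((t:ℝ)*d'))))) := by
    intro d' hd'
    have h1 := hlogid _ (hψmem d' hd')
    have h2 : (u (d' * Real.exp (-((t:ℝ)*d'))))^t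
        = Real.exp ((t:ℝ) * Real.log (u (d' * Real.exp (-((t:ℝ)*d'))))) := by
      rw [Real.exp_nat_mul, Real.exp_log (hupos d' hd')]
    rw [h2] at h1
    exact h1
  have hse : ∀ e' : ℝ, 0 ≤ e' → (t:ℝ)*e' < 1 →
      (t:ℝ) * Real.exp 1 * (e' * Real.exp (-((t:ℝ)*e'))) < 1 := by
    intro e' he0 he1
    have heq : (t:ℝ) * Real.exp 1 * (e' * Real.exp (-((t:ℝ)*e')))
        = ((t:ℝ)*e') * Real.exp (1 - (t:ℝ)*e') := by
      rw [Real.exp_sub, Real.exp_neg]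
      field_simp
    rw [heq]
    exact se_lt_one he1
  have hwlt : ∀ d' ∈ Set.Icc (0:ℝ) d,
      Real.log (u (d' * Real.exp (-((t:ℝ)*d')))) < 1/(t:ℝ) := by
    by_contra hcon
    push_neg at hcon
    obtain ⟨d1, hd1mem, hd1ge⟩ := hcon
    have hIVT := intermediate_value_Icc hd1mem.1
      (hwcont.mono (fun x hx => ⟨hx.1, le_trans hx.2 hd1mem.2⟩))
    have hmemI : 1/(t:ℝ) ∈ Set.Icc (Real.log (u (0 * Real.exp (-((t:ℝ)*0)))))
        (Real.log (u (d1 * Real.exp (-((t:ℝ)*d1))))) := by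
      rw [hw0]
      exact ⟨by positivity, hd1ge⟩
    obtain ⟨d2, hd2mem, hd2⟩ := hIVT hmemI
    have hd2' : d2 ∈ Set.Icc (0:ℝ) d := ⟨hd2mem.1, le_trans hd2mem.2 hd1mem.2⟩
    have hd2b : Real.log (u (d2 * Real.exp (-((t:ℝ)*d2)))) = 1/(t:ℝ) := hd2
    have h1 := hwid d2 hd2'
    rw [hd2b] at h1
    rw [show (t:ℝ)*(1/(t:ℝ)) = 1 from by field_simp] at h1
    have h3 : (t:ℝ) * Real.exp 1 * (d2 * Real.exp (-((t:ℝ)*d2))) < 1 := by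
      apply hse d2 hd2'.1
      calc (t:ℝ)*d2 ≤ (t:ℝ)*d :=
            mul_le_mul_of_nonneg_left hd2'.2 (le_of_lt hτ0)
        _ < 1 := htd
    have h4 : (t:ℝ) * Real.exp 1 * (d2 * Real.exp (-((t:ℝ)*d2))) = 1 := by
      rw [show (t:ℝ) * Real.exp 1 * (d2 * Real.exp (-((t:ℝ)*d2)))
          = (t:ℝ) * (d2 * Real.exp (-((t:ℝ)*d2)) * Real.exp 1) from by ring, ← h1]
      field_simp
    linarith
  -- ψ (w d') = ψ d', hence w d' = d'
  have hψw : ∀ d' ∈ Set.Icc (0:ℝ) d,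
      (Real.log (u (d' * Real.exp (-((t:ℝ)*d'))))) *
        Real.exp (-((t:ℝ) * Real.log (u (d' * Real.exp (-((t:ℝ)*d'))))))
        = d' * Real.exp (-((t:ℝ)*d')) := by
    intro d' hd'
    have h1 := hwid d' hd'
    calc (Real.log (u (d' * Real.exp (-((t:ℝ)*d'))))) *
          Real.exp (-((t:ℝ) * Real.log (u (d' * Real.exp (-((t:ℝ)*d'))))))
        = ((d' * Real.exp (-((t:ℝ)*d'))) *
            Real.exp ((t:ℝ) * Real.log (u (d' * Real.exp (-((t:ℝ)*d')))))) *
          Real.exp (-((t:ℝ) * Real.log (u (d' * Real.exp (-((t:ℝ)*d')))))) := by rw [← h1]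
      _ = (d' * Real.exp (-((t:ℝ)*d'))) *
          (Real.exp ((t:ℝ) * Real.log (u (d' * Real.exp (-((t:ℝ)*d'))))) *
           Real.exp (-((t:ℝ) * Real.log (u (d' * Real.exp (-((t:ℝ)*d'))))))) := by ring
      _ = d' * Real.exp (-((t:ℝ)*d')) := by
          rw [← Real.exp_add]
          norm_num
  have hwd : Real.log (u (d * Real.exp (-((t:ℝ)*d)))) = d := by
    have hdmem : d ∈ Set.Icc (0:ℝ) d := ⟨le_of_lt hd, le_refl d⟩
    have h1 : Real.log (u (d * Real.exp (-((t:ℝ)*d)))) ∈ Set.Icc (0:ℝ) (1/(t:ℝ)) := by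
      constructor
      · apply Real.log_nonneg
        have h := hψmem d hdmem
        exact hu_ge1 _ h.1 (le_trans h.2 hz0ρ')
      · exact le_of_lt (hwlt d hdmem)
    have h2 : d ∈ Set.Icc (0:ℝ) (1/(t:ℝ)) := ⟨le_of_lt hd, le_of_lt hd1τ⟩
    exact hψmono.injOn h1 h2 (hψw d hdmem)
  have hz0absρ : |d * Real.exp (-((t:ℝ)*d))| ≤ ρ := by
    rw [abs_of_pos hz00]; exact hz0ρ'
  have huval : u (d * Real.exp (-((t:ℝ)*d))) = Real.exp d := by
    have h := hψmem d ⟨le_of_lt hd, le_refl d⟩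
    have hpos : 0 < u (d * Real.exp (-((t:ℝ)*d))) := by
      linarith [hu_ge1 _ h.1 (le_trans h.2 hz0ρ')]
    calc u (d * Real.exp (-((t:ℝ)*d)))
        = Real.exp (Real.log (u (d * Real.exp (-((t:ℝ)*d))))) := (Real.exp_log hpos).symm
      _ = Real.exp d := by rw [hwd]
  have hvval : v (d * Real.exp (-((t:ℝ)*d))) = Real.exp (((t:ℝ)+1)*d) := by
    rw [hv_upow _ hz0absρ, huval, ← Real.exp_nat_mul]
    congr 1
    push_cast
    ring
  refine ⟨hsA1 _ hz0absρ, hsA2 _ hz0absρ, ?_, ?_⟩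
  · rw [← huval, hu_def]
  · rw [← hvval, hv_def]

/-- for `r ≥ 2` and `0 ≤ d` with `(r−1)d < 1`,
`Σ_{k=0}^∞ π_{k,r,d}/(1+(r−1)k) = 1 − (r−1)d/r`; equivalently
`Σ_{k=0}^∞ (1+(r−1)k)^{k−2}·d^k·e^{−d(1+(r−1)k)}/k! = 1 − (r−1)d/r`. -/
theorem stmt6 (r : ℕ) (hr : 2 ≤ r) (d : ℝ) (hd : 0 ≤ d) (hd1 : ((r : ℝ) - 1) * d < 1) :
    (∑' k : ℕ, pik r k d / ((1 + (r - 1) * k : ℕ) : ℝ)) = 1 - ((r : ℝ) - 1) * d / r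
    ∧ (∑' k : ℕ, ((1 + (r - 1) * k : ℕ) : ℝ) ^ ((k : ℤ) - 2) * d ^ k *
          Real.exp (-(d * ((1 + (r - 1) * k : ℕ) : ℝ))) / (Nat.factorial k))
        = 1 - ((r : ℝ) - 1) * d / r := by
  -- first conjunct reduces termwise to the second
  have hSpos : ∀ k : ℕ, (0:ℝ) < ((1 + (r - 1) * k : ℕ) : ℝ) := by
    intro k
    have : 1 ≤ 1 + (r-1)*k := by omega
    exact_mod_cast Nat.lt_of_lt_of_le Nat.zero_lt_one this
  have hterm_eq : ∀ k : ℕ, pik r k d / ((1 + (r - 1) * k : ℕ) : ℝ)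
      = ((1 + (r - 1) * k : ℕ) : ℝ) ^ ((k : ℤ) - 2) * d ^ k *
          Real.exp (-(d * ((1 + (r - 1) * k : ℕ) : ℝ))) / (Nat.factorial k) := by
    intro k
    have hne : ((1 + (r - 1) * k : ℕ) : ℝ) ≠ 0 := ne_of_gt (hSpos k)
    have hz : ((1 + (r - 1) * k : ℕ) : ℝ) ^ ((k : ℤ) - 2)
        = ((1 + (r - 1) * k : ℕ) : ℝ) ^ ((k : ℤ) - 1) * (((1 + (r - 1) * k : ℕ) : ℝ))⁻¹ := by
      rw [show (k:ℤ) - 2 = ((k:ℤ) - 1) - 1 from by ring]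
      exact zpow_sub_one₀ hne _
    rw [pik, hz]
    field_simp
  have hmain : (∑' k : ℕ, ((1 + (r - 1) * k : ℕ) : ℝ) ^ ((k : ℤ) - 2) * d ^ k *
          Real.exp (-(d * ((1 + (r - 1) * k : ℕ) : ℝ))) / (Nat.factorial k))
        = 1 - ((r : ℝ) - 1) * d / r := by
    rcases eq_or_lt_of_le hd with rfl | hd0
    · -- d = 0
      rw [tsum_eq_single 0 (fun k hk => by
        rw [zero_pow hk]
        simp)]
      norm_num
    · -- d > 0
      set t : ℕ := r - 1 with ht_def
      have ht : 1 ≤ t := by omega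
      have hτeq : ((t:ℕ):ℝ) = (r:ℝ) - 1 := by
        rw [ht_def]
        push_cast [Nat.cast_sub (by omega : 1 ≤ r)]
        ring
      have htd : (t:ℝ)*d < 1 := by rw [hτeq]; exact hd1
      obtain ⟨hs1, hs2, hv1, hv2⟩ := key t ht d hd0 htd
      have hτpos : (0:ℝ) < (t:ℝ) := by
        have : (1:ℝ) ≤ (t:ℝ) := by exact_mod_cast ht
        linarith
      -- the A-terms
      have hcast : ∀ k:ℕ, ((1 + (r-1)*k : ℕ):ℝ) = 1 + ((t:ℕ):ℝ)*k := by
        intro k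
        rw [ht_def]
        push_cast [Nat.cast_sub (by omega : 1 ≤ r)]
        ring
      have hAk : ∀ k : ℕ, ((1 + (r-1)*k : ℕ):ℝ)^((k:ℤ)-1) * d^k *
            Real.exp (-(d*((1 + (r-1)*k : ℕ):ℝ))) / (k.factorial:ℝ)
          = Real.exp (-d) * (coA (t:ℝ) 1 k * (d*Real.exp (-((t:ℝ)*d)))^k) := by
        intro k
        rw [hcast k]
        match k with
        | 0 => simp [coA, cAb]
        | (k+1) =>
          have he : (1 + ((t:ℕ):ℝ)*((k+1:ℕ):ℝ))^(((k+1:ℕ):ℤ)-1)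
              = (1 + ((t:ℕ):ℝ)*((k+1:ℕ):ℝ))^(k:ℕ) := by
            rw [show ((k+1:ℕ):ℤ)-1 = (k:ℤ) from by push_cast; ring, zpow_natCast]
          rw [he]
          have hexp : Real.exp (-(d*(1 + ((t:ℕ):ℝ)*((k+1:ℕ):ℝ))))
              = Real.exp (-d) * Real.exp (-((t:ℝ)*d))^(k+1) := by
            rw [← Real.exp_nat_mul, ← Real.exp_add]
            congr 1
            push_cast
            ring
          rw [hexp]
          simp only [coA, cAb]
          rw [mul_pow]
          push_cast
          ring
      -- the B-terms
      have hBk : ∀ i : ℕ, ((i+1:ℕ):ℝ) * (((1 + (r-1)*(i+1) : ℕ):ℝ)^(((i+1:ℕ):ℤ)-2) * d^(i+1) *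
            Real.exp (-(d*((1 + (r-1)*(i+1) : ℕ):ℝ))) / ((i+1).factorial:ℝ))
          = (Real.exp (-d) * (d*Real.exp (-((t:ℝ)*d))) / ((t:ℝ)+1)) *
            (coA (t:ℝ) ((t:ℝ)+1) i * (d*Real.exp (-((t:ℝ)*d)))^i) := by
        intro i
        rw [hcast (i+1)]
        have hfac : (((i+1).factorial:ℕ):ℝ) = ((i+1:ℕ):ℝ) * ((i.factorial:ℕ):ℝ) := by
          rw [Nat.factorial_succ]; push_cast; ring
        have hexp : Real.exp (-(d*(1 + ((t:ℕ):ℝ)*((i+1:ℕ):ℝ))))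
            = Real.exp (-d) * (Real.exp (-((t:ℝ)*d)) * Real.exp (-((t:ℝ)*d))^i) := by
          rw [← Real.exp_nat_mul, ← Real.exp_add, ← Real.exp_add]
          congr 1
          push_cast
          ring
        have htne : ((t:ℝ)+1) ≠ 0 := by positivity
        have hine : ((i+1:ℕ):ℝ) ≠ 0 := by positivity
        have hfne : ((i.factorial:ℕ):ℝ) ≠ 0 := by
          have : (0:ℝ) < (i.factorial:ℝ) := by exact_mod_cast i.factorial_pos
          linarith
        match i with
        | 0 =>
          -- exponent (1:ℤ)-2 = -1
          have he : (1 + ((t:ℕ):ℝ)*((0+1:ℕ):ℝ))^(((0+1:ℕ):ℤ)-2)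
              = (1 + ((t:ℕ):ℝ))⁻¹ := by
            norm_num
          rw [he] at *
          rw [hexp]
          simp only [coA, cAb]
          norm_num
          rw [show (1:ℝ) + (t:ℝ) = (t:ℝ)+1 from by ring]
          field_simp
        | (i+1) =>
          have he : (1 + ((t:ℕ):ℝ)*((i+1+1:ℕ):ℝ))^(((i+1+1:ℕ):ℤ)-2)
              = (1 + ((t:ℕ):ℝ)*((i+1+1:ℕ):ℝ))^(i:ℕ) := by
            rw [show ((i+1+1:ℕ):ℤ)-2 = (i:ℤ) from by push_cast; ring, zpow_natCast]
          rw [he, hexp]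
          simp only [coA, cAb]
          have hbase : 1 + ((t:ℕ):ℝ)*((i+1+1:ℕ):ℝ) = ((t:ℝ)+1) + (t:ℝ)*((i+1:ℕ):ℝ) := by
            push_cast; ring
          rw [hbase]
          rw [Nat.factorial_succ (i+1)]
          rw [mul_pow]
          push_cast
          have hf2 : ((i+1).factorial:ℝ) ≠ 0 := by
            have : (0:ℝ) < ((i+1).factorial:ℝ) := by exact_mod_cast (i+1).factorial_pos
            linarith
          field_simp
          ring
      -- summability and sums
      have hsA : Summable (fun k => Real.exp (-d) * (coA (t:ℝ) 1 k * (d*Real.exp (-((t:ℝ)*d)))^k)) :=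
        hs1.mul_left _
      have hSumA : (∑' k, Real.exp (-d) * (coA (t:ℝ) 1 k * (d*Real.exp (-((t:ℝ)*d)))^k)) = 1 := by
        rw [tsum_mul_left, hv1, ← Real.exp_add]
        norm_num
      -- define B
      set B : ℕ → ℝ := fun k => (k:ℝ) * (((1 + (r-1)*k : ℕ):ℝ)^((k:ℤ)-2) * d^k *
            Real.exp (-(d*((1 + (r-1)*k : ℕ):ℝ))) / (k.factorial:ℝ)) with hB_def
      have hB0 : B 0 = 0 := by rw [hB_def]; norm_num
      have hBsucc : ∀ i : ℕ, B (i+1) = (Real.exp (-d) * (d*Real.exp (-((t:ℝ)*d))) / ((t:ℝ)+1)) *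
            (coA (t:ℝ) ((t:ℝ)+1) i * (d*Real.exp (-((t:ℝ)*d)))^i) := by
        intro i
        rw [hB_def]
        exact hBk i
      have hsB : Summable B := by
        rw [← summable_nat_add_iff 1]
        apply Summable.congr (hs2.mul_left
          (Real.exp (-d) * (d*Real.exp (-((t:ℝ)*d))) / ((t:ℝ)+1)))
        intro i
        exact (hBsucc i).symm
      have hSumB : (∑' k, B k) = d / ((t:ℝ)+1) := by
        rw [Summable.tsum_eq_zero_add hsB, hB0, zero_add, tsum_congr hBsucc, tsum_mul_left, hv2]
        rw [show Real.exp (-d) * (d * Real.exp (-((t:ℝ)*d))) / ((t:ℝ)+1) * Real.exp (((t:ℝ)+1)*d)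
            = d * (Real.exp (-d) * Real.exp (-((t:ℝ)*d)) * Real.exp (((t:ℝ)+1)*d)) / ((t:ℝ)+1)
          from by ring, ← Real.exp_add, ← Real.exp_add,
          show -d + -((t:ℝ)*d) + ((t:ℝ)+1)*d = 0 from by ring, Real.exp_zero, mul_one]
      -- termwise decomposition
      have hT : ∀ k : ℕ, ((1 + (r-1)*k : ℕ):ℝ)^((k:ℤ)-2) * d^k *
            Real.exp (-(d*((1 + (r-1)*k : ℕ):ℝ))) / (k.factorial:ℝ)
          = Real.exp (-d) * (coA (t:ℝ) 1 k * (d*Real.exp (-((t:ℝ)*d)))^k) - (t:ℝ) * B k := by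
        intro k
        rw [← hAk k]
        simp only [hB_def]
        have hne : ((1 + (r - 1) * k : ℕ) : ℝ) ≠ 0 := ne_of_gt (hSpos k)
        have hz2 : ((1 + (r - 1) * k : ℕ) : ℝ) ^ ((k : ℤ) - 2)
            = ((1 + (r - 1) * k : ℕ) : ℝ) ^ ((k : ℤ) - 1) * (((1 + (r - 1) * k : ℕ) : ℝ))⁻¹ := by
          rw [show (k:ℤ) - 2 = ((k:ℤ) - 1) - 1 from by ring]
          exact zpow_sub_one₀ hne _
        rw [hz2]
        have hS : ((1 + (r - 1) * k : ℕ) : ℝ) = 1 + ((t:ℕ):ℝ)*k := hcast k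
        rw [hS]
        generalize (1 + ((t:ℕ):ℝ)*(k:ℝ))^((k:ℤ)-1) = P
        have hne' : (1:ℝ) + (t:ℝ)*k ≠ 0 := by positivity
        have hfne : (k.factorial:ℝ) ≠ 0 := by
          have : (0:ℝ) < (k.factorial:ℝ) := by exact_mod_cast k.factorial_pos
          linarith
        field_simp
        ring
      calc (∑' k : ℕ, ((1 + (r - 1) * k : ℕ) : ℝ) ^ ((k : ℤ) - 2) * d ^ k *
              Real.exp (-(d * ((1 + (r - 1) * k : ℕ) : ℝ))) / (Nat.factorial k))
          = ∑' k : ℕ, (Real.exp (-d) * (coA (t:ℝ) 1 k * (d*Real.exp (-((t:ℝ)*d)))^k)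
              - (t:ℝ) * B k) := tsum_congr hT
        _ = (∑' k, Real.exp (-d) * (coA (t:ℝ) 1 k * (d*Real.exp (-((t:ℝ)*d)))^k))
              - ∑' k, (t:ℝ) * B k := Summable.tsum_sub hsA (hsB.mul_left _)
        _ = 1 - (t:ℝ) * (d / ((t:ℝ)+1)) := by rw [hSumA, tsum_mul_left, hSumB]
        _ = 1 - ((r : ℝ) - 1) * d / r := by
            rw [hτeq]
            have : (r:ℝ) - 1 + 1 = (r:ℝ) := by ring
            rw [this]
            ring
  exact ⟨by rw [tsum_congr hterm_eq, hmain], hmain⟩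
end

section
/- Fix an integer r ≥ 2, let d = d(n) satisfy d(n) → ∞ and log n − d(n) → ∞ as n → ∞, set p = p(n) = d(n)·(r−1)!/n^{r−1}, and set s_1 = s_1(n) = 100·max(n·e^{−d}, log n). Then Pr(L1(H^r(n,p)) ≤ n − s_1) = o(n^{−100}) as n → ∞. -/
open Finset Filter Real

abbrev Edge (r n : ℕ) : Type := {A : Finset (Fin n) // A.card = r}

abbrev Config (r n : ℕ) : Type := Edge r n → Bool

noncomputable def pweight (r n : ℕ) (p : ℝ) (ω : Config r n) : ℝ :=
  ∏ e : Edge r n, (if ω e then p else 1 - p)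

open Classical in
noncomputable def prob (r n : ℕ) (p : ℝ) (E : Set (Config r n)) : ℝ :=
  ∑ ω : Config r n, if ω ∈ E then pweight r n p ω else 0

noncomputable def expect (r n : ℕ) (p : ℝ) (f : Config r n → ℝ) : ℝ :=
  ∑ ω : Config r n, pweight r n p ω * f ω

noncomputable def pvar (r n : ℕ) (p : ℝ) (f : Config r n → ℝ) : ℝ :=
  expect r n p (fun ω => (f ω - expect r n p f)^2)

def Touch (r n : ℕ) (ω : Config r n) (u v : Fin n) : Prop :=
  ∃ e : Edge r n, ω e = true ∧ u ∈ e.val ∧ v ∈ e.val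

open Classical in
noncomputable def component (r n : ℕ) (ω : Config r n) (v : Fin n) : Finset (Fin n) :=
  Finset.univ.filter (fun u => Relation.EqvGen (Touch r n ω) u v)

noncomputable def components (r n : ℕ) (ω : Config r n) : Finset (Finset (Fin n)) :=
  Finset.univ.image (component r n ω)

noncomputable def L1 (r n : ℕ) (ω : Config r n) : ℕ :=
  Finset.univ.sup (fun v => (component r n ω v).card)

open Classical in
noncomputable def compEdgeCount (r n : ℕ) (ω : Config r n) (C : Finset (Fin n)) : ℕ :=
  (Finset.univ.filter (fun e : Edge r n => ω e = true ∧ e.val ⊆ C)).card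

open Classical in
noncomputable def M1 (r n : ℕ) (ω : Config r n) : ℕ :=
  if h : (Finset.univ.filter (fun v : Fin n => (component r n ω v).card = L1 r n ω)).Nonempty
  then compEdgeCount r n ω (component r n ω ((Finset.univ.filter
      (fun v : Fin n => (component r n ω v).card = L1 r n ω)).min' h))
  else 0

set_option maxHeartbeats 1600000
open Finset Filter Real
section
variable {r n : ℕ} {p : ℝ}

lemma pweight_nonneg {r n : ℕ} {p : ℝ} (hp0 : 0 ≤ p) (hp1 : p ≤ 1) (ω : Config r n) :
    0 ≤ pweight r n p ω :=
  Finset.prod_nonneg fun e _ => by split <;> linarith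

open Classical in
lemma prob_nonneg {r n : ℕ} {p : ℝ} (hp0 : 0 ≤ p) (hp1 : p ≤ 1) (E : Set (Config r n)) :
    0 ≤ prob r n p E :=
  Finset.sum_nonneg fun ω _ => by
    split
    · exact pweight_nonneg hp0 hp1 ω
    · exact le_refl 0

open Classical in
lemma sum_config_prod (f : Edge r n → Bool → ℝ) :
    ∑ ω : Config r n, ∏ e : Edge r n, f e (ω e) = ∏ e : Edge r n, (f e true + f e false) := by
  have h := Finset.prod_univ_sum (fun _ : Edge r n => (Finset.univ : Finset Bool)) f
  rw [Fintype.piFinset_univ] at h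
  rw [← h]
  refine Finset.prod_congr rfl fun e _ => ?_
  rw [Fintype.sum_bool]

open Classical in
lemma prob_allFalse (S : Finset (Edge r n)) :
    prob r n p {ω | ∀ e ∈ S, ω e = false} = (1 - p) ^ S.card := by
  classical
  have norm : prob r n p {ω | ∀ e ∈ S, ω e = false}
      = ∑ ω : Config r n, (if (∀ e ∈ S, ω e = false) then pweight r n p ω else 0) := by
    unfold prob
    exact Finset.sum_congr rfl fun ω _ => by congr 1
  rw [norm]
  unfold pweight
  have key : ∀ ω : Config r n,
      (if ∀ e ∈ S, ω e = false
        then ∏ e : Edge r n, (if ω e then p else 1 - p) else 0)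
      = ∏ e : Edge r n,
          (fun e (b : Bool) => if e ∈ S then (if b then 0 else 1 - p)
            else (if b then p else 1 - p)) e (ω e) := by
    intro ω
    by_cases h : ∀ e ∈ S, ω e = false
    · rw [if_pos h]
      refine Finset.prod_congr rfl fun e _ => ?_
      by_cases heS : e ∈ S
      · rw [h e heS]; simp [heS]
      · simp [heS]
    · rw [if_neg h]
      push_neg at h
      obtain ⟨e₀, he₀S, he₀⟩ := h
      rw [eq_comm]
      apply Finset.prod_eq_zero (Finset.mem_univ e₀)
      simp only [ne_eq, Bool.not_eq_false] at he₀
      simp [he₀S, he₀]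
  simp only [key]
  refine (sum_config_prod (fun e (b:Bool) => if e ∈ S then (if b then (0:ℝ) else 1 - p)
    else (if b then p else 1 - p))).trans ?_
  have h2 : ∀ e : Edge r n,
      ((if e ∈ S then (if (true:Bool) then (0:ℝ) else 1 - p) else (if (true:Bool) then p else 1 - p))
        + (if e ∈ S then (if (false:Bool) then (0:ℝ) else 1 - p) else (if (false:Bool) then p else 1 - p)))
      = if e ∈ S then (1-p) else 1 := by
    intro e; by_cases heS : e ∈ S <;> simp [heS]
  rw [Finset.prod_congr rfl fun e _ => h2 e, Finset.prod_ite_mem,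
    Finset.univ_inter, Finset.prod_const]
open Classical in
lemma prob_union_bound {r n : ℕ} {p : ℝ} (hp0 : 0 ≤ p) (hp1 : p ≤ 1)
    {ι : Type*} (𝒜 : Finset ι) (E : Set (Config r n)) (F : ι → Set (Config r n))
    (h : ∀ ω ∈ E, ∃ A ∈ 𝒜, ω ∈ F A) :
    prob r n p E ≤ ∑ A ∈ 𝒜, prob r n p (F A) := by
  classical
  unfold prob
  have hle : (∑ ω : Config r n, if ω ∈ E then pweight r n p ω else 0)
      ≤ ∑ ω : Config r n, ∑ A ∈ 𝒜, (if ω ∈ F A then pweight r n p ω else 0) := by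
    refine Finset.sum_le_sum fun ω _ => ?_
    by_cases hE : ω ∈ E
    · obtain ⟨A₀, hA₀, hωA₀⟩ := h ω hE
      rw [if_pos hE]
      calc pweight r n p ω = (if ω ∈ F A₀ then pweight r n p ω else 0) := by rw [if_pos hωA₀]
      _ ≤ ∑ A ∈ 𝒜, (if ω ∈ F A then pweight r n p ω else 0) := by
          refine Finset.single_le_sum (f := fun A => (if ω ∈ F A then pweight r n p ω else 0)) (fun A _ => ?_) hA₀
          split
          · exact pweight_nonneg hp0 hp1 ω
          · exact le_refl 0
    · rw [if_neg hE]
      refine Finset.sum_nonneg fun A _ => ?_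
      split
      · exact pweight_nonneg hp0 hp1 ω
      · exact le_refl 0
  refine hle.trans_eq ?_
  exact Finset.sum_comm


end
def Closed (r n : ℕ) (ω : Config r n) (A : Finset (Fin n)) : Prop :=
  ∀ u v : Fin n, Relation.EqvGen (Touch r n ω) u v → v ∈ A → u ∈ A

open Classical in
noncomputable def cross (r n : ℕ) (A : Finset (Fin n)) : Finset (Edge r n) :=
  Finset.univ.filter (fun e => (e.val ∩ A).Nonempty ∧ (e.val \ A).Nonempty)

lemma closed_univ {r n : ℕ} (ω : Config r n) : Closed r n ω Finset.univ :=
  fun _ _ _ _ => Finset.mem_univ _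

lemma closed_compl {r n : ℕ} {ω : Config r n} {A : Finset (Fin n)} (hA : Closed r n ω A) :
    Closed r n ω Aᶜ := by
  intro u v huv hv
  rw [Finset.mem_compl] at hv ⊢
  intro hu
  exact hv (hA v u (Relation.EqvGen.symm _ _ huv) hu)

lemma closed_component {r n : ℕ} (ω : Config r n) (v : Fin n) :
    Closed r n ω (component r n ω v) := by
  intro a b hab hb
  classical
  simp only [component, Finset.mem_filter, Finset.mem_univ, true_and] at hb ⊢
  exact Relation.EqvGen.trans _ _ _ hab hb

lemma mem_component_self {r n : ℕ} (ω : Config r n) (v : Fin n) :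
    v ∈ component r n ω v := by
  classical
  simp only [component, Finset.mem_filter, Finset.mem_univ, true_and]
  exact Relation.EqvGen.refl v

lemma component_subset_closed {r n : ℕ} {ω : Config r n} {X : Finset (Fin n)}
    (hX : Closed r n ω X) {v : Fin n} (hv : v ∈ X) : component r n ω v ⊆ X := by
  intro u hu
  classical
  simp only [component, Finset.mem_filter, Finset.mem_univ, true_and] at hu
  exact hX u v hu hv

lemma closed_sdiff_component {r n : ℕ} {ω : Config r n} {X : Finset (Fin n)}
    (hX : Closed r n ω X) (v : Fin n) : Closed r n ω (X \ component r n ω v) := by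
  intro a b hab hb
  rw [Finset.mem_sdiff] at hb ⊢
  refine ⟨hX a b hab hb.1, fun ha => hb.2 ?_⟩
  classical
  simp only [component, Finset.mem_filter, Finset.mem_univ, true_and] at ha ⊢
  exact Relation.EqvGen.trans _ _ _ (Relation.EqvGen.symm _ _ hab) ha

lemma card_component_le_L1 {r n : ℕ} (ω : Config r n) (v : Fin n) :
    (component r n ω v).card ≤ L1 r n ω :=
  Finset.le_sup (f := fun v => (component r n ω v).card) (Finset.mem_univ v)

lemma closed_no_cross {r n : ℕ} {ω : Config r n} {A : Finset (Fin n)}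
    (hA : Closed r n ω A) : ∀ e ∈ cross r n A, ω e = false := by
  intro e he
  classical
  simp only [cross, Finset.mem_filter, Finset.mem_univ, true_and] at he
  obtain ⟨⟨u, hu⟩, ⟨w, hw⟩⟩ := he
  rw [Finset.mem_inter] at hu
  rw [Finset.mem_sdiff] at hw
  by_contra hcon
  rw [Bool.not_eq_false] at hcon
  have htouch : Touch r n ω w u := ⟨e, hcon, hw.1, hu.1⟩
  exact hw.2 (hA w u (Relation.EqvGen.rel _ _ htouch) hu.2)

lemma card_cross_ge {r n : ℕ} (hr : 2 ≤ r) (A : Finset (Fin n)) :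
    A.card * ((Aᶜ.card).choose (r-1)) ≤ (cross r n A).card := by
  classical
  set T : Finset (Finset (Fin n)) :=
    (A ×ˢ Aᶜ.powersetCard (r-1)).image (fun q => insert q.1 q.2) with hT
  have hinj : Set.InjOn (fun q : Fin n × Finset (Fin n) => insert q.1 q.2)
      ((A ×ˢ Aᶜ.powersetCard (r-1) : Finset (Fin n × Finset (Fin n))) : Set (Fin n × Finset (Fin n))) := by
    rintro ⟨v, B⟩ hq ⟨v', B'⟩ hq' heq
    simp only [Finset.mem_coe, Finset.mem_product, Finset.mem_powersetCard] at hq hq'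
    have hv : v ∈ A := hq.1
    have hB : B ⊆ Aᶜ := hq.2.1
    have hv' : v' ∈ A := hq'.1
    have hB' : B' ⊆ Aᶜ := hq'.2.1
    simp only at heq
    have hvB : v ∉ B := fun hmem => Finset.mem_compl.mp (hB hmem) hv
    have hvB' : v' ∉ B' := fun hmem => Finset.mem_compl.mp (hB' hmem) hv'
    have hvv : v' = v := by
      have : v' ∈ insert v B := by rw [heq]; exact Finset.mem_insert_self _ _
      rcases Finset.mem_insert.mp this with h | h
      · exact h
      · exact absurd hv' (Finset.mem_compl.mp (hB h))
    have hBB : B = B' := by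
      rw [hvv] at heq hvB'
      have h1 := congrArg (fun s => Finset.erase s v) heq
      simpa [Finset.erase_insert hvB, Finset.erase_insert hvB'] using h1
    rw [Prod.mk.injEq]
    exact ⟨hvv.symm, hBB⟩
  have hTcard : T.card = A.card * ((Aᶜ.card).choose (r-1)) := by
    rw [hT, Finset.card_image_of_injOn hinj, Finset.card_product,
      Finset.card_powersetCard]
  have hTsub : T ⊆ (cross r n A).image Subtype.val := by
    intro X hX
    rw [hT, Finset.mem_image] at hX
    obtain ⟨⟨v, B⟩, hq, hXeq⟩ := hX
    simp only [Finset.mem_product, Finset.mem_powersetCard] at hq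
    have hv : v ∈ A := hq.1
    have hB : B ⊆ Aᶜ := hq.2.1
    have hBc : B.card = r - 1 := hq.2.2
    have hvB : v ∉ B := fun hmem => Finset.mem_compl.mp (hB hmem) hv
    have hcard : X.card = r := by
      rw [← hXeq]
      simp only
      rw [Finset.card_insert_of_notMem hvB, hBc]
      omega
    refine Finset.mem_image.mpr ⟨⟨X, hcard⟩, ?_, rfl⟩
    simp only [cross, Finset.mem_filter, Finset.mem_univ, true_and]
    constructor
    · refine ⟨v, Finset.mem_inter.mpr ⟨?_, hv⟩⟩
      rw [← hXeq]; exact Finset.mem_insert_self _ _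
    · have hBne : B.Nonempty := by
        rw [← Finset.card_pos, hBc]; omega
      obtain ⟨b, hb⟩ := hBne
      refine ⟨b, Finset.mem_sdiff.mpr ⟨?_, Finset.mem_compl.mp (hB hb)⟩⟩
      rw [← hXeq]; exact Finset.mem_insert_of_mem hb
  calc A.card * ((Aᶜ.card).choose (r-1)) = T.card := hTcard.symm
    _ ≤ ((cross r n A).image Subtype.val).card := Finset.card_le_card hTsub
    _ = (cross r n A).card := Finset.card_image_of_injective _ Subtype.val_injective
lemma exists_closed (r n : ℕ) (ω : Config r n) (t : ℕ) (ht1 : 1 ≤ t)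
    (ht4 : 4 * t ≤ n) (hL : L1 r n ω + t ≤ n) :
    ∃ A : Finset (Fin n), Closed r n ω A ∧ t ≤ A.card ∧ 2 * A.card ≤ n := by
  classical
  have hn4 : 4 ≤ n := le_trans (by omega) ht4
  by_cases hbig : n < 2 * L1 r n ω
  · have hne : (Finset.univ : Finset (Fin n)).Nonempty :=
      ⟨⟨0, by omega⟩, Finset.mem_univ _⟩
    obtain ⟨v, _, hv⟩ := Finset.exists_mem_eq_sup Finset.univ hne
      (fun v => (component r n ω v).card)
    have hveq : L1 r n ω = (component r n ω v).card := hv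
    refine ⟨(component r n ω v)ᶜ, closed_compl (closed_component ω v), ?_, ?_⟩ <;>
      rw [Finset.card_compl, Fintype.card_fin] <;> omega
  · push_neg at hbig
    set 𝒮 := Finset.univ.filter
      (fun X : Finset (Fin n) => Closed r n ω X ∧ n ≤ 4 * X.card) with h𝒮
    have h𝒮ne : 𝒮.Nonempty := ⟨Finset.univ, by
      simp only [h𝒮, Finset.mem_filter, Finset.mem_univ, true_and]
      exact ⟨closed_univ ω, by rw [Finset.card_univ, Fintype.card_fin]; omega⟩⟩
    obtain ⟨X, hX𝒮, hXmin⟩ := Finset.exists_min_image 𝒮 Finset.card h𝒮ne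
    simp only [h𝒮, Finset.mem_filter, Finset.mem_univ, true_and] at hX𝒮
    obtain ⟨hXc, hXcard⟩ := hX𝒮
    have hXne : X.Nonempty := Finset.card_pos.mp (by omega)
    obtain ⟨v, hv⟩ := hXne
    have hYsub : component r n ω v ⊆ X := component_subset_closed hXc hv
    have hYcard : 1 ≤ (component r n ω v).card :=
      Finset.card_pos.mpr ⟨v, mem_component_self ω v⟩
    have hYle : (component r n ω v).card ≤ L1 r n ω := card_component_le_L1 ω v
    have hYX : (component r n ω v).card ≤ X.card := Finset.card_le_card hYsub
    have hX' : 4 * (X.card - (component r n ω v).card) < n := by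
      by_contra hcon
      push_neg at hcon
      have hmem : X \ component r n ω v ∈ 𝒮 := by
        simp only [h𝒮, Finset.mem_filter, Finset.mem_univ, true_and]
        refine ⟨closed_sdiff_component hXc v, ?_⟩
        rw [Finset.card_sdiff_of_subset hYsub]; omega
      have := hXmin _ hmem
      rw [Finset.card_sdiff_of_subset hYsub] at this
      omega
    have hXub : 4 * X.card < n + 4 * L1 r n ω := by omega
    have hXn : X.card ≤ n := by
      have := Finset.card_le_univ X
      rwa [Fintype.card_fin] at this
    by_cases h2 : 2 * X.card ≤ n
    · exact ⟨X, hXc, by omega, h2⟩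
    · refine ⟨Xᶜ, closed_compl hXc, ?_, ?_⟩ <;>
        rw [Finset.card_compl, Fintype.card_fin] <;> omega
lemma pow_div_factorial_le_exp (k : ℕ) : ((k:ℝ)) ^ k / (Nat.factorial k : ℝ) ≤ Real.exp k := by
  have h := Real.sum_le_exp_of_nonneg (x := (k:ℝ)) (Nat.cast_nonneg k) (k+1)
  refine le_trans ?_ h
  have hmem : k ∈ Finset.range (k+1) := Finset.mem_range.mpr (by omega)
  refine Finset.single_le_sum (f := fun i => (k:ℝ)^i / (Nat.factorial i : ℝ)) (fun i _ => ?_) hmem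
  positivity

lemma choose_le_exp {n k : ℕ} (hk : 1 ≤ k) (hn : 1 ≤ n) :
    (n.choose k : ℝ) ≤ Real.exp (k * (1 + Real.log n - Real.log k)) := by
  have hkpos : (0:ℝ) < k := by exact_mod_cast hk
  have hnpos : (0:ℝ) < n := by exact_mod_cast hn
  have hfac : (0:ℝ) < (Nat.factorial k : ℝ) := by exact_mod_cast Nat.factorial_pos k
  have h1 : (n.choose k : ℝ) ≤ (n:ℝ)^k / (Nat.factorial k : ℝ) := by
    rw [le_div_iff₀ hfac]
    have := Nat.descFactorial_le_pow n k
    have h2 : (n.descFactorial k : ℝ) ≤ (n:ℝ)^k := by exact_mod_cast this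
    have h3 : (n.descFactorial k : ℝ) = (Nat.factorial k : ℝ) * (n.choose k : ℝ) := by
      exact_mod_cast congrArg (Nat.cast (R := ℝ)) (Nat.descFactorial_eq_factorial_mul_choose n k)
    rw [mul_comm] at h3
    linarith [h2, h3.ge, h3.le]
  have h4 : (n:ℝ)^k / (Nat.factorial k : ℝ)
      = ((n:ℝ)/(k:ℝ))^k * ((k:ℝ)^k / (Nat.factorial k : ℝ)) := by
    field_simp
    rw [← mul_pow, div_mul_cancel₀ _ (ne_of_gt hkpos)]
  have h5 : ((n:ℝ)/(k:ℝ))^k * ((k:ℝ)^k / (Nat.factorial k : ℝ))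
      ≤ ((n:ℝ)/(k:ℝ))^k * Real.exp k := by
    refine mul_le_mul_of_nonneg_left (pow_div_factorial_le_exp k) (by positivity)
  have h6 : ((n:ℝ)/(k:ℝ))^k = Real.exp (k * (Real.log n - Real.log k)) := by
    rw [← Real.log_div (ne_of_gt hnpos) (ne_of_gt hkpos), ← Real.exp_log (x := (n:ℝ)/(k:ℝ)) (by positivity)]
    rw [Real.log_exp, Real.exp_nat_mul]
  calc (n.choose k : ℝ) ≤ (n:ℝ)^k / (Nat.factorial k : ℝ) := h1
    _ = ((n:ℝ)/(k:ℝ))^k * ((k:ℝ)^k / (Nat.factorial k : ℝ)) := h4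
    _ ≤ ((n:ℝ)/(k:ℝ))^k * Real.exp k := h5
    _ = Real.exp (k * (Real.log n - Real.log k)) * Real.exp k := by rw [h6]
    _ = Real.exp (k * (1 + Real.log n - Real.log k)) := by
        rw [← Real.exp_add]; ring_nf

lemma one_sub_pow_le_exp {p : ℝ} (hp0 : 0 ≤ p) (hp1 : p ≤ 1) (m : ℕ) :
    (1 - p) ^ m ≤ Real.exp (-(p * m)) := by
  have h1 : 1 - p ≤ Real.exp (-p) := by
    have := Real.add_one_le_exp (-p)
    linarith
  calc (1-p)^m ≤ (Real.exp (-p))^m := pow_le_pow_left₀ (by linarith) h1 m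
    _ = Real.exp (-(p * m)) := by
        rw [← Real.exp_nat_mul]; ring_nf
lemma log_hundred : (4:ℝ) ≤ Real.log 100 := by
  rw [Real.le_log_iff_exp_le (by norm_num : (0:ℝ) < 100)]
  have h1 : Real.exp 4 = Real.exp 1 ^ (4:ℕ) := by
    rw [← Real.exp_nat_mul]; norm_num
  rw [h1]
  calc Real.exp 1 ^ (4:ℕ) ≤ 2.7182818286 ^ (4:ℕ) := by
        exact pow_le_pow_left₀ (Real.exp_pos 1).le Real.exp_one_lt_d9.le 4
    _ ≤ 100 := by norm_num

lemma term_bound (r : ℕ) (hr : 2 ≤ r) (n k : ℕ) (d p : ℝ)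
    (hp : p = d * (Nat.factorial (r - 1)) / (n : ℝ) ^ (r - 1))
    (hp1 : p ≤ 1)
    (hd2r : 2 * (r:ℝ) ≤ d)
    (hdlog : d ≤ Real.log n)
    (hD : 1 + 2 * Real.log d - d / 3 ^ (r - 1) ≤ -1)
    (hn1 : 2 * (r:ℝ)^2 * d ≤ n)
    (hn2 : 6 * r ≤ n)
    (hn3 : 200 * (Real.log n)^3 ≤ n)
    (hk1 : 100 * Real.log n ≤ (k:ℝ))
    (hk2 : 100 * (n:ℝ) * Real.exp (-d) ≤ (k:ℝ))
    (hk3 : 2 * k ≤ n) :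
    (n.choose k : ℝ) * (1 - p) ^ (k * ((n - k).choose (r - 1)))
      ≤ Real.exp (-200 * Real.log n) := by
  have hrR : (2:ℝ) ≤ (r:ℝ) := by exact_mod_cast hr
  have hn12 : 12 ≤ n := by omega
  have hNpos : (0:ℝ) < n := by positivity
  have hN1 : (1:ℝ) ≤ n := by exact_mod_cast (by omega : 1 ≤ n)
  have hd4 : (4:ℝ) ≤ d := by linarith
  have hlog4 : (4:ℝ) ≤ Real.log n := le_trans hd4 hdlog
  have hkpos : (0:ℝ) < (k:ℝ) := lt_of_lt_of_le (by linarith) hk1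
  have hk1' : 1 ≤ k := by exact_mod_cast Nat.one_le_iff_ne_zero.mpr (by
    intro h; rw [h] at hkpos; simp at hkpos)
  have hkn : k ≤ n := by omega
  have hp0 : 0 ≤ p := by
    rw [hp]
    apply div_nonneg (mul_nonneg (by linarith) (by positivity)) (by positivity)
  set C : ℕ := (n - k).choose (r - 1) with hC
  have hC0 : (0:ℝ) ≤ (C:ℝ) := Nat.cast_nonneg C
  -- combine the two basic bounds
  have hchoose := choose_le_exp hk1' (by omega : 1 ≤ n)
  have hpow := one_sub_pow_le_exp hp0 hp1 (k * C)
  have hmul : (n.choose k : ℝ) * (1 - p) ^ (k * C)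
      ≤ Real.exp ((k:ℝ) * (1 + Real.log n - Real.log k) + -(p * ((k * C : ℕ) : ℝ))) := by
    rw [Real.exp_add]
    exact mul_le_mul hchoose hpow (pow_nonneg (by linarith) _) (Real.exp_pos _).le
  refine le_trans hmul ?_
  rw [Real.exp_le_exp]
  have hcast : ((k * C : ℕ) : ℝ) = (k:ℝ) * (C:ℝ) := by push_cast; ring
  rw [hcast]
  -- lower bound on p * C
  set a : ℕ := n - k + 1 - (r - 1) with ha
  have hdesc : ((a:ℝ))^(r-1) ≤ (Nat.factorial (r-1) : ℝ) * (C:ℝ) := by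
    have h1 := Nat.pow_sub_le_descFactorial (n - k) (r-1)
    rw [Nat.descFactorial_eq_factorial_mul_choose] at h1
    exact_mod_cast h1
  have hpC : p * (C:ℝ) = d * ((Nat.factorial (r-1):ℝ) * (C:ℝ)) / (n:ℝ)^(r-1) := by
    rw [hp]; ring
  have hpC_ge : d * (((a:ℝ))/(n:ℝ))^(r-1) ≤ p * (C:ℝ) := by
    rw [hpC, div_pow, mul_div_assoc]
    refine mul_le_mul_of_nonneg_left ?_ (by linarith)
    gcongr
  by_cases hcase : (k:ℝ) * d^2 ≤ (n:ℝ)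
  · -- Case A : k small
    have haN : (n:ℝ) - (k:ℝ) - (r:ℝ) ≤ (a:ℝ) := by
      have h2 : n ≤ (n - k + 1 - (r-1)) + k + r := by omega
      have h3 : (n:ℝ) ≤ ((n - k + 1 - (r-1) : ℕ) : ℝ) + (k:ℝ) + (r:ℝ) := by exact_mod_cast h2
      rw [← ha] at h3
      linarith
    have hkN : (k:ℝ) + (r:ℝ) ≤ (n:ℝ) := by
      have h2 : k + r ≤ n := by omega
      exact_mod_cast h2
    have hx0 : (0:ℝ) ≤ ((k:ℝ) + (r:ℝ))/(n:ℝ) := by positivity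
    have hx1 : ((k:ℝ) + (r:ℝ))/(n:ℝ) ≤ 1 := by rw [div_le_one hNpos]; linarith
    have hxa : 1 - ((k:ℝ) + (r:ℝ))/(n:ℝ) ≤ (a:ℝ)/(n:ℝ) := by
      have heq : (1:ℝ) - ((k:ℝ)+(r:ℝ))/(n:ℝ) = ((n:ℝ) - ((k:ℝ)+(r:ℝ)))/(n:ℝ) := by
        field_simp
      rw [heq, div_le_div_iff₀ hNpos hNpos]
      nlinarith
    have hrcast : ((r-1 : ℕ):ℝ) = (r:ℝ) - 1 := by
      rw [Nat.cast_sub (by omega : 1 ≤ r)]; norm_num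
    have hbern : 1 - ((r:ℝ)-1) * (((k:ℝ) + (r:ℝ))/(n:ℝ)) ≤ (1 - ((k:ℝ) + (r:ℝ))/(n:ℝ))^(r-1) := by
      have hb := one_add_mul_le_pow (a := -(((k:ℝ) + (r:ℝ))/(n:ℝ))) (by linarith) (r-1)
      rw [hrcast] at hb
      calc 1 - ((r:ℝ)-1) * (((k:ℝ) + (r:ℝ))/(n:ℝ))
          = 1 + ((r:ℝ)-1) * (-(((k:ℝ) + (r:ℝ))/(n:ℝ))) := by ring
        _ ≤ (1 + -(((k:ℝ) + (r:ℝ))/(n:ℝ)))^(r-1) := hb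
        _ = (1 - ((k:ℝ) + (r:ℝ))/(n:ℝ))^(r-1) := by ring_nf
    have hpow2 : (1 - ((k:ℝ) + (r:ℝ))/(n:ℝ))^(r-1) ≤ (((a:ℝ))/(n:ℝ))^(r-1) :=
      pow_le_pow_left₀ (by linarith) hxa _
    have hdx : d * (((r:ℝ)-1) * (((k:ℝ) + (r:ℝ))/(n:ℝ))) ≤ 1 := by
      have t1 : (r:ℝ) - 1 ≤ d/2 := by linarith
      have t2 : d * ((r:ℝ)-1) * (k:ℝ) ≤ d * (d/2) * (k:ℝ) := by
        refine mul_le_mul_of_nonneg_right ?_ (le_of_lt hkpos)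
        exact mul_le_mul_of_nonneg_left t1 (by linarith)
      have t3 : d * (d/2) * (k:ℝ) = ((k:ℝ) * d^2)/2 := by ring
      have e1 : d * ((r:ℝ)-1) * (k:ℝ) ≤ (n:ℝ)/2 := by
        rw [t3] at t2; linarith
      have t4 : d * ((r:ℝ)-1) * (r:ℝ) ≤ d * (r:ℝ) * (r:ℝ) := by
        refine mul_le_mul_of_nonneg_right ?_ (by linarith)
        exact mul_le_mul_of_nonneg_left (by linarith) (by linarith)
      have e2 : d * ((r:ℝ)-1) * (r:ℝ) ≤ (n:ℝ)/2 := by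
        have t5 : d * (r:ℝ) * (r:ℝ) = (2 * (r:ℝ)^2 * d)/2 := by ring
        rw [t5] at t4; linarith
      have heq2 : d * (((r:ℝ)-1) * (((k:ℝ) + (r:ℝ))/(n:ℝ)))
          = (d * ((r:ℝ)-1) * (k:ℝ) + d * ((r:ℝ)-1) * (r:ℝ))/(n:ℝ) := by
        field_simp
      rw [heq2, div_le_one hNpos]
      linarith
    have hpCd : d - 1 ≤ p * (C:ℝ) := by
      have h5 : d * (1 - ((r:ℝ)-1) * (((k:ℝ) + (r:ℝ))/(n:ℝ))) ≤ d * (((a:ℝ))/(n:ℝ))^(r-1) :=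
        mul_le_mul_of_nonneg_left (le_trans hbern hpow2) (by linarith)
      have h6 : d - 1 ≤ d * (1 - ((r:ℝ)-1) * (((k:ℝ) + (r:ℝ))/(n:ℝ))) := by
        have h7 : d * (1 - ((r:ℝ)-1) * (((k:ℝ) + (r:ℝ))/(n:ℝ)))
            = d - d * (((r:ℝ)-1) * (((k:ℝ) + (r:ℝ))/(n:ℝ))) := by ring
        rw [h7]; linarith
      linarith
    have hlogk : Real.log 100 + Real.log n - d ≤ Real.log k := by
      have h7 : Real.log (100 * (n:ℝ) * Real.exp (-d)) ≤ Real.log k :=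
        Real.log_le_log (by positivity) hk2
      rw [Real.log_mul (by positivity) (Real.exp_ne_zero _),
        Real.log_mul (by norm_num) (ne_of_gt hNpos), Real.log_exp] at h7
      linarith
    have hexp : (k:ℝ) * (1 + Real.log n - Real.log k) + -(p * ((k:ℝ) * (C:ℝ)))
        ≤ (k:ℝ) * (-2) := by
      have h8 : (k:ℝ) * (d - 1) ≤ p * ((k:ℝ) * (C:ℝ)) := by
        rw [show p * ((k:ℝ)*(C:ℝ)) = (k:ℝ) * (p * (C:ℝ)) by ring]
        exact mul_le_mul_of_nonneg_left hpCd (le_of_lt hkpos)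
      have h9 : 1 + Real.log n - Real.log k ≤ d - 3 := by
        have := log_hundred
        linarith
      have h10 : (k:ℝ) * (1 + Real.log n - Real.log k) ≤ (k:ℝ) * (d - 3) :=
        mul_le_mul_of_nonneg_left h9 (le_of_lt hkpos)
      nlinarith [h8, h10]
    refine le_trans hexp ?_
    linarith
  · -- Case B : k large
    push_neg at hcase
    have hd0 : (0:ℝ) < d := by linarith
    have haN3 : (n:ℝ)/3 ≤ (a:ℝ) := by
      have h2 : n ≤ 3 * (n - k + 1 - (r-1)) := by omega
      have h3 : (n:ℝ) ≤ 3 * ((n - k + 1 - (r-1) : ℕ):ℝ) := by exact_mod_cast h2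
      rw [← ha] at h3
      linarith
    have hpowB : ((1:ℝ)/3)^(r-1) ≤ (((a:ℝ))/(n:ℝ))^(r-1) := by
      refine pow_le_pow_left₀ (by norm_num) ?_ _
      rw [div_le_div_iff₀ (by norm_num) hNpos]
      linarith
    have hpCd : d / 3^(r-1) ≤ p * (C:ℝ) := by
      have h5 : d * ((1:ℝ)/3)^(r-1) ≤ d * (((a:ℝ))/(n:ℝ))^(r-1) :=
        mul_le_mul_of_nonneg_left hpowB (by linarith)
      have h6 : d * ((1:ℝ)/3)^(r-1) = d / 3^(r-1) := by
        rw [div_pow]; ring_nf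
      linarith
    have hlogk : Real.log n - Real.log k ≤ 2 * Real.log d := by
      have h7 : Real.log n ≤ Real.log ((k:ℝ) * d^2) :=
        Real.log_le_log hNpos (le_of_lt hcase)
      rw [Real.log_mul (ne_of_gt hkpos) (by positivity), Real.log_pow] at h7
      have h7' : ((2:ℕ):ℝ) = (2:ℝ) := by norm_num
      rw [h7'] at h7
      linarith
    have hKbig : 200 * Real.log n ≤ (k:ℝ) := by
      have h8 : (n:ℝ)/(Real.log n)^2 ≤ (n:ℝ)/d^2 := by
        apply div_le_div_of_nonneg_left (by linarith) (by positivity)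
        exact pow_le_pow_left₀ (by linarith) hdlog 2
      have h9 : 200 * Real.log n ≤ (n:ℝ)/(Real.log n)^2 := by
        rw [le_div_iff₀ (by positivity)]
        nlinarith [hn3]
      have h10 : (n:ℝ)/d^2 ≤ (k:ℝ) := by
        rw [div_le_iff₀ (by positivity)]
        linarith
      linarith
    have hexp : (k:ℝ) * (1 + Real.log n - Real.log k) + -(p * ((k:ℝ) * (C:ℝ)))
        ≤ (k:ℝ) * (-1) := by
      have h8 : (k:ℝ) * (d / 3^(r-1)) ≤ p * ((k:ℝ) * (C:ℝ)) := by
        rw [show p * ((k:ℝ)*(C:ℝ)) = (k:ℝ) * (p * (C:ℝ)) by ring]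
        exact mul_le_mul_of_nonneg_left hpCd (le_of_lt hkpos)
      have h9 : 1 + Real.log n - Real.log k ≤ 1 + 2 * Real.log d := by linarith
      have h10 : (k:ℝ) * (1 + Real.log n - Real.log k) ≤ (k:ℝ) * (1 + 2 * Real.log d) :=
        mul_le_mul_of_nonneg_left h9 (le_of_lt hkpos)
      have h11 : (k:ℝ) * (1 + 2 * Real.log d - d / 3^(r-1)) ≤ (k:ℝ) * (-1) :=
        mul_le_mul_of_nonneg_left hD (le_of_lt hkpos)
      nlinarith [h8, h10, h11]
    refine le_trans hexp ?_
    linarith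
open Classical in
lemma main_bound (r : ℕ) (hr : 2 ≤ r) (n : ℕ) (d p s₁ : ℝ)
    (hp : p = d * (Nat.factorial (r - 1)) / (n : ℝ) ^ (r - 1))
    (hs₁ : s₁ = 100 * max ((n : ℝ) * Real.exp (-d)) (Real.log n))
    (hp1 : p ≤ 1)
    (hd2r : 2 * (r:ℝ) ≤ d)
    (hdlog : d ≤ Real.log n)
    (hD : 1 + 2 * Real.log d - d / 3 ^ (r - 1) ≤ -1)
    (hn1 : 2 * (r:ℝ)^2 * d ≤ n)
    (hn2 : 6 * r ≤ n)
    (hn3 : 200 * (Real.log n)^3 ≤ n)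
    (hs4 : 4 * s₁ + 4 ≤ (n:ℝ)) :
    prob r n p {ω | (L1 r n ω : ℝ) ≤ (n : ℝ) - s₁}
      ≤ ((n:ℝ) + 1) * Real.exp (-200 * Real.log n) := by
  classical
  have hrR : (2:ℝ) ≤ (r:ℝ) := by exact_mod_cast hr
  have hd4 : (4:ℝ) ≤ d := by linarith
  have hlog4 : (4:ℝ) ≤ Real.log n := le_trans hd4 hdlog
  have hn12 : 12 ≤ n := by omega
  have hNpos : (0:ℝ) < n := by positivity
  have hp0 : 0 ≤ p := by
    rw [hp]
    apply div_nonneg (mul_nonneg (by linarith) (by positivity)) (by positivity)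
  have hs₁pos : 0 < s₁ := by
    rw [hs₁]
    have := le_max_right ((n : ℝ) * Real.exp (-d)) (Real.log n)
    nlinarith
  set t := ⌈s₁⌉₊ with htdef
  have hts : s₁ ≤ (t:ℝ) := Nat.le_ceil s₁
  have ht1 : 1 ≤ t := Nat.one_le_iff_ne_zero.mpr (by
    intro h
    rw [htdef] at h
    have := Nat.ceil_pos.mpr hs₁pos
    omega)
  have htub : (t:ℝ) ≤ s₁ + 1 := by
    rw [htdef]
    exact (Nat.ceil_lt_add_one (le_of_lt hs₁pos)).le
  have ht4 : 4 * t ≤ n := by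
    have h4 : 4 * (t:ℝ) ≤ (n:ℝ) := by linarith
    exact_mod_cast h4
  set 𝒜 := Finset.univ.powerset.filter
    (fun A : Finset (Fin n) => t ≤ A.card ∧ 2 * A.card ≤ n) with h𝒜
  have hstep1 : prob r n p {ω | (L1 r n ω : ℝ) ≤ (n : ℝ) - s₁}
      ≤ ∑ A ∈ 𝒜, prob r n p {ω | ∀ e ∈ cross r n A, ω e = false} := by
    refine prob_union_bound hp0 hp1 𝒜 _ _ ?_
    intro ω hω
    simp only [Set.mem_setOf_eq] at hω
    have hL1n : L1 r n ω ≤ n := by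
      have : (L1 r n ω : ℝ) ≤ (n:ℝ) := by linarith
      exact_mod_cast this
    have hLt : t ≤ n - L1 r n ω := by
      rw [htdef, Nat.ceil_le, Nat.cast_sub hL1n]
      linarith
    obtain ⟨A, hAc, hAt, hA2⟩ := exists_closed r n ω t ht1 ht4 (by omega)
    refine ⟨A, ?_, ?_⟩
    · rw [h𝒜, Finset.mem_filter, Finset.mem_powerset]
      exact ⟨Finset.subset_univ A, hAt, hA2⟩
    · exact fun e he => closed_no_cross hAc e he
  have hstep2 : ∀ A ∈ 𝒜, prob r n p {ω | ∀ e ∈ cross r n A, ω e = false}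
      ≤ (1 - p) ^ (A.card * ((n - A.card).choose (r-1))) := by
    intro A hA
    rw [prob_allFalse]
    refine pow_le_pow_of_le_one (by linarith) (by linarith) ?_
    have h1 := card_cross_ge hr A
    rwa [Finset.card_compl, Fintype.card_fin] at h1
  have hmaps : ∀ A ∈ 𝒜, A.card ∈ Finset.range (n+1) := by
    intro A _
    rw [Finset.mem_range]
    have := Finset.card_le_univ A
    rw [Fintype.card_fin] at this
    omega
  have hinner : ∀ j ∈ Finset.range (n+1),
      ∑ A ∈ 𝒜.filter (fun A => A.card = j), (1 - p) ^ (A.card * ((n - A.card).choose (r-1)))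
        ≤ Real.exp (-200 * Real.log n) := by
    intro j _
    rcases Finset.eq_empty_or_nonempty (𝒜.filter (fun A => A.card = j)) with he | hne
    · rw [he, Finset.sum_empty]
      exact (Real.exp_pos _).le
    · obtain ⟨A₀, hA₀⟩ := hne
      rw [Finset.mem_filter] at hA₀
      obtain ⟨hA₀𝒜, hA₀card⟩ := hA₀
      rw [h𝒜, Finset.mem_filter] at hA₀𝒜
      have htj : t ≤ j := hA₀card ▸ hA₀𝒜.2.1
      have h2j : 2 * j ≤ n := hA₀card ▸ hA₀𝒜.2.2
      have hsum_eq : ∑ A ∈ 𝒜.filter (fun A => A.card = j),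
          (1 - p) ^ (A.card * ((n - A.card).choose (r-1)))
          = (𝒜.filter (fun A => A.card = j)).card * ((1 - p) ^ (j * ((n - j).choose (r-1)))) := by
        rw [Finset.sum_congr rfl (fun A hA => by
          rw [(Finset.mem_filter.mp hA).2]), Finset.sum_const, nsmul_eq_mul]
      rw [hsum_eq]
      have hcard_le : ((𝒜.filter (fun A => A.card = j)).card : ℝ) ≤ (n.choose j : ℝ) := by
        have hsub : 𝒜.filter (fun A => A.card = j) ⊆ Finset.univ.powersetCard j := by
          intro A hA
          rw [Finset.mem_powersetCard]
          exact ⟨Finset.subset_univ A, (Finset.mem_filter.mp hA).2⟩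
        have := Finset.card_le_card hsub
        rw [Finset.card_powersetCard, Finset.card_univ, Fintype.card_fin] at this
        exact_mod_cast this
      have hterm : ((n.choose j):ℝ) * (1 - p) ^ (j * ((n - j).choose (r-1)))
          ≤ Real.exp (-200 * Real.log n) := by
        refine term_bound r hr n j d p hp hp1 hd2r hdlog hD hn1 hn2 hn3 ?_ ?_ h2j
        · calc 100 * Real.log n ≤ s₁ := by
                rw [hs₁]
                have := le_max_right ((n : ℝ) * Real.exp (-d)) (Real.log n)
                linarith
            _ ≤ (t:ℝ) := hts
            _ ≤ (j:ℝ) := by exact_mod_cast htj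
        · calc 100 * (n:ℝ) * Real.exp (-d) ≤ s₁ := by
                rw [hs₁]
                have := le_max_left ((n : ℝ) * Real.exp (-d)) (Real.log n)
                nlinarith
            _ ≤ (t:ℝ) := hts
            _ ≤ (j:ℝ) := by exact_mod_cast htj
      calc ((𝒜.filter (fun A => A.card = j)).card : ℝ) * ((1 - p) ^ (j * ((n - j).choose (r-1))))
          ≤ ((n.choose j):ℝ) * (1 - p) ^ (j * ((n - j).choose (r-1))) :=
            mul_le_mul_of_nonneg_right hcard_le (pow_nonneg (by linarith) _)
        _ ≤ Real.exp (-200 * Real.log n) := hterm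
  calc prob r n p {ω | (L1 r n ω : ℝ) ≤ (n : ℝ) - s₁}
      ≤ ∑ A ∈ 𝒜, prob r n p {ω | ∀ e ∈ cross r n A, ω e = false} := hstep1
    _ ≤ ∑ A ∈ 𝒜, (1 - p) ^ (A.card * ((n - A.card).choose (r-1))) :=
        Finset.sum_le_sum hstep2
    _ = ∑ j ∈ Finset.range (n+1), ∑ A ∈ 𝒜.filter (fun A => A.card = j),
          (1 - p) ^ (A.card * ((n - A.card).choose (r-1))) :=
        (Finset.sum_fiberwise_of_maps_to hmaps _).symm
    _ ≤ ∑ j ∈ Finset.range (n+1), Real.exp (-200 * Real.log n) :=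
        Finset.sum_le_sum hinner
    _ = ((n:ℝ) + 1) * Real.exp (-200 * Real.log n) := by
        rw [Finset.sum_const, Finset.card_range, nsmul_eq_mul]
        push_cast
        ring
lemma ev_poly_log (a : ℝ) (m : ℕ) : ∀ᶠ x : ℝ in atTop, a * (Real.log x)^m ≤ x := by
  have hc : (0:ℝ) < max a 1 := lt_of_lt_of_le one_pos (le_max_right a 1)
  have h := Real.tendsto_pow_log_div_mul_add_atTop 1 0 m one_ne_zero
  have h2 : ∀ᶠ x : ℝ in atTop, Real.log x ^ m / (1 * x + 0) < 1 / max a 1 :=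
    h.eventually_lt_const (by positivity)
  filter_upwards [h2, eventually_ge_atTop (1:ℝ)] with x hx hx1
  have hxpos : (0:ℝ) < x := lt_of_lt_of_le one_pos hx1
  rw [one_mul, add_zero, div_lt_div_iff₀ hxpos hc] at hx
  have hlognn : 0 ≤ Real.log x ^ m := pow_nonneg (Real.log_nonneg hx1) m
  have ha : a ≤ max a 1 := le_max_left a 1
  calc a * Real.log x ^ m ≤ max a 1 * Real.log x ^ m :=
        mul_le_mul_of_nonneg_right ha hlognn
    _ = Real.log x ^ m * max a 1 := by ring
    _ ≤ 1 * x := hx.le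
    _ = x := one_mul x
lemma exp_seven : (800:ℝ) ≤ Real.exp 7 := by
  have h1 : Real.exp 7 = Real.exp 1 ^ (7:ℕ) := by
    rw [← Real.exp_nat_mul]; norm_num
  rw [h1]
  calc (800:ℝ) ≤ 2.7182818283 ^ (7:ℕ) := by norm_num
    _ ≤ Real.exp 1 ^ (7:ℕ) := by
        exact pow_le_pow_left₀ (by norm_num) Real.exp_one_gt_d9.le 7
/-- With `p = d(n)·(r−1)!/n^{r−1}`, `d(n) → ∞`, `log n − d(n) → ∞`, and
`s₁(n) = 100·max(n·e^{−d}, log n)`, the probability that the largest component of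
`H^r(n,p)` has at most `n − s₁` vertices is `o(n^{−100})`. -/
theorem stmt7 (r : ℕ) (hr : 2 ≤ r) (d : ℕ → ℝ)
    (hd : Tendsto d atTop atTop)
    (hld : Tendsto (fun n : ℕ => Real.log n - d n) atTop atTop)
    (p : ℕ → ℝ) (hp : ∀ n, p n = d n * (Nat.factorial (r - 1)) / (n : ℝ) ^ (r - 1))
    (s₁ : ℕ → ℝ) (hs₁ : ∀ n, s₁ n = 100 * max ((n : ℝ) * Real.exp (-d n)) (Real.log n)) :
    (fun n => prob r n (p n) {ω | (L1 r n ω : ℝ) ≤ (n : ℝ) - s₁ n})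
      =o[atTop] (fun n => (((n : ℝ) ^ (100 : ℕ))⁻¹)) := by
  classical
  have hrR : (2:ℝ) ≤ (r:ℝ) := by exact_mod_cast hr
  rw [Asymptotics.isLittleO_iff]
  intro c hc
  have hcast : Tendsto (fun n : ℕ => (n:ℝ)) atTop atTop := tendsto_natCast_atTop_atTop
  have E1 : ∀ᶠ n : ℕ in atTop, max (2*(r:ℝ)) 7 ≤ d n := hd.eventually_ge_atTop _
  have E2 : ∀ᶠ n : ℕ in atTop, 0 ≤ Real.log n - d n := hld.eventually_ge_atTop 0
  have E3 : ∀ᶠ n : ℕ in atTop, 1 + 2*Real.log (d n) - d n / 3^(r-1) ≤ -1 := by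
    refine hd.eventually (p := fun x : ℝ => 1 + 2*Real.log x - x / 3^(r-1) ≤ -1) ?_
    have h3r : (0:ℝ) < 3^(r-1) := by positivity
    filter_upwards [ev_poly_log (8 * 3^(r-1)) 1,
      eventually_ge_atTop ((8:ℝ)*3^(r-1)), eventually_ge_atTop (1:ℝ)] with x h1 h2 h3
    rw [pow_one] at h1
    have hx8 : 8 ≤ x / 3^(r-1) := by rw [le_div_iff₀ h3r]; nlinarith
    have h2log : 2 * Real.log x ≤ x / (4 * 3^(r-1)) := by
      rw [le_div_iff₀ (by positivity)]
      nlinarith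
    have heq : x / (4 * 3^(r-1)) = (x / 3^(r-1))/4 := by ring
    rw [heq] at h2log
    linarith
  have ER : ∀ᶠ n : ℕ in atTop, 2*(r:ℝ)^2 * Real.log n ≤ (n:ℝ)
      ∧ 200*(Real.log n)^3 ≤ (n:ℝ)
      ∧ ((Nat.factorial (r-1)):ℝ) * Real.log n ≤ (n:ℝ)
      ∧ 400 * Real.log n + 4 ≤ (n:ℝ)/2
      ∧ 2/c ≤ (n:ℝ) ∧ 1 ≤ (n:ℝ) := by
    refine hcast.eventually (p := fun x : ℝ => 2*(r:ℝ)^2 * Real.log x ≤ x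
      ∧ 200*(Real.log x)^3 ≤ x
      ∧ ((Nat.factorial (r-1)):ℝ) * Real.log x ≤ x
      ∧ 400 * Real.log x + 4 ≤ x/2
      ∧ 2/c ≤ x ∧ 1 ≤ x) ?_
    filter_upwards [ev_poly_log (2*(r:ℝ)^2) 1, ev_poly_log 200 3,
      ev_poly_log ((Nat.factorial (r-1)):ℝ) 1, ev_poly_log 900 1,
      eventually_ge_atTop (2/c), eventually_ge_atTop (72:ℝ)] with x h1 h2 h3 h4 h5 h6
    rw [pow_one] at h1 h3 h4
    have hlog0 : 0 ≤ Real.log x := Real.log_nonneg (by linarith)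
    refine ⟨h1, h2, h3, by nlinarith, h5, by linarith⟩
  have E6 : ∀ᶠ n : ℕ in atTop, 6*r ≤ n := eventually_ge_atTop _
  filter_upwards [E1, E2, E3, ER, E6] with n h1 h2 h3 hR h6
  obtain ⟨hR1, hR2, hR3, hR4, hR5, hR6⟩ := hR
  have hd2r : 2*(r:ℝ) ≤ d n := le_trans (le_max_left _ _) h1
  have hd7 : (7:ℝ) ≤ d n := le_trans (le_max_right _ _) h1
  have hdlog : d n ≤ Real.log n := by linarith
  have hd4 : (4:ℝ) ≤ d n := by linarith
  have hlog4 : (4:ℝ) ≤ Real.log n := by linarith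
  have hNpos : (0:ℝ) < n := by linarith
  have hfacpos : (0:ℝ) < ((Nat.factorial (r-1)):ℝ) := by
    exact_mod_cast Nat.factorial_pos (r-1)
  have hpow_n : (n:ℝ) ≤ (n:ℝ)^(r-1) := by
    calc (n:ℝ) = (n:ℝ)^1 := (pow_one _).symm
      _ ≤ (n:ℝ)^(r-1) := pow_le_pow_right₀ hR6 (by omega)
  have hp1 : p n ≤ 1 := by
    rw [hp n, div_le_one (by positivity)]
    calc d n * ((Nat.factorial (r-1)):ℝ) ≤ Real.log n * ((Nat.factorial (r-1)):ℝ) :=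
          mul_le_mul_of_nonneg_right hdlog (le_of_lt hfacpos)
      _ = ((Nat.factorial (r-1)):ℝ) * Real.log n := by ring
      _ ≤ (n:ℝ) := hR3
      _ ≤ (n:ℝ)^(r-1) := hpow_n
  have hp0 : 0 ≤ p n := by
    rw [hp n]
    apply div_nonneg (mul_nonneg (by linarith) (by positivity)) (by positivity)
  have hn1 : 2*(r:ℝ)^2 * d n ≤ (n:ℝ) := by
    have : 2*(r:ℝ)^2 * d n ≤ 2*(r:ℝ)^2 * Real.log n :=
      mul_le_mul_of_nonneg_left hdlog (by positivity)
    linarith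
  have hexp7 : Real.exp (-(d n)) ≤ 1/800 := by
    rw [Real.exp_neg]
    rw [inv_le_comm₀ (Real.exp_pos _) (by norm_num)]
    calc (1/800 : ℝ)⁻¹ = 800 := by norm_num
      _ ≤ Real.exp 7 := exp_seven
      _ ≤ Real.exp (d n) := Real.exp_le_exp.mpr hd7
  have hs4 : 4 * s₁ n + 4 ≤ (n:ℝ) := by
    rw [hs₁ n]
    have hmax : max ((n : ℝ) * Real.exp (-d n)) (Real.log n)
        ≤ (n : ℝ) * Real.exp (-d n) + Real.log n := by
      apply max_le
      · nlinarith [Real.log_nonneg (by linarith : (1:ℝ) ≤ n)]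
      · nlinarith [mul_nonneg (le_of_lt hNpos) (Real.exp_pos (-d n)).le]
    have hne : (n:ℝ) * Real.exp (-d n) ≤ (n:ℝ)/800 := by
      nlinarith [hexp7, hNpos]
    nlinarith
  have hmain := main_bound r hr n (d n) (p n) (s₁ n) (hp n) (hs₁ n) hp1 hd2r hdlog h3
    hn1 h6 hR2 hs4
  have hfnn : 0 ≤ prob r n (p n) {ω | (L1 r n ω : ℝ) ≤ (n : ℝ) - s₁ n} :=
    prob_nonneg hp0 hp1 _
  rw [Real.norm_of_nonneg hfnn, Real.norm_of_nonneg (by positivity)]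
  have hexp200 : Real.exp (-200 * Real.log n) = (((n:ℝ)^(200:ℕ))⁻¹) := by
    rw [show (-200:ℝ) * Real.log n = -(((200:ℕ):ℝ) * Real.log n) by push_cast; ring,
      Real.exp_neg, Real.exp_nat_mul, Real.exp_log hNpos]
  have hfinal : ((n:ℝ) + 1) * Real.exp (-200 * Real.log n) ≤ c * (((n:ℝ)^(100:ℕ))⁻¹) := by
    have h99 : (n:ℝ) ≤ (n:ℝ)^(99:ℕ) := by
      calc (n:ℝ) = (n:ℝ)^1 := (pow_one _).symm
        _ ≤ (n:ℝ)^(99:ℕ) := pow_le_pow_right₀ hR6 (by omega)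
    have hcn : 2 ≤ c * (n:ℝ)^(99:ℕ) := by
      have hc2 : 2 ≤ c * (n:ℝ) := by
        rw [div_le_iff₀ hc] at hR5
        linarith
      calc (2:ℝ) ≤ c * (n:ℝ) := hc2
        _ ≤ c * (n:ℝ)^(99:ℕ) := mul_le_mul_of_nonneg_left h99 hc.le
    have key : ((n:ℝ)+1) * (n:ℝ)^(100:ℕ) ≤ c * (n:ℝ)^(200:ℕ) := by
      have ha : ((n:ℝ)+1) * (n:ℝ)^(100:ℕ) ≤ 2*(n:ℝ)^(101:ℕ) := by
        nlinarith [pow_nonneg hNpos.le 100, mul_nonneg (by linarith : (0:ℝ) ≤ (n:ℝ)-1)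
          (pow_nonneg hNpos.le 100)]
      have hb : 2*(n:ℝ)^(101:ℕ) ≤ c * (n:ℝ)^(200:ℕ) := by
        have heq : c * (n:ℝ)^(200:ℕ) = (c * (n:ℝ)^(99:ℕ)) * (n:ℝ)^(101:ℕ) := by ring
        rw [heq]
        exact mul_le_mul_of_nonneg_right hcn (by positivity)
      linarith
    rw [hexp200]
    have e1 : ((n:ℝ)+1) * (((n:ℝ)^(200:ℕ))⁻¹) = ((n:ℝ)+1) / (n:ℝ)^(200:ℕ) :=
      (div_eq_mul_inv _ _).symm
    have e2 : c * (((n:ℝ)^(100:ℕ))⁻¹) = c / (n:ℝ)^(100:ℕ) := (div_eq_mul_inv _ _).symm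
    rw [e1, e2, div_le_div_iff₀ (by positivity) (by positivity)]
    exact key
  calc prob r n (p n) {ω | (L1 r n ω : ℝ) ≤ (n : ℝ) - s₁ n}
      ≤ ((n:ℝ) + 1) * Real.exp (-200 * Real.log n) := hmain
    _ ≤ c * (((n:ℝ)^(100:ℕ))⁻¹) := hfinal
end

section
/- Suppose a sequence ((X_n, Y_n)) of ℤ²-valued random variables satisfies a local limit theorem with parameters (μ_X(n), μ_Y(n)) and (σ_X²(n), σ_Y²(n)), where σ_X(n), σ_Y(n) > 0. Suppose μ̃_X(n) = μ_X(n) + o(σ_X(n)), μ̃_Y(n) = μ_Y(n) + o(σ_Y(n)), σ̃_X(n) ~ σ_X(n) and σ̃_Y(n) ~ σ_Y(n) as n → ∞. Then ((X_n, Y_n)) also satisfies a local limit theorem with parameters (μ̃_X(n), μ̃_Y(n)) and (σ̃_X²(n), σ̃_Y²(n)). -/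
open MeasureTheory Filter

/-- The bivariate discrete Gaussian comparison function. -/
noncomputable def gauss2 (μX μY σX σY : ℝ) (x y : ℤ) : ℝ :=
  (1 / (2 * Real.pi * σX * σY)) *
    Real.exp (-((x : ℝ) - μX) ^ 2 / (2 * σX ^ 2) - ((y : ℝ) - μY) ^ 2 / (2 * σY ^ 2))

/-- A sequence `((X_n, Y_n))` of `ℤ²`-valued random variables satisfies a local limit
theorem with parameters `(μX, μY)` and `(σX², σY²)` if
`sup_{(x,y) ∈ ℤ²} |Pr(X_n = x, Y_n = y) − gauss2(...)| = o(1/(σX·σY))`. -/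
def SatisfiesLLT {Ω : ℕ → Type*} [∀ n, MeasurableSpace (Ω n)]
    (μ : ∀ n, Measure (Ω n)) (X Y : ∀ n, Ω n → ℤ)
    (μX μY σX σY : ℕ → ℝ) : Prop :=
  (fun n => ⨆ xy : ℤ × ℤ,
      |(μ n {ω | X n ω = xy.1 ∧ Y n ω = xy.2}).toReal
        - gauss2 (μX n) (μY n) (σX n) (σY n) xy.1 xy.2|)
    =o[atTop] (fun n => 1 / (σX n * σY n))

noncomputable def q1 (μ σ x : ℝ) : ℝ :=
  (1 / (Real.sqrt (2 * Real.pi) * σ)) * Real.exp (-(x - μ) ^ 2 / (2 * σ ^ 2))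

lemma sigma_mul_q1 (μ σ x : ℝ) (hσ : 0 < σ) :
    σ * q1 μ σ x = (1 / Real.sqrt (2 * Real.pi)) * Real.exp (-((x - μ)/σ) ^ 2 / 2) := by
  unfold q1
  have h1 : (-((x - μ)/σ) ^ 2 / 2) = -(x - μ) ^ 2 / (2 * σ ^ 2) := by
    rw [div_pow]; ring
  rw [h1, one_div, one_div, mul_inv]
  field_simp

lemma exp_sub_exp_le {s t : ℝ} (hs : 0 ≤ s) (hst : s ≤ t) :
    Real.exp (-s) - Real.exp (-t) ≤ t - s := by
  have h1 : Real.exp (-s) ≤ 1 := Real.exp_le_one_iff.2 (by linarith)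
  have h2 : Real.exp (-t) = Real.exp (-s) * Real.exp (s - t) := by
    rw [← Real.exp_add]; ring_nf
  have h3 : (s - t) + 1 ≤ Real.exp (s - t) := Real.add_one_le_exp _
  have h4 : Real.exp (-s) * ((s-t) + 1) ≤ Real.exp (-s) * Real.exp (s - t) :=
    mul_le_mul_of_nonneg_left h3 (Real.exp_pos _).le
  nlinarith [Real.exp_pos (-s), Real.exp_pos (s-t)]

lemma abs_exp_sub_exp_le {s t : ℝ} (hs : 0 ≤ s) (ht : 0 ≤ t) :
    |Real.exp (-s) - Real.exp (-t)| ≤ |s - t| := by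
  rcases le_total s t with h | h
  · rw [abs_of_nonneg (by simpa using Real.exp_le_exp.2 (by linarith : -t ≤ -s)),
      abs_of_nonpos (by linarith)]
    have := exp_sub_exp_le hs h; linarith
  · rw [abs_of_nonpos (by simpa using Real.exp_le_exp.2 (by linarith : -s ≤ -t)),
      abs_of_nonneg (by linarith)]
    have := exp_sub_exp_le ht h; linarith

lemma sqrt_two_pi_ge_one : (1:ℝ) ≤ Real.sqrt (2 * Real.pi) := by
  rw [show (1:ℝ) = Real.sqrt 1 by simp]
  exact Real.sqrt_le_sqrt (by nlinarith [Real.pi_gt_three])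

lemma neg_pow_two_div_two (a : ℝ) : -a ^ 2 / 2 = -(a ^ 2) / 2 := by ring

set_option maxHeartbeats 2000000 in
lemma oneD {ε : ℝ} (hε : 0 < ε) : ∃ δ : ℝ, 0 < δ ∧ δ ≤ 1/2 ∧
    ∀ μ μ' σ σ' x : ℝ, 0 < σ → 0 < σ' →
    |μ' - μ| ≤ δ * σ → |σ' / σ - 1| ≤ δ → σ * |q1 μ σ x - q1 μ' σ' x| ≤ ε := by
  set R : ℝ := max 1 (Real.sqrt (18 * Real.log (4/ε))) with hRdef
  have hR1 : (1:ℝ) ≤ R := le_max_left _ _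
  have hRe : Real.exp (-(R^2)/18) ≤ ε/4 := by
    rcases le_or_gt (Real.log (4/ε)) 0 with h | h
    · have h4 : (4:ℝ)/ε ≤ 1 := by
        by_contra hcon
        push_neg at hcon
        exact absurd (Real.log_pos hcon) (not_lt.2 h)
      have hε4 : 1 ≤ ε/4 := by
        rw [div_le_one hε] at h4; linarith
      have : Real.exp (-(R^2)/18) ≤ 1 := Real.exp_le_one_iff.2 (by nlinarith)
      linarith
    · have hs : Real.sqrt (18 * Real.log (4/ε)) ≤ R := le_max_right _ _
      have h18 : (0:ℝ) ≤ 18 * Real.log (4/ε) := by linarith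
      have hsq : 18 * Real.log (4/ε) ≤ R ^ 2 := by
        have := Real.sq_sqrt h18
        nlinarith [Real.sqrt_nonneg (18 * Real.log (4/ε))]
      have : Real.exp (-(R^2)/18) ≤ Real.exp (-(Real.log (4/ε))) :=
        Real.exp_le_exp.2 (by linarith)
      rw [Real.exp_neg, Real.exp_log (by positivity)] at this
      calc Real.exp (-(R^2)/18) ≤ ((4:ℝ)/ε)⁻¹ := this
        _ = ε/4 := by field_simp
  refine ⟨min (1/2) (ε / (8*(R+1)^2 + 8)), lt_min (by norm_num) (by positivity),
    min_le_left _ _, ?_⟩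
  set δ : ℝ := min (1/2) (ε / (8*(R+1)^2 + 8)) with hδdef
  have hδpos : 0 < δ := lt_min (by norm_num) (by positivity)
  have hδhalf : δ ≤ 1/2 := min_le_left _ _
  have hδ2 : δ * (8*(R+1)^2 + 8) ≤ ε := by
    have h := min_le_right (1/2 : ℝ) (ε / (8*(R+1)^2 + 8))
    have hpos : (0:ℝ) < 8*(R+1)^2 + 8 := by positivity
    rw [← hδdef] at h
    calc δ * (8*(R+1)^2 + 8) ≤ (ε / (8*(R+1)^2 + 8)) * (8*(R+1)^2 + 8) :=
          mul_le_mul_of_nonneg_right h hpos.le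
      _ = ε := by field_simp
  have hδε4 : δ ≤ ε/4 := by
    have hpos : (0:ℝ) < 8*(R+1)^2 + 8 := by positivity
    nlinarith [sq_nonneg (R+1), hδpos]
  clear_value R
  intro μ μ' σ σ' x hσ hσ' hμd hcd
  set u : ℝ := (x - μ)/σ with hu
  set v : ℝ := (x - μ')/σ' with hv
  set c : ℝ := σ'/σ with hc
  set e0 : ℝ := (μ' - μ)/σ with he0
  have hcpos : 0 < c := div_pos hσ' hσ
  have hcabs : |c - 1| ≤ δ := hcd
  have hc1 : 1/2 ≤ c := by
    have := (abs_le.1 hcabs).1; linarith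
  have hc2 : c ≤ 3/2 := by
    have := (abs_le.1 hcabs).2; linarith
  have he0abs : |e0| ≤ δ := by
    rw [he0, abs_div, abs_of_pos hσ, div_le_iff₀ hσ]
    exact hμd
  have hveq : v = (u - e0)/c := by
    rw [hv, hu, he0, hc]
    field_simp
    ring
  clear_value δ
  -- rewrite the target
  have e1 : σ * q1 μ σ x = (1/Real.sqrt (2*Real.pi)) * Real.exp (-(u^2)/2) := by
    rw [sigma_mul_q1 μ σ x hσ, ← hu, neg_pow_two_div_two]
  have e2 : σ * q1 μ' σ' x = (1/c) * ((1/Real.sqrt (2*Real.pi)) * Real.exp (-(v^2)/2)) := by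
    have h := sigma_mul_q1 μ' σ' x hσ'
    rw [← hv] at h
    have hσeq : σ = (1/c) * σ' := by rw [hc]; field_simp
    calc σ * q1 μ' σ' x = (1/c) * (σ' * q1 μ' σ' x) := by rw [hσeq]; ring
      _ = (1/c) * ((1/Real.sqrt (2*Real.pi)) * Real.exp (-(v^2)/2)) := by
          rw [h, neg_pow_two_div_two]
  clear hRdef hδdef hu hv hc he0 hμd hcd
  clear_value u v c e0
  have key : σ * |q1 μ σ x - q1 μ' σ' x|
      = (1/Real.sqrt (2*Real.pi)) * |Real.exp (-(u^2)/2) - (1/c) * Real.exp (-(v^2)/2)| := by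
    have hs : (0:ℝ) < Real.sqrt (2*Real.pi) := lt_of_lt_of_le one_pos sqrt_two_pi_ge_one
    have habs := abs_mul σ (q1 μ σ x - q1 μ' σ' x)
    rw [abs_of_pos hσ] at habs
    rw [← habs, mul_sub, e1, e2]
    rw [show (1/Real.sqrt (2*Real.pi)) * Real.exp (-(u^2)/2)
        - (1/c) * ((1/Real.sqrt (2*Real.pi)) * Real.exp (-(v^2)/2))
        = (1/Real.sqrt (2*Real.pi)) * (Real.exp (-(u^2)/2) - (1/c) * Real.exp (-(v^2)/2))
        by ring, abs_mul, abs_of_pos (by positivity : (0:ℝ) < 1/Real.sqrt (2*Real.pi))]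
  rw [key]
  have hApos : 0 < Real.exp (-(u^2)/2) := Real.exp_pos _
  have hBpos : 0 < Real.exp (-(v^2)/2) := Real.exp_pos _
  have hB1 : Real.exp (-(v^2)/2) ≤ 1 := Real.exp_le_one_iff.2 (by nlinarith [sq_nonneg v])
  have hsp : (1:ℝ)/Real.sqrt (2*Real.pi) ≤ 1 := by
    rw [div_le_one (lt_of_lt_of_le one_pos sqrt_two_pi_ge_one)]; exact sqrt_two_pi_ge_one
  have hmain : |Real.exp (-(u^2)/2) - (1/c) * Real.exp (-(v^2)/2)| ≤ ε := by
    have tri : |Real.exp (-(u^2)/2) - (1/c) * Real.exp (-(v^2)/2)|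
        ≤ |Real.exp (-(u^2)/2) - Real.exp (-(v^2)/2)|
          + |1 - 1/c| * Real.exp (-(v^2)/2) := by
      have h1 : Real.exp (-(u^2)/2) - (1/c) * Real.exp (-(v^2)/2)
          = (Real.exp (-(u^2)/2) - Real.exp (-(v^2)/2))
            + (1 - 1/c) * Real.exp (-(v^2)/2) := by ring
      rw [h1]
      refine (abs_add_le _ _).trans ?_
      rw [abs_mul, abs_of_pos hBpos]
    have hinv : |1 - 1/c| ≤ 2*δ := by
      have h1 : (1:ℝ) - 1/c = (c - 1)/c := by field_simp
      rw [h1, abs_div, abs_of_pos hcpos, div_le_iff₀ hcpos]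
      calc |c - 1| ≤ δ := hcabs
        _ = δ * 1 := (mul_one δ).symm
        _ ≤ δ * (2*c) := mul_le_mul_of_nonneg_left (by linarith) hδpos.le
        _ = 2*δ*c := by ring
    have hE : |Real.exp (-(u^2)/2) - Real.exp (-(v^2)/2)| ≤ ε/2 + δ*(R+1)*(3*R+1) := by
      have hrw1 : -(u^2)/2 = -(u^2/2) := by ring
      have hrw2 : -(v^2)/2 = -(v^2/2) := by ring
      rcases le_or_gt |u| R with hcase | hcase
      · -- small u
        have hvbound : |v| ≤ 2*R + 1 := by
          rw [hveq, abs_div, abs_of_pos hcpos, div_le_iff₀ hcpos]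
          have := abs_sub_abs_le_abs_sub u e0
          have h2 := abs_sub u e0
          calc |u - e0| ≤ |u| + |e0| := abs_sub _ _
            _ ≤ R + δ := add_le_add hcase he0abs
            _ ≤ R + 1/2 := by linarith
            _ = (2*R+1)*(1/2) := by ring
            _ ≤ (2*R+1)*c := mul_le_mul_of_nonneg_left hc1 (by linarith)
        have huv : |u - v| ≤ 2*δ*(R+1) := by
          have h1 : u - v = (u*(c-1) + e0)/c := by
            rw [hveq]; field_simp; ring
          rw [h1, abs_div, abs_of_pos hcpos, div_le_iff₀ hcpos]
          calc |u*(c-1) + e0| ≤ |u*(c-1)| + |e0| := abs_add_le _ _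
            _ = |u| * |c-1| + |e0| := by rw [abs_mul]
            _ ≤ R*δ + δ := by
                refine add_le_add ?_ he0abs
                exact mul_le_mul hcase hcabs (abs_nonneg _) (by linarith)
            _ = 2*δ*(R+1)*(1/2) := by ring
            _ ≤ 2*δ*(R+1)*c :=
                mul_le_mul_of_nonneg_left hc1 (by nlinarith [hδpos.le, hR1])
        have hsum : |u + v| ≤ 3*R + 1 := by
          calc |u + v| ≤ |u| + |v| := abs_add_le _ _
            _ ≤ R + (2*R+1) := add_le_add hcase hvbound
            _ = 3*R + 1 := by ring
        rw [hrw1, hrw2]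
        have h3 := abs_exp_sub_exp_le (by positivity : (0:ℝ) ≤ u^2/2) (by positivity : (0:ℝ) ≤ v^2/2)
        have h4 : |u^2/2 - v^2/2| ≤ δ*(R+1)*(3*R+1) := by
          have h5 : u^2/2 - v^2/2 = (u - v)*(u + v)/2 := by ring
          rw [h5, abs_div, abs_mul]
          rw [abs_of_pos (by norm_num : (0:ℝ) < 2)]
          have := mul_le_mul huv hsum (abs_nonneg _) (by positivity)
          linarith
        have : (0:ℝ) < ε/2 := by linarith
        linarith
      · -- large u
        have hA : Real.exp (-(u^2)/2) ≤ ε/4 := by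
          refine le_trans (Real.exp_le_exp.2 ?_) hRe
          have h1 : R^2 ≤ u^2 := by
            have := pow_le_pow_left₀ (by linarith : (0:ℝ) ≤ R) hcase.le 2
            rwa [sq_abs] at this
          linarith [sq_nonneg R]
        have hvlow : R/3 ≤ |v| := by
          rw [hveq, abs_div, abs_of_pos hcpos, le_div_iff₀ hcpos]
          have h1 : R - 1/2 ≤ |u - e0| := by
            have := abs_sub_abs_le_abs_sub u e0
            have h2 := (abs_le.1 he0abs).2
            linarith
          calc R/3*c ≤ R/3*(3/2) := mul_le_mul_of_nonneg_left hc2 (by linarith)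
            _ ≤ R - 1/2 := by linarith
            _ ≤ |u - e0| := h1
        have hB : Real.exp (-(v^2)/2) ≤ ε/4 := by
          refine le_trans (Real.exp_le_exp.2 ?_) hRe
          have h1 : (R/3)^2 ≤ v^2 := by
            have := pow_le_pow_left₀ (by linarith : (0:ℝ) ≤ R/3) hvlow 2
            rwa [sq_abs] at this
          have h2 : (R/3)^2 = R^2/9 := by ring
          linarith
        have : |Real.exp (-(u^2)/2) - Real.exp (-(v^2)/2)| ≤ ε/2 := by
          rw [abs_le]
          constructor <;> linarith
        have hnn : (0:ℝ) ≤ δ*(R+1)*(3*R+1) :=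
          mul_nonneg (mul_nonneg hδpos.le (by linarith)) (by linarith)
        linarith
    calc |Real.exp (-(u^2)/2) - (1/c) * Real.exp (-(v^2)/2)|
        ≤ (ε/2 + δ*(R+1)*(3*R+1)) + 2*δ * Real.exp (-(v^2)/2) := by
          refine tri.trans (add_le_add hE (mul_le_mul_of_nonneg_right hinv hBpos.le))
      _ ≤ ε := by
          have h1 : 2*δ * Real.exp (-(v^2)/2) ≤ 2*δ := by nlinarith
          have key2 : (0:ℝ) ≤ δ*(R^2+4*R+5) :=
            mul_nonneg hδpos.le (by nlinarith [sq_nonneg (R+2)])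
          have hid : δ*(8*(R+1)^2+8)/2 - (δ*(R+1)*(3*R+1) + 2*δ) = δ*(R^2+4*R+5) := by
            ring
          have h2 : δ*(R+1)*(3*R+1) + 2*δ ≤ δ*(8*(R+1)^2+8)/2 := by linarith
          linarith [hδ2]
  calc (1/Real.sqrt (2*Real.pi)) * |Real.exp (-(u^2)/2) - (1/c) * Real.exp (-(v^2)/2)|
      ≤ 1 * |Real.exp (-(u^2)/2) - (1/c) * Real.exp (-(v^2)/2)| :=
        mul_le_mul_of_nonneg_right hsp (abs_nonneg _)
    _ ≤ ε := by rw [one_mul]; exact hmain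

lemma gauss2_eq_mul (μX μY σX σY : ℝ) (x y : ℤ) :
    gauss2 μX μY σX σY x y = q1 μX σX x * q1 μY σY y := by
  unfold gauss2 q1
  rw [show (-((x : ℝ) - μX) ^ 2 / (2 * σX ^ 2) - ((y : ℝ) - μY) ^ 2 / (2 * σY ^ 2))
      = (-((x : ℝ) - μX) ^ 2 / (2 * σX ^ 2)) + (-((y : ℝ) - μY) ^ 2 / (2 * σY ^ 2)) by ring,
    Real.exp_add]
  have h : Real.sqrt (2 * Real.pi) * Real.sqrt (2 * Real.pi) = 2 * Real.pi :=
    Real.mul_self_sqrt (by positivity)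
  generalize Real.sqrt (2 * Real.pi) = s at h ⊢
  rw [← h]; ring

lemma sigma_mul_q1_le_one {μ σ : ℝ} (x : ℝ) (hσ : 0 < σ) : σ * q1 μ σ x ≤ 1 := by
  rw [sigma_mul_q1 μ σ x hσ]
  have h1 : 1 / Real.sqrt (2 * Real.pi) ≤ 1 := by
    rw [div_le_one (lt_of_lt_of_le one_pos sqrt_two_pi_ge_one)]; exact sqrt_two_pi_ge_one
  have h2 : Real.exp (-((x - μ)/σ) ^ 2 / 2) ≤ 1 :=
    Real.exp_le_one_iff.2 (by nlinarith [sq_nonneg ((x - μ)/σ)])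
  have := mul_le_mul h1 h2 (Real.exp_pos _).le (by linarith [sqrt_two_pi_ge_one] :
    (0:ℝ) ≤ 1)
  linarith

lemma q1_nonneg (μ σ x : ℝ) (hσ : 0 < σ) : 0 ≤ q1 μ σ x := by
  unfold q1
  have := sqrt_two_pi_ge_one
  positivity

lemma twoD_bound {εx εy σX σY σX' σY' μX μY μX' μY' : ℝ} (x y : ℝ)
    (hσX : 0 < σX) (hσY : 0 < σY) (hσX' : 0 < σX') (hσY' : 0 < σY')
    (hX : σX * |q1 μX σX x - q1 μX' σX' x| ≤ εx)
    (hY : σY * |q1 μY σY y - q1 μY' σY' y| ≤ εy)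
    (hXr : σX ≤ 2 * σX') :
    σX * σY * |q1 μX σX x * q1 μY σY y - q1 μX' σX' x * q1 μY' σY' y| ≤ εx + 2*εy := by
  set a := q1 μX σX x with ha
  set a' := q1 μX' σX' x with ha'
  set b := q1 μY σY y with hb
  set b' := q1 μY' σY' y with hb'
  have hbnn : 0 ≤ b := q1_nonneg _ _ _ hσY
  have ha'nn : 0 ≤ a' := q1_nonneg _ _ _ hσX'
  have h1 : |a*b - a'*b'| ≤ |a - a'| *b + a'*|b - b'| := by
    have h2 : a*b - a'*b' = (a - a')*b + a'*(b - b') := by ring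
    rw [h2]
    refine (abs_add_le _ _).trans ?_
    rw [abs_mul, abs_mul, abs_of_nonneg hbnn, abs_of_nonneg ha'nn]
  have hεx : 0 ≤ εx := le_trans (by positivity) hX
  have hεy : 0 ≤ εy := le_trans (by positivity) hY
  have hstep1 : (σX * |a - a'|) * (σY * b) ≤ εx * 1 :=
    mul_le_mul hX (sigma_mul_q1_le_one y hσY) (by positivity) hεx
  have hσXa' : σX * a' ≤ 2 := by
    calc σX * a' ≤ (2 * σX') * a' := mul_le_mul_of_nonneg_right hXr ha'nn
      _ = 2 * (σX' * a') := by ring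
      _ ≤ 2 * 1 := by linarith [sigma_mul_q1_le_one (μ := μX') x hσX']
      _ = 2 := by ring
  have hstep2 : (σX * a') * (σY * |b - b'|) ≤ 2 * εy :=
    mul_le_mul hσXa' hY (by positivity) (by linarith)
  calc σX * σY * |a*b - a'*b'| ≤ σX * σY * (|a - a'| *b + a'*|b - b'|) :=
        mul_le_mul_of_nonneg_left h1 (by positivity)
    _ = (σX * |a - a'|) * (σY * b) + (σX * a') * (σY * |b - b'|) := by ring
    _ ≤ εx * 1 + 2 * εy := add_le_add hstep1 hstep2
    _ = εx + 2*εy := by ring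

lemma gauss2_nonneg {μX μY σX σY : ℝ} (hσX : 0 < σX) (hσY : 0 < σY) (x y : ℤ) :
    0 ≤ gauss2 μX μY σX σY x y := by
  rw [gauss2_eq_mul]
  exact mul_nonneg (q1_nonneg _ _ _ hσX) (q1_nonneg _ _ _ hσY)

lemma gauss2_le {μX μY σX σY : ℝ} (hσX : 0 < σX) (hσY : 0 < σY) (x y : ℤ) :
    gauss2 μX μY σX σY x y ≤ 1 / (σX * σY) := by
  rw [gauss2_eq_mul]
  have h1 : q1 μX σX x ≤ 1/σX := by
    have := sigma_mul_q1_le_one (μ := μX) (x : ℝ) hσX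
    rw [← le_div_iff₀' hσX] at this
    exact this
  have h2 : q1 μY σY y ≤ 1/σY := by
    have := sigma_mul_q1_le_one (μ := μY) (y : ℝ) hσY
    rw [← le_div_iff₀' hσY] at this
    exact this
  calc q1 μX σX x * q1 μY σY y ≤ (1/σX) * (1/σY) :=
      mul_le_mul h1 h2 (q1_nonneg _ _ _ hσY) (by positivity)
    _ = 1 / (σX * σY) := by rw [div_mul_div_comm, one_mul]

/-- a local limit theorem is preserved under changing the means by
`o(σ)` and the standard deviations by a factor `~ 1`. -/
theorem stmt14 {Ω : ℕ → Type*} [∀ n, MeasurableSpace (Ω n)]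
    (μ : ∀ n, Measure (Ω n)) [∀ n, IsProbabilityMeasure (μ n)]
    (X Y : ∀ n, Ω n → ℤ)
    (μX μY σX σY μX' μY' σX' σY' : ℕ → ℝ)
    (hσX : ∀ n, 0 < σX n) (hσY : ∀ n, 0 < σY n)
    (hLLT : SatisfiesLLT μ X Y μX μY σX σY)
    (hμX : (fun n => μX' n - μX n) =o[atTop] σX)
    (hμY : (fun n => μY' n - μY n) =o[atTop] σY)
    (hσX' : Tendsto (fun n => σX' n / σX n) atTop (nhds 1))
    (hσY' : Tendsto (fun n => σY' n / σY n) atTop (nhds 1)) :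
    SatisfiesLLT μ X Y μX' μY' σX' σY' := by
  unfold SatisfiesLLT at hLLT ⊢
  -- Step 1: comparison of the normalizations
  have hOB : (fun n => 1/(σX n * σY n)) =O[atTop] (fun n => 1/(σX' n * σY' n)) := by
    rw [Asymptotics.isBigO_iff]
    refine ⟨4, ?_⟩
    have EX : ∀ᶠ n in atTop, |σX' n / σX n - 1| < 1/2 := by
      have := Metric.tendsto_nhds.1 hσX' (1/2) (by norm_num)
      filter_upwards [this] with n hn
      rwa [Real.dist_eq] at hn
    have EY : ∀ᶠ n in atTop, |σY' n / σY n - 1| < 1/2 := by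
      have := Metric.tendsto_nhds.1 hσY' (1/2) (by norm_num)
      filter_upwards [this] with n hn
      rwa [Real.dist_eq] at hn
    filter_upwards [EX, EY] with n hx hy
    have h0X := hσX n
    have h0Y := hσY n
    have hx' := abs_lt.1 hx
    have hy' := abs_lt.1 hy
    have hXpos : 0 < σX' n := by
      have h1 : 1/2 < σX' n / σX n := by linarith [hx'.1]
      have := (div_pos_iff.1 (lt_trans (by norm_num) h1))
      rcases this with ⟨h, _⟩ | ⟨_, h⟩
      · exact h
      · linarith [hσX n]
    have hYpos : 0 < σY' n := by
      have h1 : 1/2 < σY' n / σY n := by linarith [hy'.1]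
      have := (div_pos_iff.1 (lt_trans (by norm_num) h1))
      rcases this with ⟨h, _⟩ | ⟨_, h⟩
      · exact h
      · linarith [hσY n]
    have hX32 : σX' n ≤ (3/2) * σX n := by
      have h1 : σX' n / σX n ≤ 3/2 := by linarith [hx'.2]
      rw [div_le_iff₀ (hσX n)] at h1; linarith
    have hY32 : σY' n ≤ (3/2) * σY n := by
      have h1 : σY' n / σY n ≤ 3/2 := by linarith [hy'.2]
      rw [div_le_iff₀ (hσY n)] at h1; linarith
    rw [Real.norm_eq_abs, Real.norm_eq_abs,
      abs_of_pos (by positivity : (0:ℝ) < 1/(σX n * σY n)),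
      abs_of_pos (by positivity : (0:ℝ) < 1/(σX' n * σY' n)),
      show (4:ℝ) * (1/(σX' n * σY' n)) = 4/(σX' n * σY' n) by ring,
      div_le_div_iff₀ (by positivity) (by positivity)]
    have := mul_le_mul hX32 hY32 hYpos.le (by positivity : (0:ℝ) ≤ (3/2) * σX n)
    nlinarith [mul_pos h0X h0Y]
  -- Step 2: littleO against the old normalization
  have hMain : (fun n => ⨆ xy : ℤ × ℤ,
      |(μ n {ω | X n ω = xy.1 ∧ Y n ω = xy.2}).toReal
        - gauss2 (μX' n) (μY' n) (σX' n) (σY' n) xy.1 xy.2|)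
      =o[atTop] (fun n => 1 / (σX n * σY n)) := by
    rw [Asymptotics.isLittleO_iff]
    intro c hc
    obtain ⟨δ, hδpos, hδhalf, hδprop⟩ := oneD (ε := c/6) (by positivity)
    have h1 := Asymptotics.isLittleO_iff.1 hLLT (half_pos hc)
    have EX1 : ∀ᶠ n in atTop, |μX' n - μX n| ≤ δ * σX n := by
      have := Asymptotics.isLittleO_iff.1 hμX hδpos
      filter_upwards [this] with n hn
      rw [Real.norm_eq_abs, Real.norm_eq_abs, abs_of_pos (hσX n)] at hn
      exact hn
    have EY1 : ∀ᶠ n in atTop, |μY' n - μY n| ≤ δ * σY n := by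
      have := Asymptotics.isLittleO_iff.1 hμY hδpos
      filter_upwards [this] with n hn
      rw [Real.norm_eq_abs, Real.norm_eq_abs, abs_of_pos (hσY n)] at hn
      exact hn
    have EX2 : ∀ᶠ n in atTop, |σX' n / σX n - 1| ≤ δ := by
      have := Metric.tendsto_nhds.1 hσX' δ hδpos
      filter_upwards [this] with n hn
      rw [Real.dist_eq] at hn; exact hn.le
    have EY2 : ∀ᶠ n in atTop, |σY' n / σY n - 1| ≤ δ := by
      have := Metric.tendsto_nhds.1 hσY' δ hδpos
      filter_upwards [this] with n hn
      rw [Real.dist_eq] at hn; exact hn.le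
    filter_upwards [h1, EX1, EX2, EY1, EY2] with n hG hx1 hx2 hy1 hy2
    have hσXn := hσX n
    have hσYn := hσY n
    -- positivity of new sigmas
    have hXpos : 0 < σX' n := by
      have h2 := (abs_le.1 hx2).1
      have h3 : 1/2 ≤ σX' n / σX n := by linarith
      have h4 : 0 < σX' n / σX n := lt_of_lt_of_le (by norm_num) h3
      rcases div_pos_iff.1 h4 with ⟨h, _⟩ | ⟨_, h⟩
      · exact h
      · linarith
    have hYpos : 0 < σY' n := by
      have h2 := (abs_le.1 hy2).1
      have h3 : 1/2 ≤ σY' n / σY n := by linarith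
      have h4 : 0 < σY' n / σY n := lt_of_lt_of_le (by norm_num) h3
      rcases div_pos_iff.1 h4 with ⟨h, _⟩ | ⟨_, h⟩
      · exact h
      · linarith
    have hX2 : σX n ≤ 2 * σX' n := by
      have h2 := (abs_le.1 hx2).1
      have h3 : 1/2 ≤ σX' n / σX n := by linarith
      rw [le_div_iff₀ hσXn] at h3; linarith
    -- the positive constant
    have hpos : (0:ℝ) < 1/(σX n * σY n) := by positivity
    have hnorm : ‖(1:ℝ)/(σX n * σY n)‖ = 1/(σX n * σY n) := by
      rw [Real.norm_eq_abs, abs_of_pos hpos]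
    -- BddAbove of the old family
    have hbdd : BddAbove (Set.range fun xy : ℤ × ℤ =>
        |(μ n {ω | X n ω = xy.1 ∧ Y n ω = xy.2}).toReal
          - gauss2 (μX n) (μY n) (σX n) (σY n) xy.1 xy.2|) := by
      refine ⟨1 + 1/(σX n * σY n), ?_⟩
      rintro r ⟨xy, rfl⟩
      have hP0 : (0:ℝ) ≤ (μ n {ω | X n ω = xy.1 ∧ Y n ω = xy.2}).toReal :=
        ENNReal.toReal_nonneg
      have hP1 : (μ n {ω | X n ω = xy.1 ∧ Y n ω = xy.2}).toReal ≤ 1 :=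
        ENNReal.toReal_le_of_le_ofReal one_pos.le (by simpa using prob_le_one)
      have hg0 := gauss2_nonneg (μX := μX n) (μY := μY n) hσXn hσYn xy.1 xy.2
      have hg1 := gauss2_le (μX := μX n) (μY := μY n) hσXn hσYn xy.1 xy.2
      rw [abs_sub_le_iff]
      constructor <;> linarith
    -- pointwise estimate
    have hpt : ∀ xy : ℤ × ℤ,
        |(μ n {ω | X n ω = xy.1 ∧ Y n ω = xy.2}).toReal
          - gauss2 (μX' n) (μY' n) (σX' n) (σY' n) xy.1 xy.2|
        ≤ c * ‖(1:ℝ)/(σX n * σY n)‖ := by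
      intro xy
      have hold : |(μ n {ω | X n ω = xy.1 ∧ Y n ω = xy.2}).toReal
          - gauss2 (μX n) (μY n) (σX n) (σY n) xy.1 xy.2|
          ≤ (c/2) * ‖(1:ℝ)/(σX n * σY n)‖ := by
        refine le_trans (le_ciSup hbdd xy) (le_trans (le_abs_self _) ?_)
        simpa using hG
      have hXpart := hδprop (μX n) (μX' n) (σX n) (σX' n) (xy.1 : ℝ) hσXn hXpos hx1 hx2
      have hYpart := hδprop (μY n) (μY' n) (σY n) (σY' n) (xy.2 : ℝ) hσYn hYpos hy1 hy2
      have h2d := twoD_bound (xy.1 : ℝ) (xy.2 : ℝ) hσXn hσYn hXpos hYpos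
        hXpart hYpart hX2
      have hgg : |gauss2 (μX n) (μY n) (σX n) (σY n) xy.1 xy.2
          - gauss2 (μX' n) (μY' n) (σX' n) (σY' n) xy.1 xy.2|
          ≤ (c/2) * (1/(σX n * σY n)) := by
        rw [gauss2_eq_mul, gauss2_eq_mul]
        have hc2 : c/6 + 2*(c/6) = c/2 := by ring
        rw [← hc2]
        have hprodpos : (0:ℝ) < σX n * σY n := by positivity
        rw [show (c/6 + 2*(c/6)) * (1/(σX n * σY n)) = (c/6 + 2*(c/6)) / (σX n * σY n)
          by ring, le_div_iff₀ hprodpos]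
        calc |q1 (μX n) (σX n) (xy.1 : ℝ) * q1 (μY n) (σY n) (xy.2 : ℝ)
              - q1 (μX' n) (σX' n) (xy.1 : ℝ) * q1 (μY' n) (σY' n) (xy.2 : ℝ)|
              * (σX n * σY n)
            = σX n * σY n * |q1 (μX n) (σX n) (xy.1 : ℝ) * q1 (μY n) (σY n) (xy.2 : ℝ)
              - q1 (μX' n) (σX' n) (xy.1 : ℝ) * q1 (μY' n) (σY' n) (xy.2 : ℝ)| := by ring
          _ ≤ c/6 + 2*(c/6) := h2d
      have tri : |(μ n {ω | X n ω = xy.1 ∧ Y n ω = xy.2}).toReal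
          - gauss2 (μX' n) (μY' n) (σX' n) (σY' n) xy.1 xy.2|
          ≤ |(μ n {ω | X n ω = xy.1 ∧ Y n ω = xy.2}).toReal
              - gauss2 (μX n) (μY n) (σX n) (σY n) xy.1 xy.2|
            + |gauss2 (μX n) (μY n) (σX n) (σY n) xy.1 xy.2
              - gauss2 (μX' n) (μY' n) (σX' n) (σY' n) xy.1 xy.2| :=
        abs_sub_le _ _ _
      rw [hnorm] at hold ⊢
      linarith
    rw [Real.norm_eq_abs, abs_of_nonneg (Real.iSup_nonneg fun xy => abs_nonneg _)]
    exact ciSup_le hpt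
  exact hMain.trans_isBigO hOB
end
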